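/- arXiv:1402.2064 — 8 statements merged into one kernel-verified Lean document; each statement's English description precedes it below -/
import Mathlib

section
/- Let d ≥ 1 and let H be a finite hypergraph of d-intervals. Then τ*(H) ≤ 2d·ν(H). -/
/-- A `d`-interval: a union of at most `d` pairwise disjoint closed intervals
on the real line. -/
def IsDInterval (d : ℕ) (h : Set ℝ) : Prop :=
  ∃ (n : ℕ) (a b : Fin n → ℝ), n ≤ d ∧ (∀ i, a i ≤ b i) ∧
    (Set.univ : Set (Fin n)).PairwiseDisjoint (fun i => Set.Icc (a i) (b i)) ∧
    h = ⋃ i, Set.Icc (a i) (b i)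

/-- The matching number: the maximum size of a set of pairwise disjoint edges. -/
noncomputable def nu {α : Type*} (H : Set (Set α)) : ℕ :=
  sSup {n | ∃ M : Finset (Set α), ↑M ⊆ H ∧
    (M : Set (Set α)).PairwiseDisjoint id ∧ M.card = n}

/-- The fractional covering number: the infimum of `∑ₓ f x` over finitely
supported nonnegative `f : α → ℝ` with `∑_{x ∈ e} f x ≥ 1` for every edge `e`. -/
noncomputable def tauStar {α : Type*} (H : Set (Set α)) : ℝ :=
  sInf {t | ∃ f : α → ℝ, (Function.support f).Finite ∧ (∀ x, 0 ≤ f x) ∧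
    (∀ e ∈ H, 1 ≤ ∑ᶠ x ∈ e, f x) ∧ t = ∑ᶠ x, f x}

open Set Finset
open scoped Classical

/-- Key combinatorial lemma: a fractional matching has weight at most `2d` times
the size of some matching. -/
lemma exists_matching_bound (d : ℕ) (L : Set ℝ → Finset ℝ) (n : ℕ) :
    ∀ E : Finset (Set ℝ), E.card ≤ n →
    (∀ e ∈ E, (e : Set ℝ).Nonempty) →
    (∀ e ∈ E, (L e).card ≤ d) →
    (∀ e ∈ E, ∀ f ∈ E, (e ∩ f).Nonempty →
      ∃ x, (x ∈ L e ∨ x ∈ L f) ∧ x ∈ e ∧ x ∈ f) →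
    ∀ w : Set ℝ → ℝ, (∀ e, 0 ≤ w e) →
    (∀ e ∈ E, ∀ x ∈ L e, ∑ f ∈ E.filter (fun f => x ∈ f), w f ≤ 1) →
    ∃ M : Finset (Set ℝ), M ⊆ E ∧ (M : Set (Set ℝ)).PairwiseDisjoint id ∧
      ∑ e ∈ E, w e ≤ 2 * (d : ℝ) * M.card := by
  induction n with
  | zero =>
      intro E hcard _ _ _ w hw0 _
      have hE : E = ∅ := Finset.card_eq_zero.mp (Nat.le_zero.mp hcard)
      subst hE
      exact ⟨∅, by simp, by simp, by simp⟩
  | succ n ih =>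
      intro E hcard hne hLcard hwit w hw0 hg
      by_cases hW : ∑ e ∈ E, w e ≤ 0
      · exact ⟨∅, by simp, by simp, by simpa using hW⟩
      push_neg at hW
      -- there is an edge `e₀` with positive weight whose neighborhood has weight ≤ 2d
      have key : ∃ e₀ ∈ E, 0 < w e₀ ∧
          ∑ f ∈ E.filter (fun f => (e₀ ∩ f).Nonempty), w f ≤ 2 * d := by
        by_contra hcon
        push_neg at hcon
        set g : ℝ → ℝ := fun x => ∑ f ∈ E.filter (fun f => x ∈ f), w f with hgdef
        set A : Set ℝ → Set ℝ → ℝ :=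
          fun e f => (((L e).filter (fun x => x ∈ f)).card : ℝ) with hAdef
        have hAnonneg : ∀ e f, 0 ≤ A e f := fun e f => Nat.cast_nonneg _
        -- column sums are at most d
        have hA : ∀ e ∈ E, ∑ f ∈ E, w f * A e f ≤ (d : ℝ) := by
          intro e he
          have h1 : ∑ f ∈ E, w f * A e f = ∑ x ∈ L e, g x := by
            have h2 : ∀ f, w f * A e f = ∑ x ∈ L e, (if x ∈ f then w f else 0) := by
              intro f
              rw [hAdef]
              simp [Finset.sum_ite, mul_comm]
            calc ∑ f ∈ E, w f * A e f
                = ∑ f ∈ E, ∑ x ∈ L e, (if x ∈ f then w f else 0) := by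
                  exact Finset.sum_congr rfl fun f _ => h2 f
              _ = ∑ x ∈ L e, ∑ f ∈ E, (if x ∈ f then w f else 0) := Finset.sum_comm
              _ = ∑ x ∈ L e, g x := by
                  refine Finset.sum_congr rfl fun x _ => ?_
                  simp only [hgdef, Finset.sum_filter]
          rw [h1]
          calc ∑ x ∈ L e, g x ≤ ∑ _x ∈ L e, (1 : ℝ) :=
                Finset.sum_le_sum fun x hx => hg e he x hx
            _ = ((L e).card : ℝ) := by simp
            _ ≤ (d : ℝ) := Nat.cast_le.mpr (hLcard e he)
        -- every meeting pair is witnessed by a left endpoint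
        have hmeet : ∀ e ∈ E, ∀ f ∈ E, (e ∩ f).Nonempty → (1 : ℝ) ≤ A e f + A f e := by
          intro e he f hf hm
          obtain ⟨x, hx, hxe, hxf⟩ := hwit e he f hf hm
          rcases hx with hx | hx
          · have : x ∈ (L e).filter (fun x => x ∈ f) := Finset.mem_filter.mpr ⟨hx, hxf⟩
            have h1 : (1 : ℝ) ≤ A e f := by
              simp only [hAdef]
              exact_mod_cast Nat.one_le_iff_ne_zero.mpr (Finset.card_ne_zero_of_mem this)
            linarith [hAnonneg f e]
          · have : x ∈ (L f).filter (fun x => x ∈ e) := Finset.mem_filter.mpr ⟨hx, hxe⟩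
            have h1 : (1 : ℝ) ≤ A f e := by
              simp only [hAdef]
              exact_mod_cast Nat.one_le_iff_ne_zero.mpr (Finset.card_ne_zero_of_mem this)
            linarith [hAnonneg e f]
        -- the double-counted sum
        have hup : ∑ e ∈ E, (w e * ∑ f ∈ E.filter (fun f => (e ∩ f).Nonempty), w f)
            ≤ 2 * (d : ℝ) * ∑ e ∈ E, w e := by
          have hterm : ∀ e ∈ E,
              w e * ∑ f ∈ E.filter (fun f => (e ∩ f).Nonempty), w f
              ≤ ∑ f ∈ E, w e * w f * (A e f + A f e) := by
            intro e he
            rw [Finset.mul_sum, ← Finset.sum_filter_add_sum_filter_not E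
              (fun f => (e ∩ f).Nonempty) (fun f => w e * w f * (A e f + A f e))]
            have h2 : ∑ f ∈ E.filter (fun f => (e ∩ f).Nonempty), w e * w f
                ≤ ∑ f ∈ E.filter (fun f => (e ∩ f).Nonempty), w e * w f * (A e f + A f e) := by
              refine Finset.sum_le_sum fun f hf => ?_
              have hf' := Finset.mem_filter.mp hf
              have h1 := hmeet e he f hf'.1 hf'.2
              have hnn : 0 ≤ w e * w f := mul_nonneg (hw0 e) (hw0 f)
              nlinarith
            have h3 : (0:ℝ) ≤ ∑ f ∈ E.filter (fun f => ¬ (e ∩ f).Nonempty),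
                w e * w f * (A e f + A f e) := by
              refine Finset.sum_nonneg fun f _ => ?_
              have := hAnonneg e f
              have := hAnonneg f e
              have hnn : 0 ≤ w e * w f := mul_nonneg (hw0 e) (hw0 f)
              nlinarith
            linarith
          calc ∑ e ∈ E, (w e * ∑ f ∈ E.filter (fun f => (e ∩ f).Nonempty), w f)
              ≤ ∑ e ∈ E, ∑ f ∈ E, w e * w f * (A e f + A f e) :=
                Finset.sum_le_sum hterm
            _ = ∑ e ∈ E, ∑ f ∈ E, w e * w f * A e f
                + ∑ e ∈ E, ∑ f ∈ E, w e * w f * A f e := by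
                rw [← Finset.sum_add_distrib]
                refine Finset.sum_congr rfl fun e _ => ?_
                rw [← Finset.sum_add_distrib]
                refine Finset.sum_congr rfl fun f _ => ?_
                ring
            _ ≤ (d : ℝ) * ∑ e ∈ E, w e + (d : ℝ) * ∑ e ∈ E, w e := by
                refine add_le_add ?_ ?_
                · calc ∑ e ∈ E, ∑ f ∈ E, w e * w f * A e f
                      = ∑ e ∈ E, w e * ∑ f ∈ E, w f * A e f := by
                        refine Finset.sum_congr rfl fun e _ => ?_
                        rw [Finset.mul_sum]
                        exact Finset.sum_congr rfl fun f _ => by ring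
                    _ ≤ ∑ e ∈ E, w e * (d : ℝ) := by
                        refine Finset.sum_le_sum fun e he => ?_
                        exact mul_le_mul_of_nonneg_left (hA e he) (hw0 e)
                    _ = (d : ℝ) * ∑ e ∈ E, w e := by
                        rw [← Finset.sum_mul, mul_comm]
                · calc ∑ e ∈ E, ∑ f ∈ E, w e * w f * A f e
                      = ∑ f ∈ E, ∑ e ∈ E, w e * w f * A f e := Finset.sum_comm
                    _ = ∑ f ∈ E, w f * ∑ e ∈ E, w e * A f e := by
                        refine Finset.sum_congr rfl fun f _ => ?_
                        rw [Finset.mul_sum]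
                        exact Finset.sum_congr rfl fun e _ => by ring
                    _ ≤ ∑ f ∈ E, w f * (d : ℝ) := by
                        refine Finset.sum_le_sum fun f hf => ?_
                        exact mul_le_mul_of_nonneg_left (hA f hf) (hw0 f)
                    _ = (d : ℝ) * ∑ e ∈ E, w e := by
                        rw [← Finset.sum_mul, mul_comm]
            _ = 2 * (d : ℝ) * ∑ e ∈ E, w e := by ring
        -- lower bound via hcon, contradiction
        have hlow : 2 * (d : ℝ) * ∑ e ∈ E, w e
            < ∑ e ∈ E, (w e * ∑ f ∈ E.filter (fun f => (e ∩ f).Nonempty), w f) := by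
          obtain ⟨e₁, he₁, hpos⟩ : ∃ e ∈ E, 0 < w e := by
            by_contra hno
            push_neg at hno
            have : ∑ e ∈ E, w e ≤ 0 :=
              Finset.sum_nonpos fun e he => hno e he
            linarith
          rw [Finset.mul_sum]
          refine Finset.sum_lt_sum ?_ ⟨e₁, he₁, ?_⟩
          · intro e he
            rcases eq_or_lt_of_le (hw0 e) with heq | hlt
            · rw [← heq]; simp
            · have h1 := le_of_lt (hcon e he hlt)
              calc 2 * (d:ℝ) * w e = w e * (2*(d:ℝ)) := by ring
                _ ≤ w e * ∑ f ∈ E.filter (fun f => (e ∩ f).Nonempty), w f :=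
                  mul_le_mul_of_nonneg_left h1 (le_of_lt hlt)
          · have h1 := hcon e₁ he₁ hpos
            calc 2 * (d:ℝ) * w e₁ = w e₁ * (2*(d:ℝ)) := by ring
              _ < w e₁ * ∑ f ∈ E.filter (fun f => (e₁ ∩ f).Nonempty), w f := by
                exact (mul_lt_mul_iff_right₀ hpos).mpr h1
        linarith
      obtain ⟨e₀, he₀, hwpos, hnb⟩ := key
      set N : Finset (Set ℝ) := E.filter (fun f => (e₀ ∩ f).Nonempty) with hN
      set E' : Finset (Set ℝ) := E.filter (fun f => ¬ (e₀ ∩ f).Nonempty) with hE'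
      have he₀N : e₀ ∈ N := by
        simp only [hN, Finset.mem_filter]
        exact ⟨he₀, by rw [Set.inter_self]; exact hne e₀ he₀⟩
      have hE'subset : E' ⊆ E := Finset.filter_subset _ _
      have hE'card : E'.card ≤ n := by
        have hlt : E'.card < E.card := by
          refine Finset.card_lt_card ?_
          refine ⟨hE'subset, fun hsub => ?_⟩
          have : e₀ ∈ E' := hsub he₀
          simp only [hE', Finset.mem_filter] at this
          exact this.2 (by rw [Set.inter_self]; exact hne e₀ he₀)
        omega
      obtain ⟨M', hM'sub, hM'disj, hM'sum⟩ :=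
        ih E' hE'card (fun e he => hne e (hE'subset he))
          (fun e he => hLcard e (hE'subset he))
          (fun e he f hf hmeet => hwit e (hE'subset he) f (hE'subset hf) hmeet)
          w hw0
          (fun e he x hx => le_trans
            (Finset.sum_le_sum_of_subset_of_nonneg
              (Finset.filter_subset_filter _ hE'subset) (fun f _ _ => hw0 f))
            (hg e (hE'subset he) x hx))
      have he₀notM' : e₀ ∉ M' := fun h => by
        have : e₀ ∈ E' := hM'sub h
        simp only [hE', Finset.mem_filter] at this
        exact this.2 (by rw [Set.inter_self]; exact hne e₀ he₀)
      refine ⟨insert e₀ M', ?_, ?_, ?_⟩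
      · intro f hf
        rcases Finset.mem_insert.mp hf with rfl | hf
        · exact he₀
        · exact hE'subset (hM'sub hf)
      · rw [Finset.coe_insert]
        refine hM'disj.insert ?_
        intro f hf _
        have hfE' : f ∈ E' := hM'sub hf
        simp only [hE', Finset.mem_filter] at hfE'
        have : e₀ ∩ f = ∅ := Set.not_nonempty_iff_eq_empty.mp hfE'.2
        exact Set.disjoint_iff_inter_eq_empty.mpr this
      · rw [Finset.card_insert_of_notMem he₀notM']
        have hsplit : ∑ e ∈ E, w e
            = ∑ e ∈ N, w e + ∑ e ∈ E', w e := by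
          rw [hN, hE', Finset.sum_filter_add_sum_filter_not]
        rw [hsplit]
        push_cast
        calc ∑ e ∈ N, w e + ∑ e ∈ E', w e ≤ 2 * d + 2 * d * M'.card := by
              exact add_le_add hnb hM'sum
          _ = 2 * d * (M'.card + 1) := by ring

/-- LP-duality step, done by hand via Hahn–Banach separation: if every fractional
matching (with constraints at the points of `X`) has total weight at most `B`, then
there is a fractional cover supported on `X` of total weight at most `B`. -/
lemma exists_cover_of_matching_bound (X : Finset ℝ) (E : Finset (Set ℝ))
    (hEX : ∀ e ∈ E, ∃ x ∈ X, x ∈ e) (B : ℝ) (hB : 0 ≤ B)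
    (hmatch : ∀ w : Set ℝ → ℝ, (∀ e, 0 ≤ w e) →
      (∀ x ∈ X, ∑ e ∈ E.filter (fun e => x ∈ e), w e ≤ 1) → ∑ e ∈ E, w e ≤ B) :
    ∃ f : ℝ → ℝ, (∀ x, 0 ≤ f x) ∧ (Function.support f ⊆ X) ∧
      (∀ e ∈ E, 1 ≤ ∑ x ∈ X.filter (fun x => x ∈ e), f x) ∧ ∑ x ∈ X, f x ≤ B := by
  by_contra hno
  rcases E.eq_empty_or_nonempty with rfl | hEne
  · refine hno ⟨0, fun x => le_refl 0, by simp, by simp, by simpa using hB⟩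
  -- finite index types
  set ι := {e : Set ℝ // e ∈ E}
  set κ := {x : ℝ // x ∈ X}
  have hκne : (Finset.univ : Finset κ).Nonempty := by
    obtain ⟨e, he⟩ := hEne
    obtain ⟨x, hx, _⟩ := hEX e he
    exact ⟨⟨x, hx⟩, Finset.mem_univ _⟩
  -- the linear incidence map
  set Lmap : (κ → ℝ) →ₗ[ℝ] (ι → ℝ) :=
    { toFun := fun f e => ∑ x : κ, if (x : ℝ) ∈ (e : Set ℝ) then f x else 0
      map_add' := by
        intro f g
        funext e
        show (∑ x : κ, if (x : ℝ) ∈ (e : Set ℝ) then (f + g) x else 0)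
            = (∑ x : κ, if (x : ℝ) ∈ (e : Set ℝ) then f x else 0)
              + (∑ x : κ, if (x : ℝ) ∈ (e : Set ℝ) then g x else 0)
        rw [← Finset.sum_add_distrib]
        refine Finset.sum_congr rfl fun x _ => ?_
        by_cases h : (x : ℝ) ∈ (e : Set ℝ) <;> simp [h]
      map_smul' := by
        intro c f
        funext e
        show (∑ x : κ, if (x : ℝ) ∈ (e : Set ℝ) then (c • f) x else 0)
            = c * (∑ x : κ, if (x : ℝ) ∈ (e : Set ℝ) then f x else 0)
        rw [Finset.mul_sum]
        refine Finset.sum_congr rfl fun x _ => ?_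
        by_cases h : (x : ℝ) ∈ (e : Set ℝ) <;> simp [h] } with hLmap
  set K : Set (κ → ℝ) := {f | (∀ x, 0 ≤ f x) ∧ ∑ x : κ, f x ≤ B} with hK
  have hKconv : Convex ℝ K := by
    rintro f ⟨hf0, hfB⟩ g ⟨hg0, hgB⟩ a b ha hb hab
    refine ⟨fun x => add_nonneg (mul_nonneg ha (hf0 x)) (mul_nonneg hb (hg0 x)), ?_⟩
    simp only [Pi.add_apply, Pi.smul_apply, smul_eq_mul]
    rw [Finset.sum_add_distrib, ← Finset.mul_sum, ← Finset.mul_sum]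
    nlinarith
  have hKclosed : IsClosed K := by
    have : K = (⋂ x : κ, {f : κ → ℝ | 0 ≤ f x}) ∩ {f : κ → ℝ | ∑ x : κ, f x ≤ B} := by
      ext f
      simp [hK, Set.mem_iInter]
    rw [this]
    refine IsClosed.inter (isClosed_iInter fun x => ?_) ?_
    · exact isClosed_le continuous_const (continuous_apply x)
    · exact isClosed_le (by exact continuous_finset_sum _ fun x _ => continuous_apply x)
        continuous_const
  have hKcomp : IsCompact K := by
    refine IsCompact.of_isClosed_subset (isCompact_Icc (a := (0 : κ → ℝ))
      (b := fun _ => B)) hKclosed ?_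
    rintro f ⟨hf0, hfB⟩
    constructor
    · intro x; exact hf0 x
    · intro x
      calc f x ≤ ∑ y : κ, f y :=
            Finset.single_le_sum (fun y _ => hf0 y) (Finset.mem_univ x)
        _ ≤ B := hfB
  set D : Set (ι → ℝ) := Lmap '' K with hD
  have hDconv : Convex ℝ D := hKconv.linear_image Lmap
  have hDcomp : IsCompact D := hKcomp.image Lmap.continuous_of_finiteDimensional
  set U : Set (ι → ℝ) := {z | ∀ e : ι, 1 ≤ z e} with hU
  have hUconv : Convex ℝ U := by
    rintro z hz y hy a b ha hb hab
    intro e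
    simp only [Pi.add_apply, Pi.smul_apply, smul_eq_mul]
    nlinarith [hz e, hy e]
  have hUclosed : IsClosed U := by
    have : U = ⋂ e : ι, {z : ι → ℝ | 1 ≤ z e} := by
      ext z; simp [hU, Set.mem_iInter]
    rw [this]
    exact isClosed_iInter fun e => isClosed_le continuous_const (continuous_apply e)
  have hdisj : Disjoint D U := by
    rw [Set.disjoint_left]
    rintro z ⟨f, hfK, rfl⟩ hzU
    refine hno ⟨fun x => if hx : x ∈ X then f ⟨x, hx⟩ else 0, ?_, ?_, ?_, ?_⟩
    · intro x
      by_cases hx : x ∈ X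
      · simp only [dif_pos hx]; exact hfK.1 _
      · simp [dif_neg hx]
    · intro x hx
      rw [Function.mem_support] at hx
      by_contra hxX
      exact hx (dif_neg hxX)
    · intro e he
      have h1 := hzU ⟨e, he⟩
      have h2 : Lmap f ⟨e, he⟩ = ∑ x ∈ X.filter (fun x => x ∈ e),
          (if hx : x ∈ X then f ⟨x, hx⟩ else 0) := by
        rw [Finset.sum_filter]
        rw [← Finset.sum_attach X
          (fun a => if a ∈ e then (if ha : a ∈ X then f ⟨a, ha⟩ else 0) else 0)]
        rw [← Finset.univ_eq_attach]
        refine Finset.sum_congr rfl fun x _ => ?_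
        by_cases h : (x : ℝ) ∈ e <;> simp [h, x.2]
      rw [← h2]
      exact h1
    · have h2 : ∑ x ∈ X, (if hx : x ∈ X then f ⟨x, hx⟩ else 0) = ∑ x : κ, f x := by
        rw [← Finset.sum_attach X (fun x => if hx : x ∈ X then f ⟨x, hx⟩ else 0)]
        rw [← Finset.univ_eq_attach]
        refine Finset.sum_congr rfl fun x _ => ?_
        simp [x.2]
      rw [h2]
      exact hfK.2
  obtain ⟨φ, u, v, hDu, huv, hUv⟩ :=
    geometric_hahn_banach_compact_closed hDconv hDcomp hUconv hUclosed hdisj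
  set we : ι → ℝ := fun e => φ (Pi.single e 1) with hwe
  have hexp : ∀ z : ι → ℝ, φ z = ∑ e : ι, z e * we e := by
    intro z
    calc φ z = φ (∑ e : ι, Pi.single e (z e)) := by rw [Finset.univ_sum_single z]
      _ = ∑ e : ι, φ (Pi.single e (z e)) := map_sum φ _ _
      _ = ∑ e : ι, z e * we e := by
          refine Finset.sum_congr rfl fun e _ => ?_
          have hps : Pi.single e (z e) = z e • (Pi.single e 1 : ι → ℝ) := by
            funext i
            by_cases h : i = e
            · subst h; simp
            · simp [Pi.single_apply, h]
          rw [hps, map_smul, smul_eq_mul, hwe]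
  set S : ℝ := ∑ e : ι, we e with hS
  have hone : (fun _ : ι => (1 : ℝ)) ∈ U := fun e => le_refl 1
  have hSv : v < S := by
    have h := hUv _ hone
    rw [hexp] at h
    simp only [one_mul] at h
    rw [hS]
    exact h
  have hSpos : 0 < S := by
    have h0K : (0 : κ → ℝ) ∈ K := ⟨fun x => le_refl 0, by simpa using hB⟩
    have h := hDu _ ⟨0, h0K, map_zero Lmap⟩
    have h00 : φ (0 : ι → ℝ) = 0 := map_zero φ
    rw [h00] at h
    linarith
  have hwnn : ∀ e : ι, 0 ≤ we e := by
    intro e₀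
    by_contra hneg
    push_neg at hneg
    set lam : ℝ := (S - v) / (-we e₀) with hlam
    have hlampos : 0 < lam := div_pos (by linarith) (by linarith)
    set z : ι → ℝ := fun i => 1 + (if i = e₀ then lam else 0) with hz
    have hzU : z ∈ U := by
      intro e
      show 1 ≤ 1 + (if e = e₀ then lam else 0)
      by_cases h : e = e₀
      · rw [if_pos h]; linarith
      · rw [if_neg h]; linarith
    have hφz : φ z = S + lam * we e₀ := by
      rw [hexp]
      have : ∀ e : ι, z e * we e = we e + (if e = e₀ then lam * we e else 0) := by
        intro e
        by_cases h : e = e₀ <;> simp [hz, h] <;> ring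
      rw [Finset.sum_congr rfl fun e _ => this e, Finset.sum_add_distrib]
      simp [hS, Finset.sum_ite_eq' Finset.univ e₀ (fun e => lam * we e)]
    have hcalc : lam * we e₀ = -(S - v) := by
      have hne : we e₀ ≠ 0 := ne_of_lt hneg
      rw [hlam, div_mul_eq_mul_div, div_neg, mul_div_cancel_right₀ _ hne]
    have := hUv z hzU
    rw [hφz, hcalc] at this
    linarith
  set gval : κ → ℝ := fun x => ∑ e : ι, (if (x : ℝ) ∈ (e : Set ℝ) then we e else 0)
    with hgval
  -- B * gval x < S for all x
  have hBg : ∀ x : κ, B * gval x < S := by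
    intro x
    set fB : κ → ℝ := fun y => if y = x then B else 0 with hfB
    have hfBK : fB ∈ K := by
      constructor
      · intro y; by_cases h : y = x <;> simp [hfB, h, hB]
      · simp [hfB, Finset.sum_ite_eq' Finset.univ x (fun _ => B)]
    have h1 : φ (Lmap fB) < u := hDu _ ⟨fB, hfBK, rfl⟩
    have h2 : φ (Lmap fB) = B * gval x := by
      rw [hexp]
      have hco : ∀ e : ι, Lmap fB e = if (x : ℝ) ∈ (e : Set ℝ) then B else 0 := by
        intro e
        show (∑ y : κ, if (y : ℝ) ∈ (e : Set ℝ) then fB y else 0) = _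
        have : ∀ y : κ, (if (y : ℝ) ∈ (e : Set ℝ) then fB y else 0)
            = if y = x then (if (x : ℝ) ∈ (e : Set ℝ) then B else 0) else 0 := by
          intro y
          by_cases hy : y = x
          · subst hy; by_cases h : (y : ℝ) ∈ (e : Set ℝ) <;> simp [hfB, h]
          · by_cases h : (y : ℝ) ∈ (e : Set ℝ) <;> simp [hfB, h, hy]
        rw [Finset.sum_congr rfl fun y _ => this y]
        simp [Finset.sum_ite_eq' Finset.univ x]
      rw [Finset.sum_congr rfl fun e _ => by rw [hco e]]
      rw [hgval, Finset.mul_sum]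
      refine Finset.sum_congr rfl fun e _ => ?_
      by_cases h : (x : ℝ) ∈ (e : Set ℝ) <;> simp [h]
    rw [h2] at h1
    linarith
  -- the scaled weight functions
  have hscale : ∀ c : ℝ, 0 ≤ c →
      (∀ x ∈ X, ∑ e ∈ E.filter (fun e => x ∈ e),
        (fun e => if h : e ∈ E then we ⟨e, h⟩ * c else 0) e ≤ 1) →
      S * c ≤ B := by
    intro c hc hconstr
    have := hmatch (fun e => if h : e ∈ E then we ⟨e, h⟩ * c else 0)
      (fun e => by
        by_cases h : e ∈ E
        · simp only [dif_pos h]; exact mul_nonneg (hwnn _) hc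
        · simp [dif_neg h])
      hconstr
    calc S * c = ∑ e ∈ E, (fun e => if h : e ∈ E then we ⟨e, h⟩ * c else 0) e := by
          rw [hS, Finset.sum_mul]
          rw [← Finset.sum_attach E (fun e => if h : e ∈ E then we ⟨e, h⟩ * c else 0)]
          rw [← Finset.univ_eq_attach]
          refine Finset.sum_congr rfl fun e _ => ?_
          simp [e.2]
      _ ≤ B := this
  have hptsum : ∀ (c : ℝ) (x : ℝ) (hx : x ∈ X),
      ∑ e ∈ E.filter (fun e => x ∈ e),
        (fun e => if h : e ∈ E then we ⟨e, h⟩ * c else 0) e = gval ⟨x, hx⟩ * c := by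
    intro c x hx
    rw [Finset.sum_filter]
    rw [← Finset.sum_attach E
      (fun e => if x ∈ e then (if h : e ∈ E then we ⟨e, h⟩ * c else 0) else 0)]
    rw [← Finset.univ_eq_attach]
    rw [hgval, Finset.sum_mul]
    refine Finset.sum_congr rfl fun e _ => ?_
    by_cases h : x ∈ (e : Set ℝ) <;> simp [h, e.2]
  -- split on the sign of the maximum of gval
  set γ : ℝ := Finset.univ.sup' hκne gval with hγ
  obtain ⟨x₀, _, hx₀⟩ := Finset.exists_mem_eq_sup' hκne gval
  by_cases hγpos : 0 < γ
  · have hc : (0:ℝ) ≤ 1 / γ := le_of_lt (by positivity)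
    have hcon : ∀ x ∈ X, ∑ e ∈ E.filter (fun e => x ∈ e),
        (fun e => if h : e ∈ E then we ⟨e, h⟩ * (1/γ) else 0) e ≤ 1 := by
      intro x hx
      rw [hptsum (1/γ) x hx]
      have hle : gval ⟨x, hx⟩ ≤ γ := Finset.le_sup' gval (Finset.mem_univ _)
      calc gval ⟨x, hx⟩ * (1/γ) = gval ⟨x, hx⟩ / γ := by ring
        _ ≤ 1 := (div_le_one hγpos).mpr hle
    have h1 := hscale (1/γ) hc hcon
    have h2 : B * γ < S := by rw [hγ, hx₀]; exact hBg x₀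
    rw [show S * (1/γ) = S / γ by ring] at h1
    have := (div_le_iff₀ hγpos).mp h1
    linarith
  · push_neg at hγpos
    have hSne : S ≠ 0 := ne_of_gt hSpos
    have hc : (0:ℝ) ≤ (B + 1) / S := div_nonneg (by linarith) (le_of_lt hSpos)
    have hcon : ∀ x ∈ X, ∑ e ∈ E.filter (fun e => x ∈ e),
        (fun e => if h : e ∈ E then we ⟨e, h⟩ * ((B+1)/S) else 0) e ≤ 1 := by
      intro x hx
      rw [hptsum ((B+1)/S) x hx]
      have hle : gval ⟨x, hx⟩ ≤ γ := Finset.le_sup' gval (Finset.mem_univ _)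
      have : gval ⟨x, hx⟩ * ((B+1)/S) ≤ 0 :=
        mul_nonpos_of_nonpos_of_nonneg (by linarith) hc
      linarith
    have h1 := hscale ((B+1)/S) hc hcon
    rw [← mul_div_assoc, mul_div_cancel_left₀ _ hSne] at h1
    linarith

/-- Every nonempty `d`-interval has a finite set of at most `d` "left endpoints"
such that every point of the set can be connected leftwards to one of them. -/
lemma exists_goodL {d : ℕ} {e : Set ℝ} (h : IsDInterval d e) :
    ∃ s : Finset ℝ, s.card ≤ d ∧ (∀ x ∈ s, x ∈ e) ∧
      ∀ x ∈ e, ∃ l ∈ s, l ≤ x ∧ Set.Icc l x ⊆ e := by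
  obtain ⟨n, a, b, hnd, hab, _, he⟩ := h
  refine ⟨Finset.univ.image a, ?_, ?_, ?_⟩
  · exact le_trans Finset.card_image_le (by simpa using hnd)
  · intro x hx
    obtain ⟨i, _, rfl⟩ := Finset.mem_image.mp hx
    rw [he]
    exact Set.mem_iUnion.mpr ⟨i, Set.mem_Icc.mpr ⟨le_refl _, hab i⟩⟩
  · intro x hx
    rw [he] at hx
    obtain ⟨i, hi⟩ := Set.mem_iUnion.mp hx
    rw [Set.mem_Icc] at hi
    refine ⟨a i, Finset.mem_image.mpr ⟨i, Finset.mem_univ _, rfl⟩, hi.1, ?_⟩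
    intro y hy
    rw [he]
    exact Set.mem_iUnion.mpr ⟨i, Set.mem_Icc.mpr ⟨hy.1, le_trans hy.2 hi.2⟩⟩

/-- For a finite hypergraph of `d`-intervals, `τ*(H) ≤ 2d·ν(H)`. -/
theorem tauStar_le_two_d_mul_nu (d : ℕ) (hd : 1 ≤ d)
    (H : Set (Set ℝ)) (hfin : H.Finite)
    (hH : ∀ e ∈ H, IsDInterval d e ∧ e.Nonempty) :
    tauStar H ≤ 2 * d * (nu H : ℝ) := by
  -- choose left-endpoint witnesses for each edge
  have hLex : ∀ e : Set ℝ, ∃ s : Finset ℝ, e ∈ H →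
      (s.card ≤ d ∧ (∀ x ∈ s, x ∈ e) ∧
        ∀ x ∈ e, ∃ l ∈ s, l ≤ x ∧ Set.Icc l x ⊆ e) := by
    intro e
    by_cases he : e ∈ H
    · obtain ⟨s, h1, h2, h3⟩ := exists_goodL (hH e he).1
      exact ⟨s, fun _ => ⟨h1, h2, h3⟩⟩
    · exact ⟨∅, fun h => absurd h he⟩
  choose L hL using hLex
  set Hs : Finset (Set ℝ) := hfin.toFinset with hHs
  have hmemH : ∀ e ∈ Hs, e ∈ H := fun e he => hfin.mem_toFinset.mp he
  set X : Finset ℝ := Hs.biUnion (fun e => L e) with hX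
  set B : ℝ := 2 * d * (nu H : ℝ) with hB
  have hB0 : 0 ≤ B := by positivity
  -- matchings are bounded by `nu`
  have hnu : ∀ M : Finset (Set ℝ), ↑M ⊆ H → (M : Set (Set ℝ)).PairwiseDisjoint id →
      M.card ≤ nu H := by
    intro M hMH hMdisj
    have hbdd : BddAbove {n | ∃ M : Finset (Set ℝ), ↑M ⊆ H ∧
        (M : Set (Set ℝ)).PairwiseDisjoint id ∧ M.card = n} := by
      refine ⟨Hs.card, ?_⟩
      rintro n ⟨M', hM'H, -, rfl⟩
      refine Finset.card_le_card ?_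
      intro e he
      exact hfin.mem_toFinset.mpr (hM'H he)
    exact le_csSup hbdd ⟨M, hMH, hMdisj, rfl⟩
  -- fractional matchings have weight at most B
  have hmatch : ∀ w : Set ℝ → ℝ, (∀ e, 0 ≤ w e) →
      (∀ x ∈ X, ∑ e ∈ Hs.filter (fun e => x ∈ e), w e ≤ 1) →
      ∑ e ∈ Hs, w e ≤ B := by
    intro w hw0 hwx
    obtain ⟨M, hMsub, hMdisj, hMle⟩ := exists_matching_bound d L Hs.card Hs (le_refl _)
      (fun e he => (hH e (hmemH e he)).2)
      (fun e he => (hL e (hmemH e he)).1)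
      (fun e he f hf hmeet => by
        obtain ⟨x₀, hx₀⟩ := hmeet
        obtain ⟨le', hle'1, hle'2, hle'3⟩ := (hL e (hmemH e he)).2.2 x₀ hx₀.1
        obtain ⟨lf', hlf'1, hlf'2, hlf'3⟩ := (hL f (hmemH f hf)).2.2 x₀ hx₀.2
        refine ⟨max le' lf', ?_, ?_, ?_⟩
        · rcases max_cases le' lf' with ⟨hm, -⟩ | ⟨hm, -⟩
          · rw [hm]; exact Or.inl hle'1
          · rw [hm]; exact Or.inr hlf'1
        · exact hle'3 ⟨le_max_left _ _, max_le hle'2 hlf'2⟩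
        · exact hlf'3 ⟨le_max_right _ _, max_le hle'2 hlf'2⟩)
      w hw0
      (fun e he x hx => hwx x (Finset.mem_biUnion.mpr ⟨e, he, hx⟩))
    have hMcard : (M.card : ℝ) ≤ (nu H : ℝ) := by
      exact_mod_cast hnu M (fun e he => hmemH e (hMsub he)) hMdisj
    calc ∑ e ∈ Hs, w e ≤ 2 * (d : ℝ) * M.card := hMle
      _ ≤ B := by
        rw [hB]
        have h2d : (0:ℝ) ≤ 2 * (d:ℝ) := by positivity
        nlinarith
  -- get the fractional cover
  obtain ⟨f, hf0, hfsupp, hfcov, hfB⟩ := exists_cover_of_matching_bound X Hs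
    (fun e he => by
      obtain ⟨y, hy⟩ := (hH e (hmemH e he)).2
      obtain ⟨l, hl1, -, -⟩ := (hL e (hmemH e he)).2.2 y hy
      exact ⟨l, Finset.mem_biUnion.mpr ⟨e, he, hl1⟩, (hL e (hmemH e he)).2.1 l hl1⟩)
    B hB0 hmatch
  -- conclude
  have hsuppfin : (Function.support f).Finite := X.finite_toSet.subset hfsupp
  have hmem : (∑ᶠ x, f x) ∈ {t | ∃ g : ℝ → ℝ, (Function.support g).Finite ∧
      (∀ x, 0 ≤ g x) ∧ (∀ e ∈ H, 1 ≤ ∑ᶠ x ∈ e, g x) ∧ t = ∑ᶠ x, g x} := by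
    refine ⟨f, hsuppfin, hf0, ?_, rfl⟩
    intro e he
    have heHs : e ∈ Hs := hfin.mem_toFinset.mpr he
    have hsum : ∑ᶠ x ∈ e, f x = ∑ x ∈ X.filter (fun x => x ∈ e), f x := by
      refine finsum_mem_eq_sum_of_inter_support_eq f ?_
      ext x
      constructor
      · rintro ⟨hxe, hxs⟩
        exact ⟨Finset.mem_coe.mpr (Finset.mem_filter.mpr ⟨hfsupp hxs, hxe⟩), hxs⟩
      · rintro ⟨hxf, hxs⟩
        exact ⟨(Finset.mem_filter.mp (Finset.mem_coe.mp hxf)).2, hxs⟩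
    rw [hsum]
    exact hfcov e heHs
  have hbdd : BddBelow {t | ∃ g : ℝ → ℝ, (Function.support g).Finite ∧
      (∀ x, 0 ≤ g x) ∧ (∀ e ∈ H, 1 ≤ ∑ᶠ x ∈ e, g x) ∧ t = ∑ᶠ x, g x} := by
    refine ⟨0, ?_⟩
    rintro t ⟨g, -, hg0, -, rfl⟩
    exact finsum_nonneg hg0
  have h1 : tauStar H ≤ ∑ᶠ x, f x := csInf_le hbdd hmem
  have h2 : ∑ᶠ x, f x ≤ B := by
    rw [finsum_eq_sum_of_support_subset f ?_]
    · exact hfB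
    · exact hfsupp
  rw [hB] at h2
  linarith
end

section
/- Let d ≥ 1 and let H be a finite hypergraph of d-intervals. Then τ(H) ≤ d·τ*(H). -/
/-- The covering (transversal) number: the minimum size of a finite set of
points meeting every edge. -/
noncomputable def tau {α : Type*} (H : Set (Set α)) : ℕ :=
  sInf {n | ∃ C : Finset α, (∀ e ∈ H, ∃ x ∈ C, x ∈ e) ∧ C.card = n}

open scoped Classical in
/-- Greedy sweep: a finite family of closed intervals, each of `f`-weight at
least `1/d`, can be pierced by at most `d·∑f` points. -/
lemma greedy_cover (d : ℕ) (hd : 1 ≤ d) (S : Finset (ℝ × ℝ)) :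
    ∀ f : ℝ → ℝ, (Function.support f).Finite → (∀ x, 0 ≤ f x) →
      (∀ p ∈ S, (1 : ℝ) / d ≤ ∑ᶠ x ∈ Set.Icc p.1 p.2, f x) →
      ∃ C : Finset ℝ, (∀ p ∈ S, ∃ x ∈ C, x ∈ Set.Icc p.1 p.2) ∧
        (C.card : ℝ) ≤ d * ∑ᶠ x, f x := by
  induction S using Finset.strongInduction with
  | _ S ih =>
  intro f hf hf0 hw
  have hdpos : (0 : ℝ) < d := by exact_mod_cast hd
  have hfnn : 0 ≤ ∑ᶠ x, f x := finsum_nonneg hf0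
  rcases S.eq_empty_or_nonempty with rfl | hS
  · refine ⟨∅, by simp, ?_⟩
    simpa using mul_nonneg hdpos.le hfnn
  obtain ⟨p0, hp0S, hmin⟩ := S.exists_min_image Prod.snd hS
  set p := p0.2 with hp
  have hdinv : (0 : ℝ) < 1 / d := by positivity
  have hne : p0.1 ≤ p := by
    by_contra hlt
    push_neg at hlt
    have h1 := hw p0 hp0S
    rw [Set.Icc_eq_empty (not_le.mpr hlt), finsum_mem_empty] at h1
    linarith
  set g : ℝ → ℝ := fun x => if p < x then f x else 0 with hg
  have hgf : Function.support g ⊆ Function.support f := by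
    intro x hx
    simp only [Function.mem_support, hg] at hx ⊢
    intro h0
    apply hx
    split <;> simp [h0]
  have hgfin : (Function.support g).Finite := hf.subset hgf
  have hg0 : ∀ x, 0 ≤ g x := fun x => by
    simp only [hg]; split; exacts [hf0 x, le_refl 0]
  set S' : Finset (ℝ × ℝ) := S.filter (fun q => p < q.1) with hS'
  have hsub : S' ⊂ S := by
    refine Finset.filter_ssubset.mpr ⟨p0, hp0S, ?_⟩
    exact not_lt.mpr hne
  have hw' : ∀ q ∈ S', (1 : ℝ) / d ≤ ∑ᶠ x ∈ Set.Icc q.1 q.2, g x := by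
    intro q hq
    have hq' := Finset.mem_filter.mp hq
    have : ∑ᶠ x ∈ Set.Icc q.1 q.2, g x = ∑ᶠ x ∈ Set.Icc q.1 q.2, f x := by
      refine finsum_mem_congr rfl fun x hx => ?_
      simp only [hg, if_pos (lt_of_lt_of_le hq'.2 hx.1)]
    rw [this]
    exact hw q (Finset.mem_filter.mp hq).1
  obtain ⟨C', hC'cov, hC'card⟩ := ih S' hsub g hgfin hg0 hw'
  refine ⟨insert p C', ?_, ?_⟩
  · intro q hq
    by_cases hcase : p < q.1
    · obtain ⟨x, hxC, hxI⟩ := hC'cov q (Finset.mem_filter.mpr ⟨hq, hcase⟩)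
      exact ⟨x, Finset.mem_insert_of_mem hxC, hxI⟩
    · exact ⟨p, Finset.mem_insert_self _ _, ⟨not_lt.mp hcase, hmin q hq⟩⟩
  · -- ∑ g ≤ ∑ f - 1/d
    set T := hf.toFinset with hT
    have hTf : ∑ᶠ x, f x = ∑ x ∈ T, f x := finsum_eq_sum f hf
    have hTg : ∑ᶠ x, g x = ∑ x ∈ T, g x := by
      refine finsum_eq_sum_of_support_subset g ?_
      intro x hx
      exact hf.mem_toFinset.mpr (hgf hx)
    have hwp0 : (1 : ℝ) / d ≤ ∑ x ∈ T.filter (· ∈ Set.Icc p0.1 p), f x := by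
      have := hw p0 hp0S
      rwa [finsum_mem_eq_sum_filter f _ hf] at this
    have hdiff : (1 : ℝ) / d ≤ ∑ x ∈ T, (f x - g x) := by
      have heq : ∑ x ∈ T.filter (· ∈ Set.Icc p0.1 p), f x
          = ∑ x ∈ T.filter (· ∈ Set.Icc p0.1 p), (f x - g x) := by
        refine Finset.sum_congr rfl fun x hx => ?_
        have hxI : x ∈ Set.Icc p0.1 p := (Finset.mem_filter.mp hx).2
        simp only [hg, if_neg (not_lt.mpr hxI.2)]
        ring
      have hle : ∑ x ∈ T.filter (· ∈ Set.Icc p0.1 p), (f x - g x)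
          ≤ ∑ x ∈ T, (f x - g x) := by
        refine Finset.sum_le_sum_of_subset_of_nonneg (Finset.filter_subset _ _) ?_
        intro x _ _
        simp only [hg]
        split
        · simp
        · have := hf0 x; linarith
      linarith [hwp0, heq ▸ hwp0]
    have hsum : ∑ᶠ x, g x ≤ (∑ᶠ x, f x) - 1 / d := by
      rw [hTf, hTg]
      have : ∑ x ∈ T, f x - ∑ x ∈ T, g x = ∑ x ∈ T, (f x - g x) :=
        (Finset.sum_sub_distrib f g).symm
      linarith [hdiff, this]
    have hcard : ((insert p C').card : ℝ) ≤ (C'.card : ℝ) + 1 := by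
      exact_mod_cast Finset.card_insert_le _ _
    have hmul : (d : ℝ) * ∑ᶠ x, g x ≤ d * ((∑ᶠ x, f x) - 1 / d) :=
      mul_le_mul_of_nonneg_left hsum hdpos.le
    have hcancel : (d : ℝ) * (1 / d) = 1 := by field_simp
    nlinarith [hC'card, hcard, hmul, hcancel]

open scoped Classical in
/-- Each `d`-interval edge of fractional weight ≥ 1 contains a closed interval
of weight at least `1/d`. -/
lemma exists_heavy_interval (d : ℕ) (hd : 1 ≤ d) (f : ℝ → ℝ)
    (hf : (Function.support f).Finite) (hf0 : ∀ x, 0 ≤ f x)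
    (e : Set ℝ) (he : IsDInterval d e) (hene : e.Nonempty)
    (hwe : 1 ≤ ∑ᶠ x ∈ e, f x) :
    ∃ q : ℝ × ℝ, Set.Icc q.1 q.2 ⊆ e ∧ (1 : ℝ) / d ≤ ∑ᶠ x ∈ Set.Icc q.1 q.2, f x := by
  obtain ⟨n, a, b, hnd, hab, hdisj, rfl⟩ := he
  have hn : 0 < n := by
    rcases Nat.eq_zero_or_pos n with rfl | h
    · obtain ⟨x, hx⟩ := hene
      simp only [Set.mem_iUnion] at hx
      obtain ⟨i, _⟩ := hx
      exact absurd i.2 (Nat.not_lt_zero _)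
    · exact h
  set T := hf.toFinset with hT
  have key : ∑ᶠ x ∈ ⋃ i, Set.Icc (a i) (b i), f x
      = ∑ i : Fin n, ∑ᶠ x ∈ Set.Icc (a i) (b i), f x := by
    rw [finsum_mem_eq_sum_filter f _ hf]
    have hterm : ∀ i : Fin n, ∑ᶠ x ∈ Set.Icc (a i) (b i), f x
        = ∑ x ∈ T.filter (· ∈ Set.Icc (a i) (b i)), f x := fun i =>
      finsum_mem_eq_sum_filter f _ hf
    simp only [hterm]
    have hU : T.filter (· ∈ ⋃ i, Set.Icc (a i) (b i))
        = Finset.univ.biUnion (fun i : Fin n => T.filter (· ∈ Set.Icc (a i) (b i))) := by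
      ext x
      simp only [Finset.mem_filter, Finset.mem_biUnion, Finset.mem_univ, true_and,
        Set.mem_iUnion]
      tauto
    rw [hU, Finset.sum_biUnion]
    intro i _ j _ hij
    simp only [Function.onFun]
    rw [Finset.disjoint_left]
    intro x hxi hxj
    have hdis := hdisj (Set.mem_univ i) (Set.mem_univ j) hij
    exact Set.disjoint_left.mp hdis (Finset.mem_filter.mp hxi).2 (Finset.mem_filter.mp hxj).2
  have hex : ∃ i : Fin n, (1 : ℝ) / n ≤ ∑ᶠ x ∈ Set.Icc (a i) (b i), f x := by
    by_contra hcon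
    push_neg at hcon
    have huniv : (Finset.univ : Finset (Fin n)).Nonempty := ⟨⟨0, hn⟩, Finset.mem_univ _⟩
    have hlt : ∑ i : Fin n, ∑ᶠ x ∈ Set.Icc (a i) (b i), f x
        < ∑ _i : Fin n, (1 : ℝ) / n :=
      Finset.sum_lt_sum_of_nonempty huniv fun i _ => hcon i
    have hnpos : (0 : ℝ) < n := by exact_mod_cast hn
    rw [Finset.sum_const, Finset.card_univ, Fintype.card_fin, nsmul_eq_mul] at hlt
    have : (n : ℝ) * (1 / n) = 1 := by field_simp
    rw [this] at hlt
    rw [key] at hwe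
    linarith
  obtain ⟨i, hi⟩ := hex
  refine ⟨(a i, b i), Set.subset_iUnion (fun j => Set.Icc (a j) (b j)) i, ?_⟩
  refine le_trans ?_ hi
  have hnpos : (0 : ℝ) < n := by exact_mod_cast hn
  have hnd' : (n : ℝ) ≤ d := by exact_mod_cast hnd
  exact one_div_le_one_div_of_le hnpos hnd'

/-- For a finite hypergraph of `d`-intervals, `τ(H) ≤ d·τ*(H)`. -/
theorem tau_le_d_mul_tauStar (d : ℕ) (hd : 1 ≤ d)
    (H : Set (Set ℝ)) (hfin : H.Finite)
    (hH : ∀ e ∈ H, IsDInterval d e ∧ e.Nonempty) :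
    (tau H : ℝ) ≤ d * tauStar H := by
  classical
  have hdpos : (0 : ℝ) < d := by exact_mod_cast hd
  set A := {t : ℝ | ∃ f : ℝ → ℝ, (Function.support f).Finite ∧ (∀ x, 0 ≤ f x) ∧
    (∀ e ∈ H, 1 ≤ ∑ᶠ x ∈ e, f x) ∧ t = ∑ᶠ x, f x} with hA
  have htS : tauStar H = sInf A := rfl
  -- A is nonempty
  have hAne : A.Nonempty := by
    set pt : Set ℝ → ℝ := fun e => if h : e.Nonempty then h.choose else 0 with hpt
    set C0 : Finset ℝ := hfin.toFinset.image pt with hC0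
    set f : ℝ → ℝ := fun x => if x ∈ C0 then 1 else 0 with hfdef
    have hsupp : Function.support f ⊆ ↑C0 := by
      intro x hx
      simp only [Function.mem_support, hfdef] at hx
      by_contra hxc
      exact hxc (Finset.mem_coe.mpr (by simpa [hfdef] using hx))
    have hffin : (Function.support f).Finite := Set.Finite.subset C0.finite_toSet hsupp
    have hf0 : ∀ x, 0 ≤ f x := fun x => by
      simp only [hfdef]; split <;> norm_num
    refine ⟨∑ᶠ x, f x, f, hffin, hf0, ?_, rfl⟩
    intro e he
    have hene := (hH e he).2
    have hpte : pt e ∈ e := by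
      simp only [hpt, dif_pos hene]
      exact hene.choose_spec
    have hptC : pt e ∈ C0 := by
      rw [hC0]
      exact Finset.mem_image_of_mem pt (hfin.mem_toFinset.mpr he)
    rw [finsum_mem_def]
    have hind : Set.indicator e f (pt e) = 1 := by
      rw [Set.indicator_of_mem hpte]
      simp only [hfdef, if_pos hptC]
    have hindsupp : (Function.support (Set.indicator e f)).Finite :=
      hffin.subset (by rw [Set.support_indicator]; exact Set.inter_subset_right)
    have hindnn : ∀ x, 0 ≤ Set.indicator e f x := fun x =>
      Set.indicator_nonneg (fun y _ => hf0 y) x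
    calc (1 : ℝ) = Set.indicator e f (pt e) := hind.symm
      _ ≤ ∑ᶠ x, Set.indicator e f x := single_le_finsum _ hindsupp hindnn
  -- main bound
  have hbound : ∀ t ∈ A, (tau H : ℝ) ≤ d * t := by
    rintro t ⟨f, hf, hf0, hcov, rfl⟩
    have hsel : ∀ e, e ∈ H → ∃ q : ℝ × ℝ, Set.Icc q.1 q.2 ⊆ e ∧
        (1 : ℝ) / d ≤ ∑ᶠ x ∈ Set.Icc q.1 q.2, f x := fun e he =>
      exists_heavy_interval d hd f hf hf0 e (hH e he).1 (hH e he).2 (hcov e he)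
    choose q hq1 hq2 using hsel
    set qt : Set ℝ → ℝ × ℝ := fun e => if h : e ∈ H then q e h else (1, 0) with hqt
    set S : Finset (ℝ × ℝ) := hfin.toFinset.image qt with hSdef
    have hwS : ∀ p ∈ S, (1 : ℝ) / d ≤ ∑ᶠ x ∈ Set.Icc p.1 p.2, f x := by
      intro p hp
      obtain ⟨e, heT, hpe⟩ := Finset.mem_image.mp hp
      have he : e ∈ H := hfin.mem_toFinset.mp heT
      rw [← hpe]
      simp only [hqt, dif_pos he]
      exact hq2 e he
    obtain ⟨C, hCcov, hCcard⟩ := greedy_cover d hd S f hf hf0 hwS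
    have hcover : ∀ e ∈ H, ∃ x ∈ C, x ∈ e := by
      intro e he
      have hpS : qt e ∈ S :=
        Finset.mem_image_of_mem qt (hfin.mem_toFinset.mpr he)
      obtain ⟨x, hxC, hxI⟩ := hCcov (qt e) hpS
      refine ⟨x, hxC, ?_⟩
      apply hq1 e he
      simpa only [hqt, dif_pos he] using hxI
    have htau : tau H ≤ C.card := Nat.sInf_le ⟨C, hcover, rfl⟩
    calc (tau H : ℝ) ≤ (C.card : ℝ) := by exact_mod_cast htau
      _ ≤ d * ∑ᶠ x, f x := hCcard
  have hlb : (tau H : ℝ) / d ≤ sInf A := by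
    refine le_csInf hAne fun t ht => ?_
    rw [div_le_iff₀ hdpos]
    calc (tau H : ℝ) ≤ d * t := hbound t ht
      _ = t * d := mul_comm _ _
  rw [htS]
  calc (tau H : ℝ) = d * ((tau H : ℝ) / d) := by field_simp
    _ ≤ d * sInf A := mul_le_mul_of_nonneg_left hlb hdpos.le
end

section
/- Let d ≥ 1, let H be a finite hypergraph of d-intervals, and let w : E(H) → ℕ be a weight system on the edges of H. Then τ_w(H) ≤ d·τ*_w(H). -/
/-- The weighted covering number `τ_w`: the minimum of `∑ₓ g x` over finitely
supported `g : α → ℕ` with `∑_{x ∈ e} g x ≥ w e` for every edge `e`. -/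
noncomputable def tauW {α : Type*} (H : Set (Set α)) (w : Set α → ℕ) : ℕ :=
  sInf {m | ∃ g : α → ℕ, (Function.support g).Finite ∧
    (∀ e ∈ H, w e ≤ ∑ᶠ x ∈ e, g x) ∧ m = ∑ᶠ x, g x}

/-- The fractional weighted covering number `τ*_w`: the infimum of `∑ₓ g x`
over finitely supported nonnegative `g : α → ℝ` with `∑_{x ∈ e} g x ≥ w e`
for every edge `e`. -/
noncomputable def tauStarW {α : Type*} (H : Set (Set α)) (w : Set α → ℕ) : ℝ :=
  sInf {t | ∃ g : α → ℝ, (Function.support g).Finite ∧ (∀ x, 0 ≤ g x) ∧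
    (∀ e ∈ H, (w e : ℝ) ≤ ∑ᶠ x ∈ e, g x) ∧ t = ∑ᶠ x, g x}

open Finset

section Round

variable (s : Finset ℝ) (g : ℝ → ℝ)

/-- Cumulative sum of `g` over support points `≤ t`. -/
noncomputable def cumLE (t : ℝ) : ℝ := ∑ x ∈ s.filter (fun x => x ≤ t), g x

/-- Cumulative sum of `g` over support points `< t`. -/
noncomputable def cumLT (t : ℝ) : ℝ := ∑ x ∈ s.filter (fun x => x < t), g x

/-- Rounded integer cover. -/
noncomputable def rnd (d : ℕ) (x : ℝ) : ℕ :=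
  ⌊(d : ℝ) * cumLE s g x⌋₊ - ⌊(d : ℝ) * cumLT s g x⌋₊

lemma cumLT_le_cumLE (hg : ∀ x, 0 ≤ g x) (t : ℝ) : cumLT s g t ≤ cumLE s g t := by
  apply Finset.sum_le_sum_of_subset_of_nonneg
  · intro x hx
    simp only [mem_filter] at hx ⊢
    exact ⟨hx.1, le_of_lt hx.2⟩
  · intro x _ _; exact hg x

lemma cumLT_nonneg (hg : ∀ x, 0 ≤ g x) (t : ℝ) : 0 ≤ cumLT s g t :=
  Finset.sum_nonneg fun x _ => hg x

lemma cumLE_nonneg (hg : ∀ x, 0 ≤ g x) (t : ℝ) : 0 ≤ cumLE s g t :=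
  Finset.sum_nonneg fun x _ => hg x

lemma gap_eq {a b : ℝ} (hab : a ≤ b) :
    cumLT s g a + ∑ x ∈ s.filter (fun x => a ≤ x ∧ x ≤ b), g x = cumLE s g b := by
  have h := Finset.sum_filter_add_sum_filter_not (s.filter (fun x => x ≤ b))
    (fun x => x < a) g
  have e1 : (s.filter (fun x => x ≤ b)).filter (fun x => x < a)
      = s.filter (fun x => x < a) := by
    ext x; simp only [mem_filter]
    constructor
    · rintro ⟨⟨hx, _⟩, h2⟩; exact ⟨hx, h2⟩
    · rintro ⟨hx, h2⟩; exact ⟨⟨hx, le_trans (le_of_lt h2) hab⟩, h2⟩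
  have e2 : (s.filter (fun x => x ≤ b)).filter (fun x => ¬ x < a)
      = s.filter (fun x => a ≤ x ∧ x ≤ b) := by
    ext x; simp only [mem_filter, not_lt]
    constructor
    · rintro ⟨⟨hx, h1⟩, h2⟩; exact ⟨hx, h2, h1⟩
    · rintro ⟨hx, h1, h2⟩; exact ⟨⟨hx, h2⟩, h1⟩
  rw [e1, e2] at h
  rw [cumLT, cumLE, ← h]

lemma tele_lt (hg : ∀ x, 0 ≤ g x) (d : ℕ) (a : ℝ) :
    ∀ (N : ℕ) (c : ℝ), a ≤ c → (s.filter (fun x => a ≤ x ∧ x < c)).card = N →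
    ∑ x ∈ s.filter (fun x => a ≤ x ∧ x < c), rnd s g d x + ⌊(d : ℝ) * cumLT s g a⌋₊
      = ⌊(d : ℝ) * cumLT s g c⌋₊ := by
  intro N
  induction N with
  | zero =>
    intro c hac hcard
    have hfe : s.filter (fun x => a ≤ x ∧ x < c) = ∅ := card_eq_zero.mp hcard
    have hcc : cumLT s g c = cumLT s g a := by
      unfold cumLT; congr 1
      ext x; simp only [mem_filter]
      constructor
      · rintro ⟨hx, hxc⟩
        refine ⟨hx, ?_⟩
        by_contra hxa
        push_neg at hxa
        have : x ∈ s.filter (fun x => a ≤ x ∧ x < c) :=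
          mem_filter.mpr ⟨hx, hxa, hxc⟩
        simp [hfe] at this
      · rintro ⟨hx, hxa⟩; exact ⟨hx, lt_of_lt_of_le hxa hac⟩
    rw [hfe, hcc]; simp
  | succ N ih =>
    intro c hac hcard
    have hne : (s.filter (fun x => a ≤ x ∧ x < c)).Nonempty :=
      card_pos.mp (by omega)
    set T := s.filter (fun x => a ≤ x ∧ x < c) with hT
    set m := T.max' hne with hm
    have hmT : m ∈ T := T.max'_mem hne
    have hms : m ∈ s := (mem_filter.mp hmT).1
    have hma : a ≤ m := (mem_filter.mp hmT).2.1
    have hmc : m < c := (mem_filter.mp hmT).2.2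
    have herase : s.filter (fun x => a ≤ x ∧ x < m) = T.erase m := by
      ext x; simp only [mem_erase, hT, mem_filter]
      constructor
      · rintro ⟨hx, hxa, hxm⟩
        exact ⟨ne_of_lt hxm, hx, hxa, lt_trans hxm hmc⟩
      · rintro ⟨hne', hx, hxa, hxc⟩
        exact ⟨hx, hxa, lt_of_le_of_ne
          (T.le_max' x (mem_filter.mpr ⟨hx, hxa, hxc⟩)) hne'⟩
    have hcard' : (s.filter (fun x => a ≤ x ∧ x < m)).card = N := by
      rw [herase, card_erase_of_mem hmT, hcard]
      omega
    have hLTc : cumLT s g c = cumLE s g m := by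
      unfold cumLT cumLE; congr 1
      ext x; simp only [mem_filter]
      constructor
      · rintro ⟨hx, hxc⟩
        refine ⟨hx, ?_⟩
        by_cases hxa : a ≤ x
        · exact T.le_max' x (mem_filter.mpr ⟨hx, hxa, hxc⟩)
        · push_neg at hxa; linarith
      · rintro ⟨hx, hxm⟩; exact ⟨hx, lt_of_le_of_lt hxm hmc⟩
    have hfl : ⌊(d : ℝ) * cumLT s g m⌋₊ ≤ ⌊(d : ℝ) * cumLE s g m⌋₊ :=
      Nat.floor_le_floor
        (mul_le_mul_of_nonneg_left (cumLT_le_cumLE s g hg m) (by positivity))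
    have hsum : ∑ x ∈ T, rnd s g d x
        = rnd s g d m + ∑ x ∈ T.erase m, rnd s g d x :=
      (Finset.add_sum_erase _ _ hmT).symm
    rw [hsum, ← herase, add_assoc, ih m hma hcard', hLTc]
    show ⌊(d : ℝ) * cumLE s g m⌋₊ - ⌊(d : ℝ) * cumLT s g m⌋₊
        + ⌊(d : ℝ) * cumLT s g m⌋₊ = _
    omega

lemma tele_le (hg : ∀ x, 0 ≤ g x) (d : ℕ) {a b : ℝ} (hab : a ≤ b) :
    ∑ x ∈ s.filter (fun x => a ≤ x ∧ x ≤ b), rnd s g d x + ⌊(d : ℝ) * cumLT s g a⌋₊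
      = ⌊(d : ℝ) * cumLE s g b⌋₊ := by
  by_cases hne : (s.filter (fun x => a ≤ x ∧ x ≤ b)).Nonempty
  · set T := s.filter (fun x => a ≤ x ∧ x ≤ b) with hT
    set m := T.max' hne with hm
    have hmT : m ∈ T := T.max'_mem hne
    have hms : m ∈ s := (mem_filter.mp hmT).1
    have hma : a ≤ m := (mem_filter.mp hmT).2.1
    have hmb : m ≤ b := (mem_filter.mp hmT).2.2
    have herase : s.filter (fun x => a ≤ x ∧ x < m) = T.erase m := by
      ext x; simp only [mem_erase, hT, mem_filter]
      constructor
      · rintro ⟨hx, hxa, hxm⟩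
        exact ⟨ne_of_lt hxm, hx, hxa, le_trans (le_of_lt hxm) hmb⟩
      · rintro ⟨hne', hx, hxa, hxb⟩
        exact ⟨hx, hxa, lt_of_le_of_ne
          (T.le_max' x (mem_filter.mpr ⟨hx, hxa, hxb⟩)) hne'⟩
    have hLEb : cumLE s g b = cumLE s g m := by
      unfold cumLE; congr 1
      ext x; simp only [mem_filter]
      constructor
      · rintro ⟨hx, hxb⟩
        refine ⟨hx, ?_⟩
        by_cases hxa : a ≤ x
        · exact T.le_max' x (mem_filter.mpr ⟨hx, hxa, hxb⟩)
        · push_neg at hxa; linarith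
      · rintro ⟨hx, hxm⟩; exact ⟨hx, le_trans hxm hmb⟩
    have hfl : ⌊(d : ℝ) * cumLT s g m⌋₊ ≤ ⌊(d : ℝ) * cumLE s g m⌋₊ :=
      Nat.floor_le_floor
        (mul_le_mul_of_nonneg_left (cumLT_le_cumLE s g hg m) (by positivity))
    have hsum : ∑ x ∈ T, rnd s g d x
        = rnd s g d m + ∑ x ∈ T.erase m, rnd s g d x :=
      (Finset.add_sum_erase _ _ hmT).symm
    rw [hsum, ← herase, add_assoc, tele_lt s g hg d a _ m hma rfl, hLEb]
    show ⌊(d : ℝ) * cumLE s g m⌋₊ - ⌊(d : ℝ) * cumLT s g m⌋₊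
        + ⌊(d : ℝ) * cumLT s g m⌋₊ = _
    omega
  · have hfe : s.filter (fun x => a ≤ x ∧ x ≤ b) = ∅ :=
      Finset.not_nonempty_iff_eq_empty.mp hne
    have hcc : cumLE s g b = cumLT s g a := by
      unfold cumLE cumLT; congr 1
      ext x; simp only [mem_filter]
      constructor
      · rintro ⟨hx, hxb⟩
        refine ⟨hx, ?_⟩
        by_contra hxa
        push_neg at hxa
        have : x ∈ s.filter (fun x => a ≤ x ∧ x ≤ b) :=
          mem_filter.mpr ⟨hx, hxa, hxb⟩
        simp [hfe] at this
      · rintro ⟨hx, hxa⟩; exact ⟨hx, le_trans (le_of_lt hxa) hab⟩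
    rw [hfe, hcc]; simp

lemma rnd_support : Function.support (rnd s g d) ⊆ ↑s := by
  intro x hx
  by_contra hxs
  apply hx
  have : cumLE s g x = cumLT s g x := by
    unfold cumLE cumLT; congr 1
    ext y; simp only [mem_filter]
    constructor
    · rintro ⟨hy, hyx⟩
      refine ⟨hy, lt_of_le_of_ne hyx ?_⟩
      rintro rfl; exact hxs hy
    · rintro ⟨hy, hyx⟩; exact ⟨hy, le_of_lt hyx⟩
  simp [rnd, this]

lemma rnd_total (hg : ∀ x, 0 ≤ g x) (d : ℕ) :
    ∑ x ∈ s, rnd s g d x = ⌊(d : ℝ) * ∑ x ∈ s, g x⌋₊ := by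
  rcases s.eq_empty_or_nonempty with rfl | hne
  · simp [rnd, cumLE, cumLT]
  · have hab : s.min' hne ≤ s.max' hne := s.min'_le _ (s.max'_mem hne)
    have hfe : s.filter (fun x => s.min' hne ≤ x ∧ x ≤ s.max' hne) = s := by
      ext x; simp only [mem_filter, and_iff_left_iff_imp]
      exact fun hx => ⟨s.min'_le x hx, s.le_max' x hx⟩
    have hLT : cumLT s g (s.min' hne) = 0 := by
      unfold cumLT
      have : s.filter (fun x => x < s.min' hne) = ∅ := by
        ext x; simp only [mem_filter, Finset.notMem_empty, iff_false, not_and, not_lt]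
        exact fun hx => s.min'_le x hx
      rw [this, Finset.sum_empty]
    have hLE : cumLE s g (s.max' hne) = ∑ x ∈ s, g x := by
      unfold cumLE
      congr 1
      ext x; simp only [mem_filter, and_iff_left_iff_imp]
      exact fun hx => s.le_max' x hx
    have h := tele_le s g hg d hab
    rw [hfe, hLT, hLE] at h
    simpa using h

end Round

/-- For a finite hypergraph of `d`-intervals with a weight system `w` on its
edges, `τ_w(H) ≤ d·τ*_w(H)`. -/
theorem tauW_le_d_mul_tauStarW (d : ℕ) (hd : 1 ≤ d)
    (H : Set (Set ℝ)) (hfin : H.Finite)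
    (hH : ∀ e ∈ H, IsDInterval d e ∧ e.Nonempty) (w : Set ℝ → ℕ) :
    (tauW H w : ℝ) ≤ d * tauStarW H w := by
  classical
  set S : Set ℝ := {t | ∃ g : ℝ → ℝ, (Function.support g).Finite ∧ (∀ x, 0 ≤ g x) ∧
    (∀ e ∈ H, (w e : ℝ) ≤ ∑ᶠ x ∈ e, g x) ∧ t = ∑ᶠ x, g x} with hSdef
  have hd0 : (0 : ℝ) < d := by exact_mod_cast Nat.lt_of_lt_of_le Nat.zero_lt_one hd
  -- S is nonempty
  have hSne : S.Nonempty := by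
    set p : Set ℝ → ℝ := fun e => if h : e.Nonempty then h.some else 0 with hp
    have hpe : ∀ e ∈ H, p e ∈ e := by
      intro e he
      have hne := (hH e he).2
      simp only [hp, dif_pos hne]
      exact hne.some_mem
    set P : Finset ℝ := hfin.toFinset.image p with hP
    set W : ℕ := ∑ e ∈ hfin.toFinset, w e with hW
    set g0 : ℝ → ℝ := fun x => if x ∈ P then (W : ℝ) else 0 with hg0
    have hsupp0 : Function.support g0 ⊆ ↑P := by
      intro x hx
      by_contra hxP
      have hxP' : x ∉ P := by simpa using hxP
      exact hx (by simp [hg0, hxP'])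
    refine ⟨∑ᶠ x, g0 x, g0, Set.Finite.subset P.finite_toSet hsupp0, ?_, ?_, rfl⟩
    · intro x
      simp only [hg0]
      split <;> positivity
    · intro e he
      have hmem : p e ∈ P.filter (fun x => x ∈ e) := by
        simp only [mem_filter]
        exact ⟨Finset.mem_image_of_mem p (hfin.mem_toFinset.mpr he), hpe e he⟩
      have heq : ∑ᶠ x ∈ e, g0 x = ∑ x ∈ P.filter (fun x => x ∈ e), g0 x := by
        apply finsum_mem_eq_sum_of_inter_support_eq
        ext x
        simp only [Set.mem_inter_iff, Finset.coe_filter, Set.mem_setOf_eq]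
        constructor
        · rintro ⟨hxe, hxs⟩; exact ⟨⟨hsupp0 hxs, hxe⟩, hxs⟩
        · rintro ⟨⟨_, hxe⟩, hxs⟩; exact ⟨hxe, hxs⟩
      rw [heq]
      have hsingle : g0 (p e) ≤ ∑ x ∈ P.filter (fun x => x ∈ e), g0 x :=
        Finset.single_le_sum (f := g0) (fun x _ => by simp only [hg0]; split <;> positivity)
          hmem
      have hval : g0 (p e) = (W : ℝ) := by
        simp only [hg0, if_pos (Finset.mem_image_of_mem p (hfin.mem_toFinset.mpr he))]
        exact if_pos (Finset.mem_image_of_mem p (hfin.mem_toFinset.mpr he))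
      have hwW : w e ≤ W :=
        Finset.single_le_sum (fun e _ => Nat.zero_le (w e)) (hfin.mem_toFinset.mpr he)
      calc (w e : ℝ) ≤ (W : ℝ) := by exact_mod_cast hwW
        _ = g0 (p e) := hval.symm
        _ ≤ _ := hsingle
  -- main bound: for any t ∈ S, tauW ≤ d * t
  have key : ∀ t ∈ S, (tauW H w : ℝ) ≤ d * t := by
    rintro t ⟨g, hsupp, hg, hcov, rfl⟩
    set s : Finset ℝ := hsupp.toFinset with hs
    have hsub : Function.support g ⊆ ↑s := by
      intro x hx; simp [hs, hx]
    -- the rounded cover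
    have hcover : ∀ e ∈ H, w e ≤ ∑ᶠ x ∈ e, rnd s g d x := by
      intro e he
      obtain ⟨⟨n, A, B, hnd, hab, hdisj, hE⟩, hene⟩ := hH e he
      have hn : 0 < n := by
        rcases Nat.eq_zero_or_pos n with rfl | h
        · rw [hE] at hene
          simp at hene
        · exact h
      -- split the filtered support along the intervals
      have hsplit : s.filter (fun x => x ∈ e)
          = Finset.univ.biUnion
              (fun i : Fin n => s.filter (fun x => A i ≤ x ∧ x ≤ B i)) := by
        ext x
        simp only [mem_filter, mem_biUnion, Finset.mem_univ, true_and, hE,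
          Set.mem_iUnion, Set.mem_Icc]
        tauto
      have hdisj' : (((Finset.univ : Finset (Fin n)) : Set (Fin n))).PairwiseDisjoint
          (fun i : Fin n => s.filter (fun x => A i ≤ x ∧ x ≤ B i)) := by
        intro i _ j _ hij
        have := hdisj (Set.mem_univ i) (Set.mem_univ j) hij
        simp only [Function.onFun] at this ⊢
        rw [Finset.disjoint_left]
        intro x hxi hxj
        simp only [mem_filter] at hxi hxj
        exact (Set.disjoint_left.mp this (Set.mem_Icc.mpr hxi.2)) (Set.mem_Icc.mpr hxj.2)
      have hfinsum : ∀ (f : ℝ → ℕ), Function.support f ⊆ ↑s →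
          ∑ᶠ x ∈ e, f x = ∑ x ∈ s.filter (fun x => x ∈ e), f x := by
        intro f hf
        apply finsum_mem_eq_sum_of_inter_support_eq
        ext x
        simp only [Set.mem_inter_iff, Finset.coe_filter, Set.mem_setOf_eq]
        constructor
        · rintro ⟨hxe, hxs⟩; exact ⟨⟨hf hxs, hxe⟩, hxs⟩
        · rintro ⟨⟨_, hxe⟩, hxs⟩; exact ⟨hxe, hxs⟩
      have hfinsumR : ∑ᶠ x ∈ e, g x = ∑ x ∈ s.filter (fun x => x ∈ e), g x := by
        apply finsum_mem_eq_sum_of_inter_support_eq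
        ext x
        simp only [Set.mem_inter_iff, Finset.coe_filter, Set.mem_setOf_eq]
        constructor
        · rintro ⟨hxe, hxs⟩; exact ⟨⟨hsub hxs, hxe⟩, hxs⟩
        · rintro ⟨⟨_, hxe⟩, hxs⟩; exact ⟨hxe, hxs⟩
      rw [hfinsum _ (rnd_support s g), hsplit, Finset.sum_biUnion hdisj']
      -- the fractional cover condition, split along intervals
      have hgap : (w e : ℝ)
          ≤ ∑ i : Fin n, ∑ x ∈ s.filter (fun x => A i ≤ x ∧ x ≤ B i), g x := by
        have := hcov e he
        rw [hfinsumR, hsplit, Finset.sum_biUnion hdisj'] at this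
        exact this
      -- per-interval strict lower bound
      have hinner : ∀ i : Fin n,
          (d : ℝ) * ∑ x ∈ s.filter (fun x => A i ≤ x ∧ x ≤ B i), g x - 1
            < (↑(∑ x ∈ s.filter (fun x => A i ≤ x ∧ x ≤ B i), rnd s g d x) : ℝ) := by
        intro i
        have htel := tele_le s g hg d (hab i)
        have hgapi := gap_eq s g (hab i)
        have h1 : (d : ℝ) * cumLE s g (B i) < ⌊(d : ℝ) * cumLE s g (B i)⌋₊ + 1 :=
          Nat.lt_floor_add_one _
        have h2 : (⌊(d : ℝ) * cumLT s g (A i)⌋₊ : ℝ) ≤ (d : ℝ) * cumLT s g (A i) :=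
          Nat.floor_le (mul_nonneg (Nat.cast_nonneg d) (cumLT_nonneg s g hg _))
        have hcast : (↑(∑ x ∈ s.filter (fun x => A i ≤ x ∧ x ≤ B i), rnd s g d x) : ℝ)
            + (⌊(d : ℝ) * cumLT s g (A i)⌋₊ : ℝ)
            = (⌊(d : ℝ) * cumLE s g (B i)⌋₊ : ℝ) := by
          exact_mod_cast congrArg (Nat.cast : ℕ → ℝ) htel
        have hgapr : cumLT s g (A i)
            + ∑ x ∈ s.filter (fun x => A i ≤ x ∧ x ≤ B i), g x = cumLE s g (B i) := hgapi
        nlinarith [hcast, hgapr, h1, h2]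
      -- combine
      by_contra hcon
      push_neg at hcon
      set SE : ℕ := ∑ i : Fin n, ∑ x ∈ s.filter (fun x => A i ≤ x ∧ x ≤ B i), rnd s g d x
        with hSE
      have hSEw : SE < w e := hcon
      have hwe1 : 1 ≤ w e := by omega
      have hSEr : (SE : ℝ) ≤ (w e : ℝ) - 1 := by
        have : (SE : ℝ) + 1 ≤ (w e : ℝ) := by exact_mod_cast hSEw
        linarith
      have hsumlt : (d : ℝ) * (∑ i : Fin n,
          ∑ x ∈ s.filter (fun x => A i ≤ x ∧ x ≤ B i), g x) - n < (SE : ℝ) := by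
        have huniv : (Finset.univ : Finset (Fin n)).Nonempty := ⟨⟨0, hn⟩, mem_univ _⟩
        have hlt := Finset.sum_lt_sum_of_nonempty huniv (fun i _ => hinner i)
        have hL : ∑ i : Fin n,
            ((d : ℝ) * ∑ x ∈ s.filter (fun x => A i ≤ x ∧ x ≤ B i), g x - 1)
            = (d : ℝ) * (∑ i : Fin n,
              ∑ x ∈ s.filter (fun x => A i ≤ x ∧ x ≤ B i), g x) - n := by
          rw [Finset.sum_sub_distrib, ← Finset.mul_sum]
          simp
        have hR : ∑ i : Fin n,
            (↑(∑ x ∈ s.filter (fun x => A i ≤ x ∧ x ≤ B i), rnd s g d x) : ℝ)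
            = (SE : ℝ) := by
          rw [hSE, Nat.cast_sum]
        rw [hL, hR] at hlt
        exact hlt
      have hnd' : (n : ℝ) ≤ (d : ℝ) := by exact_mod_cast hnd
      have hd1 : (1 : ℝ) ≤ (d : ℝ) := by exact_mod_cast hd
      have hwe1' : (1 : ℝ) ≤ (w e : ℝ) := by exact_mod_cast hwe1
      have hdwe : (d : ℝ) * (w e : ℝ) ≤ (d : ℝ) * (∑ i : Fin n,
          ∑ x ∈ s.filter (fun x => A i ≤ x ∧ x ≤ B i), g x) :=
        mul_le_mul_of_nonneg_left hgap (le_of_lt hd0)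
      nlinarith [mul_nonneg (by linarith : (0:ℝ) ≤ (d:ℝ) - 1)
        (by linarith : (0:ℝ) ≤ (w e : ℝ) - 1)]
    -- membership in the tauW set
    have hmem : (∑ᶠ x, rnd s g d x) ∈ {m | ∃ g' : ℝ → ℕ, (Function.support g').Finite ∧
        (∀ e ∈ H, w e ≤ ∑ᶠ x ∈ e, g' x) ∧ m = ∑ᶠ x, g' x} :=
      ⟨rnd s g d, Set.Finite.subset s.finite_toSet (rnd_support s g), hcover, rfl⟩
    have htau : tauW H w ≤ ∑ᶠ x, rnd s g d x := Nat.sInf_le hmem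
    have htotal : ∑ᶠ x, rnd s g d x = ⌊(d : ℝ) * ∑ x ∈ s, g x⌋₊ := by
      rw [finsum_eq_finset_sum_of_support_subset _ (rnd_support s g)]
      exact rnd_total s g hg d
    have hgt : ∑ᶠ x, g x = ∑ x ∈ s, g x :=
      finsum_eq_finset_sum_of_support_subset _ hsub
    have hts : (0 : ℝ) ≤ ∑ x ∈ s, g x := Finset.sum_nonneg fun x _ => hg x
    calc (tauW H w : ℝ) ≤ ((∑ᶠ x, rnd s g d x : ℕ) : ℝ) := by exact_mod_cast htau
      _ = (⌊(d : ℝ) * ∑ x ∈ s, g x⌋₊ : ℝ) := by rw [htotal]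
      _ ≤ (d : ℝ) * ∑ x ∈ s, g x := Nat.floor_le (mul_nonneg (le_of_lt hd0) hts)
      _ = d * ∑ᶠ x, g x := by rw [hgt]
  -- conclude via the infimum
  have hlb : (tauW H w : ℝ) / d ≤ sInf S :=
    le_csInf hSne fun t ht => by
      rw [div_le_iff₀ hd0]
      calc (tauW H w : ℝ) ≤ d * t := key t ht
        _ = t * d := mul_comm _ _
  have : (tauW H w : ℝ) ≤ sInf S * d := (div_le_iff₀ hd0).mp hlb
  calc (tauW H w : ℝ) ≤ sInf S * d := this
    _ = d * tauStarW H w := by rw [mul_comm]; rfl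
end

section
/- Let d ≥ 1, let H be a finite hypergraph of d-intervals, and let w : E(H) → ℕ be a weight system on the edges of H. Then τ_w(H) ≤ 2d²·ν_w(H). -/
open Set Finset

open scoped Classical

section Farkas

variable {V : Type*} [NormedAddCommGroup V] [NormedSpace ℝ V] [FiniteDimensional ℝ V]
variable {ι : Type*} [Fintype ι]

/-- The cone generated by a finite family of vectors. -/
def coneOf (v : ι → V) : Set V :=
  {x | ∃ μ : ι → ℝ, (∀ i, 0 ≤ μ i) ∧ ∑ i, μ i • v i = x}

/-- The cone generated by a sub-family. -/
def coneS (v : ι → V) (S : Finset ι) : Set V :=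
  {x | ∃ μ : ι → ℝ, (∀ i, 0 ≤ μ i) ∧ (∀ i ∉ S, μ i = 0) ∧ ∑ i, μ i • v i = x}

lemma coneS_subset_coneOf (v : ι → V) (S : Finset ι) : coneS v S ⊆ coneOf v :=
  fun x ⟨μ, h0, _, hs⟩ => ⟨μ, h0, hs⟩

lemma caratheodory_cone (v : ι → V) {x : V} (hx : x ∈ coneOf v) :
    ∃ S : Finset ι, LinearIndependent ℝ (fun i : S => v i) ∧ x ∈ coneS v S := by
  classical
  obtain ⟨μ, h0, hs⟩ := hx
  have key : ∀ S : Finset ι, ∀ μ : ι → ℝ, (∀ i, 0 ≤ μ i) → (∀ i ∉ S, μ i = 0) →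
      ∑ i, μ i • v i = x →
      ∃ S' : Finset ι, LinearIndependent ℝ (fun i : S' => v i) ∧ x ∈ coneS v S' := by
    intro S
    induction S using Finset.strongInductionOn with
    | _ S ih =>
      intro μ h0 hzero hsum
      by_cases hli : LinearIndependent ℝ (fun i : S => v i)
      · exact ⟨S, hli, μ, h0, hzero, hsum⟩
      · obtain ⟨g, hgsum, i₁, hgne⟩ := Fintype.not_linearIndependent_iff.mp hli
        -- extend g to ι, with a sign choice making some coefficient positive
        have hmain : ∀ γ : ι → ℝ, (∀ i ∉ S, γ i = 0) → (∑ i, γ i • v i = 0) →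
            (∃ i ∈ S, 0 < γ i) →
            ∃ S' : Finset ι, LinearIndependent ℝ (fun i : S' => v i) ∧ x ∈ coneS v S' := by
          intro γ hγz hγsum ⟨j, hjS, hjpos⟩
          set Sp := S.filter (fun i => 0 < γ i) with hSp
          have hSpne : Sp.Nonempty := ⟨j, Finset.mem_filter.2 ⟨hjS, hjpos⟩⟩
          obtain ⟨i₀, hi₀, hmin⟩ := Sp.exists_min_image (fun i => μ i / γ i) hSpne
          have hi₀S : i₀ ∈ S := (Finset.mem_filter.1 hi₀).1
          have hi₀pos : 0 < γ i₀ := (Finset.mem_filter.1 hi₀).2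
          set t := μ i₀ / γ i₀ with ht
          have htnn : 0 ≤ t := div_nonneg (h0 i₀) hi₀pos.le
          set μ' : ι → ℝ := fun i => μ i - t * γ i with hμ'
          have hμ'0 : ∀ i, 0 ≤ μ' i := by
            intro i
            by_cases hiS : i ∈ S
            · by_cases hpos : 0 < γ i
              · have := hmin i (Finset.mem_filter.2 ⟨hiS, hpos⟩)
                have : t * γ i ≤ μ i := by
                  rw [div_le_div_iff₀ hi₀pos hpos] at this
                  calc t * γ i = μ i₀ / γ i₀ * γ i := rfl
                    _ ≤ μ i := by
                      rw [div_mul_eq_mul_div, div_le_iff₀ hi₀pos]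
                      linarith [this]
                simp [hμ', sub_nonneg, this]
              · have : 0 ≤ -(t * γ i) := by
                  have : γ i ≤ 0 := not_lt.1 hpos
                  nlinarith
                have := h0 i
                simp only [hμ']
                linarith
            · simp [hμ', hzero i hiS, hγz i hiS]
          have hμ'z : ∀ i ∉ S.erase i₀, μ' i = 0 := by
            intro i hi
            by_cases hiS : i ∈ S
            · have : i = i₀ := by
                by_contra hne
                exact hi (Finset.mem_erase.2 ⟨hne, hiS⟩)
              subst this
              simp [hμ', ht]
              field_simp
              simp
            · simp [hμ', hzero i hiS, hγz i hiS]
          have hμ'sum : ∑ i, μ' i • v i = x := by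
            have : ∑ i, μ' i • v i = ∑ i, μ i • v i - t • ∑ i, γ i • v i := by
              rw [Finset.smul_sum, ← Finset.sum_sub_distrib]
              congr 1; ext i
              simp [hμ', sub_smul, smul_smul]
            rw [this, hγsum, smul_zero, sub_zero, hsum]
          exact ih (S.erase i₀) (Finset.erase_ssubset hi₀S) μ' hμ'0 hμ'z hμ'sum
        -- build γ from g
        set γ : ι → ℝ := fun i => if h : i ∈ S then g ⟨i, h⟩ else 0 with hγ
        have hγz : ∀ i ∉ S, γ i = 0 := fun i hi => by simp [hγ, hi]
        have hγsum : ∑ i, γ i • v i = 0 := by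
          rw [← Finset.sum_subset (Finset.subset_univ S)
            (by intro i _ hi; simp [hγz i hi])]
          rw [← Finset.sum_attach S (fun i => γ i • v i)]
          simpa [hγ] using hgsum
        by_cases hpos : ∃ i ∈ S, 0 < γ i
        · exact hmain γ hγz hγsum hpos
        · have hneg : ∃ i ∈ S, 0 < -γ i := by
            refine ⟨i₁, i₁.2, ?_⟩
            have h1 : γ i₁ ≠ 0 := by simpa [hγ, i₁.2] using hgne
            have h2 : ¬(0 < γ (i₁ : ι)) := fun h => hpos ⟨i₁, i₁.2, h⟩
            push_neg at h2
            rcases lt_or_eq_of_le h2 with h | h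
            · linarith
            · exact absurd h h1
          refine hmain (-γ) (fun i hi => by simp [hγz i hi]) ?_ hneg
          · simp [neg_smul, Finset.sum_neg_distrib, hγsum]
  exact key Finset.univ μ h0 (fun i hi => absurd (Finset.mem_univ i) hi) hs

end Farkas

section Farkas2

set_option linter.unusedSectionVars false

variable {V : Type*} [NormedAddCommGroup V] [NormedSpace ℝ V] [FiniteDimensional ℝ V]
variable {ι : Type*} [Fintype ι]

lemma isClosed_coneS (v : ι → V) (S : Finset ι)
    (hli : LinearIndependent ℝ (fun i : S => v i)) : IsClosed (coneS v S) := by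
  classical
  set T : (S → ℝ) →ₗ[ℝ] V := Fintype.linearCombination ℝ (fun i : S => v i) with hT
  have hTinj : Function.Injective T := by
    rw [← LinearMap.ker_eq_bot, LinearMap.ker_eq_bot']
    intro m hm
    have := Fintype.linearIndependent_iff.mp hli m (by
      simpa [hT, Fintype.linearCombination_apply] using hm)
    funext i; exact this i
  have hemb := LinearMap.isClosedEmbedding_of_injective (f := T) (LinearMap.ker_eq_bot.mpr hTinj)
  have himg : coneS v S = T '' {μ : S → ℝ | ∀ i, 0 ≤ μ i} := by
    ext x
    constructor
    · rintro ⟨μ, h0, hz, hsum⟩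
      refine ⟨fun i => μ i, fun i => h0 i, ?_⟩
      simp only [hT, Fintype.linearCombination_apply]
      rw [Finset.sum_coe_sort S (fun i => μ i • v i), ← hsum]
      exact Finset.sum_subset (Finset.subset_univ S) (fun i _ hi => by simp [hz i hi])
    · rintro ⟨μ, h0, rfl⟩
      refine ⟨fun i => if h : i ∈ S then μ ⟨i, h⟩ else 0, ?_, ?_, ?_⟩
      · intro i
        by_cases h : i ∈ S
        · simpa [h] using h0 ⟨i, h⟩
        · simp [h]
      · intro i hi; simp [hi]
      · simp only [hT, Fintype.linearCombination_apply]
        rw [← Finset.sum_subset (Finset.subset_univ S)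
          (by intro i _ hi; simp [hi])]
        rw [← Finset.sum_coe_sort S (fun i => (if h : i ∈ S then μ ⟨i, h⟩ else 0) • v i)]
        exact Finset.sum_congr rfl (fun i _ => by simp [i.2])
  rw [himg]
  refine (hemb.isClosedMap _ ?_)
  have : {μ : S → ℝ | ∀ i, 0 ≤ μ i} = ⋂ i : S, {μ : S → ℝ | 0 ≤ μ i} := by
    ext μ; simp
  rw [this]
  exact isClosed_iInter fun i => isClosed_le continuous_const (continuous_apply i)

lemma isClosed_coneOf (v : ι → V) : IsClosed (coneOf v) := by
  classical
  have : coneOf v = ⋃ S ∈ {S : Finset ι | LinearIndependent ℝ (fun i : S => v i)},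
      coneS v S := by
    ext x
    simp only [Set.mem_iUnion, Set.mem_setOf_eq]
    constructor
    · intro hx
      obtain ⟨S, hS1, hS2⟩ := caratheodory_cone v hx
      exact ⟨S, hS1, hS2⟩
    · rintro ⟨S, _, hS⟩
      exact coneS_subset_coneOf v S hS
  rw [this]
  exact (Set.toFinite _).isClosed_biUnion (fun S hS => isClosed_coneS v S hS)

lemma convex_coneOf (v : ι → V) : Convex ℝ (coneOf v) := by
  rintro x ⟨μ, hμ0, hμ⟩ y ⟨ν, hν0, hν⟩ a b ha hb _
  refine ⟨fun i => a * μ i + b * ν i,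
    fun i => add_nonneg (mul_nonneg ha (hμ0 i)) (mul_nonneg hb (hν0 i)), ?_⟩
  rw [← hμ, ← hν, Finset.smul_sum, Finset.smul_sum, ← Finset.sum_add_distrib]
  congr 1; ext i
  simp [add_smul, smul_smul]

lemma zero_mem_coneOf (v : ι → V) : (0 : V) ∈ coneOf v :=
  ⟨0, fun _ => le_refl _, by simp⟩

/-- Farkas lemma: if `b` is not in the cone generated by the `v i`, there is a separating
functional. -/
theorem farkas (v : ι → V) (b : V) (hb : b ∉ coneOf v) :
    ∃ φ : V →L[ℝ] ℝ, (∀ i, 0 ≤ φ (v i)) ∧ φ b < 0 := by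
  obtain ⟨φ, u, hub, hu⟩ :=
    geometric_hahn_banach_point_closed (convex_coneOf v) (isClosed_coneOf v) hb
  have hu0 : u < 0 := by simpa using hu 0 (zero_mem_coneOf v)
  refine ⟨φ, ?_, hub.trans hu0⟩
  intro i
  by_contra hneg
  push_neg at hneg
  set t : ℝ := (u - 1) / φ (v i) with htdef
  have ht : 0 < t := div_pos_of_neg_of_neg (by linarith) hneg
  have hmem : t • v i ∈ coneOf v := by
    classical
    refine ⟨fun j => if j = i then t else 0, fun j => by by_cases h : j = i <;> simp [h, ht.le], ?_⟩
    simp [Finset.sum_ite_eq']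
  have := hu _ hmem
  rw [map_smul] at this
  simp only [smul_eq_mul] at this
  rw [htdef] at this
  rw [div_mul_cancel₀] at this
  · linarith
  · exact ne_of_lt hneg

end Farkas2


section HG

set_option linter.unusedSectionVars false

variable (d : ℕ) (E : Finset (Set ℝ)) (num : Set ℝ → ℕ) (A B : Set ℝ → ℕ → ℝ)

/-- endpoint set -/
noncomputable def epts : Finset ℝ :=
  E.biUnion (fun e => ((Finset.range (num e)).image (A e)) ∪ ((Finset.range (num e)).image (B e)))

/-- load of a fractional matching at a point -/
noncomputable def load (f : Set ℝ → ℝ) (p : ℝ) : ℝ := ∑ e ∈ E with p ∈ e, f e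

/-- fractional matching -/
def FracM (f : Set ℝ → ℝ) : Prop :=
  (∀ e, 0 ≤ f e) ∧ (∀ e ∉ E, f e = 0) ∧ ∀ p ∈ epts E num A B, load E f p ≤ 1

/-- endpoint-counting between two edges -/
noncomputable def Ncnt (e e' : Set ℝ) : ℕ :=
  ((Finset.range (num e)).filter (fun i => A e i ∈ e')).card +
  ((Finset.range (num e)).filter (fun i => B e i ∈ e')).card

variable
  (hnum : ∀ e ∈ E, num e ≤ d)
  (hab : ∀ e ∈ E, ∀ i < num e, A e i ≤ B e i)
  (heq : ∀ e ∈ E, e = ⋃ i ∈ Finset.range (num e), Icc (A e i) (B e i))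

section withhyp
include hab heq

lemma comp_subset {e : Set ℝ} (he : e ∈ E) {i : ℕ} (hi : i < num e) :
    Icc (A e i) (B e i) ⊆ e := by
  intro x hx
  rw [heq e he]
  exact Set.mem_iUnion₂.mpr ⟨i, Finset.mem_range.mpr hi, hx⟩

lemma mem_comp {e : Set ℝ} (he : e ∈ E) {x : ℝ} (hx : x ∈ e) :
    ∃ i < num e, x ∈ Icc (A e i) (B e i) := by
  rw [heq e he] at hx
  obtain ⟨i, hi, hxi⟩ := Set.mem_iUnion₂.mp hx
  exact ⟨i, Finset.mem_range.mp hi, hxi⟩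

lemma key1 {e e' : Set ℝ} (he : e ∈ E) (he' : e' ∈ E) (hx : (e ∩ e').Nonempty) :
    2 ≤ Ncnt num A B e e' + Ncnt num A B e' e := by
  obtain ⟨x, hxe, hxe'⟩ := hx
  obtain ⟨i, hi, hxi⟩ := mem_comp E num A B hab heq he hxe
  obtain ⟨j, hj, hxj⟩ := mem_comp E num A B hab heq he' hxe'
  obtain ⟨hux, hxv⟩ := hxi
  obtain ⟨hsx, hxt⟩ := hxj
  have hsub : Icc (A e' j) (B e' j) ⊆ e' := comp_subset E num A B hab heq he' hj
  have hsub' : Icc (A e i) (B e i) ⊆ e := comp_subset E num A B hab heq he hi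
  have hcard : ∀ (g : Set ℝ) (n : ℕ) (C : ℕ → ℝ) (k : ℕ), k < n → C k ∈ g →
      1 ≤ ((Finset.range n).filter (fun i => C i ∈ g)).card := by
    intro g n C k hk hkg
    refine Finset.card_pos.mpr ⟨k, Finset.mem_filter.mpr ⟨Finset.mem_range.mpr hk, hkg⟩⟩
  unfold Ncnt
  by_cases h1 : A e' j ≤ A e i
  · by_cases h2 : B e i ≤ B e' j
    · -- both endpoints of comp i inside comp j
      have hA : A e i ∈ e' := hsub ⟨h1, by linarith⟩
      have hB : B e i ∈ e' := hsub ⟨by linarith, h2⟩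
      have c1 := hcard e' (num e) (A e) i hi hA
      have c2 := hcard e' (num e) (B e) i hi hB
      omega
    · have hA : A e i ∈ e' := hsub ⟨h1, by linarith⟩
      have hB' : B e' j ∈ e := hsub' ⟨by linarith, by linarith⟩
      have c1 := hcard e' (num e) (A e) i hi hA
      have c2 := hcard e (num e') (B e') j hj hB'
      omega
  · by_cases h2 : B e i ≤ B e' j
    · have hB : B e i ∈ e' := hsub ⟨by linarith, h2⟩
      have hA' : A e' j ∈ e := hsub' ⟨by linarith, by linarith⟩
      have c1 := hcard e' (num e) (B e) i hi hB
      have c2 := hcard e (num e') (A e') j hj hA'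
      omega
    · have hA' : A e' j ∈ e := hsub' ⟨by linarith, by linarith⟩
      have hB' : B e' j ∈ e := hsub' ⟨by linarith, by linarith⟩
      have c1 := hcard e (num e') (A e') j hj hA'
      have c2 := hcard e (num e') (B e') j hj hB'
      omega

end withhyp

lemma ept_A_mem {e : Set ℝ} (he : e ∈ E) {i : ℕ} (hi : i < num e) :
    A e i ∈ epts E num A B :=
  Finset.mem_biUnion.mpr ⟨e, he, Finset.mem_union_left _
    (Finset.mem_image.mpr ⟨i, Finset.mem_range.mpr hi, rfl⟩)⟩

lemma ept_B_mem {e : Set ℝ} (he : e ∈ E) {i : ℕ} (hi : i < num e) :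
    B e i ∈ epts E num A B :=
  Finset.mem_biUnion.mpr ⟨e, he, Finset.mem_union_right _
    (Finset.mem_image.mpr ⟨i, Finset.mem_range.mpr hi, rfl⟩)⟩

lemma key2 (hnum : ∀ e ∈ E, num e ≤ d) (f : Set ℝ → ℝ) (hf : FracM E num A B f)
    {e : Set ℝ} (he : e ∈ E) :
    ∑ e' ∈ E, f e' * (Ncnt num A B e e' : ℝ) ≤ 2 * d := by
  obtain ⟨hf0, hfE, hfl⟩ := hf
  have hrw : ∀ e' : Set ℝ, f e' * (Ncnt num A B e e' : ℝ) =
      (∑ i ∈ Finset.range (num e), if A e i ∈ e' then f e' else 0) +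
      (∑ i ∈ Finset.range (num e), if B e i ∈ e' then f e' else 0) := by
    intro e'
    unfold Ncnt
    push_cast
    rw [mul_add]
    congr 1 <;> rw [Finset.card_filter] <;> push_cast <;> rw [Finset.mul_sum] <;>
      exact Finset.sum_congr rfl (fun i _ => by split <;> simp)
  calc ∑ e' ∈ E, f e' * (Ncnt num A B e e' : ℝ)
      = (∑ e' ∈ E, ∑ i ∈ Finset.range (num e), if A e i ∈ e' then f e' else 0) +
        (∑ e' ∈ E, ∑ i ∈ Finset.range (num e), if B e i ∈ e' then f e' else 0) := by
        rw [← Finset.sum_add_distrib]; exact Finset.sum_congr rfl (fun e' _ => hrw e')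
    _ = (∑ i ∈ Finset.range (num e), load E f (A e i)) +
        (∑ i ∈ Finset.range (num e), load E f (B e i)) := by
        rw [Finset.sum_comm, Finset.sum_comm (s := E)]
        congr 1 <;> exact Finset.sum_congr rfl (fun i _ => (Finset.sum_filter _ _).symm)
    _ ≤ (∑ i ∈ Finset.range (num e), 1) + (∑ i ∈ Finset.range (num e), 1) := by
        gcongr with i hi i hi
        · exact hfl _ (ept_A_mem E num A B he (Finset.mem_range.mp hi))
        · exact hfl _ (ept_B_mem E num A B he (Finset.mem_range.mp hi))
    _ ≤ 2 * d := by
        simp only [Finset.sum_const, Finset.card_range, nsmul_eq_mul, mul_one]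
        have h2 : ((num e) : ℝ) ≤ (d : ℝ) := Nat.cast_le.mpr (hnum e he)
        linarith

lemma exists_good_edge (hnum : ∀ e ∈ E, num e ≤ d)
    (hab : ∀ e ∈ E, ∀ i < num e, A e i ≤ B e i)
    (heq : ∀ e ∈ E, e = ⋃ i ∈ Finset.range (num e), Icc (A e i) (B e i))
    (f : Set ℝ → ℝ) (hf : FracM E num A B f)
    (D : Finset (Set ℝ)) (hD : D ⊆ E) (hfD : ∀ e ∉ D, f e = 0)
    (hne : ∃ e ∈ D, 0 < f e) :
    ∃ e₀ ∈ D, 0 < f e₀ ∧ ∑ e' ∈ D with (e' ∩ e₀).Nonempty, f e' ≤ 2 * d := by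
  have hf0 := hf.1
  set S : Set ℝ → ℝ := fun e => ∑ e' ∈ D with (e' ∩ e).Nonempty, f e' with hS
  by_contra hcon
  push_neg at hcon
  have hcon' : ∀ e₀ ∈ D, 0 < f e₀ → 2 * (d:ℝ) < S e₀ := fun e₀ h1 h2 => hcon e₀ h1 h2
  have main : ∑ e ∈ D, f e * S e ≤ 2 * d * ∑ e ∈ D, f e := by
    have step1 : 2 * ∑ e ∈ D, f e * S e ≤
        ∑ e ∈ D, ∑ e' ∈ D, f e * f e' * ((Ncnt num A B e e' : ℝ) + (Ncnt num A B e' e : ℝ)) := by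
      rw [Finset.mul_sum]
      refine Finset.sum_le_sum (fun e he => ?_)
      have hSe : 2 * (f e * S e) =
          ∑ e' ∈ D, (if (e' ∩ e).Nonempty then 2 * (f e * f e') else 0) := by
        rw [hS]
        simp only
        rw [Finset.sum_filter, Finset.mul_sum, Finset.mul_sum]
        exact Finset.sum_congr rfl fun e' _ => by split <;> simp <;> ring
      rw [hSe]
      refine Finset.sum_le_sum (fun e' he' => ?_)
      by_cases hint : (e' ∩ e).Nonempty
      · simp only [hint, if_true]
        have h2 := key1 E num A B hab heq (hD he') (hD he) hint
        have h2' : (2:ℝ) ≤ (Ncnt num A B e e' : ℝ) + (Ncnt num A B e' e : ℝ) := by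
          have : ((2:ℕ):ℝ) ≤ ((Ncnt num A B e' e + Ncnt num A B e e' : ℕ) : ℝ) :=
            Nat.cast_le.mpr h2
          push_cast at this
          linarith
        have hnn : 0 ≤ f e * f e' := mul_nonneg (hf0 e) (hf0 e')
        nlinarith
      · simp only [hint, if_false]
        exact mul_nonneg (mul_nonneg (hf0 e) (hf0 e')) (by positivity)
    have step2 : ∑ e ∈ D, ∑ e' ∈ D, f e * f e' * ((Ncnt num A B e e' : ℝ) + (Ncnt num A B e' e : ℝ))
        = 2 * ∑ e ∈ D, ∑ e' ∈ D, f e * f e' * (Ncnt num A B e e' : ℝ) := by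
      have hsym : ∑ e ∈ D, ∑ e' ∈ D, f e * f e' * (Ncnt num A B e' e : ℝ)
          = ∑ e ∈ D, ∑ e' ∈ D, f e * f e' * (Ncnt num A B e e' : ℝ) := by
        rw [Finset.sum_comm]
        exact Finset.sum_congr rfl (fun e _ => Finset.sum_congr rfl (fun e' _ => by ring))
      calc ∑ e ∈ D, ∑ e' ∈ D, f e * f e' * ((Ncnt num A B e e' : ℝ) + (Ncnt num A B e' e : ℝ))
          = (∑ e ∈ D, ∑ e' ∈ D, f e * f e' * (Ncnt num A B e e' : ℝ))
            + (∑ e ∈ D, ∑ e' ∈ D, f e * f e' * (Ncnt num A B e' e : ℝ)) := by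
            rw [← Finset.sum_add_distrib]
            refine Finset.sum_congr rfl fun e _ => ?_
            rw [← Finset.sum_add_distrib]
            exact Finset.sum_congr rfl fun e' _ => by ring
        _ = _ := by rw [hsym]; ring
    have step3 : ∑ e ∈ D, ∑ e' ∈ D, f e * f e' * (Ncnt num A B e e' : ℝ)
        ≤ ∑ e ∈ D, f e * (2 * d) := by
      refine Finset.sum_le_sum fun e he => ?_
      have hinner : ∑ e' ∈ D, f e * f e' * (Ncnt num A B e e' : ℝ)
          = f e * ∑ e' ∈ D, f e' * (Ncnt num A B e e' : ℝ) := by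
        rw [Finset.mul_sum]
        exact Finset.sum_congr rfl fun e' _ => by ring
      rw [hinner]
      refine mul_le_mul_of_nonneg_left ?_ (hf0 e)
      have hext : ∑ e' ∈ D, f e' * (Ncnt num A B e e' : ℝ)
          ≤ ∑ e' ∈ E, f e' * (Ncnt num A B e e' : ℝ) :=
        Finset.sum_le_sum_of_subset_of_nonneg hD (fun e' _ _ => mul_nonneg (hf0 e') (by positivity))
      exact hext.trans (key2 d E num A B hnum f hf (hD he))
    have : ∑ e ∈ D, f e * (2 * d) = 2 * d * ∑ e ∈ D, f e := by
      rw [Finset.mul_sum]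
      exact Finset.sum_congr rfl fun e _ => by ring
    linarith
  obtain ⟨es, hes, hfs⟩ := hne
  have hstrict : 2 * (d:ℝ) * ∑ e ∈ D, f e < ∑ e ∈ D, f e * S e := by
    have h1 : ∑ e ∈ D, 2 * (d:ℝ) * f e < ∑ e ∈ D, f e * S e := by
      refine Finset.sum_lt_sum (fun e he => ?_) ⟨es, hes, ?_⟩
      · rcases eq_or_lt_of_le (hf0 e) with h | h
        · rw [← h]; simp
        · have := (hcon' e he h).le
          calc 2 * (d:ℝ) * f e = f e * (2 * d) := by ring
            _ ≤ f e * S e := mul_le_mul_of_nonneg_left this h.le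
      · calc 2 * (d:ℝ) * f es = f es * (2 * d) := by ring
          _ < f es * S es := by
            exact mul_lt_mul_of_pos_left (hcon' es hes hfs) hfs
    calc 2 * (d:ℝ) * ∑ e ∈ D, f e = ∑ e ∈ D, 2 * (d:ℝ) * f e := by rw [Finset.mul_sum]
      _ < _ := h1
  linarith

noncomputable def nuF (E : Finset (Set ℝ)) (w : Set ℝ → ℕ) : ℕ :=
  (E.powerset.filter (fun M : Finset (Set ℝ) => (M : Set (Set ℝ)).PairwiseDisjoint id)).sup
    (fun M => ∑ e ∈ M, w e)

lemma matching_le_nuF {w : Set ℝ → ℕ} {M : Finset (Set ℝ)} (hME : M ⊆ E)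
    (hM : (M : Set (Set ℝ)).PairwiseDisjoint id) : ∑ e ∈ M, w e ≤ nuF E w := by
  unfold nuF
  exact Finset.le_sup (f := fun M : Finset (Set ℝ) => ∑ e ∈ M, w e)
    (Finset.mem_filter.mpr ⟨Finset.mem_powerset.mpr hME, hM⟩)

lemma nuF_exists (w : Set ℝ → ℕ) :
    ∃ M : Finset (Set ℝ), M ⊆ E ∧ (M : Set (Set ℝ)).PairwiseDisjoint id ∧ nuF E w = ∑ e ∈ M, w e := by
  have hne : (E.powerset.filter (fun M : Finset (Set ℝ) => (M : Set (Set ℝ)).PairwiseDisjoint id)).Nonempty :=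
    ⟨∅, Finset.mem_filter.mpr ⟨Finset.mem_powerset.mpr (Finset.empty_subset E), by simp⟩⟩
  obtain ⟨M, hM, hEq⟩ := Finset.exists_mem_eq_sup _ hne (fun M => ∑ e ∈ M, w e)
  obtain ⟨h1, h2⟩ := Finset.mem_filter.mp hM
  exact ⟨M, Finset.mem_powerset.mp h1, h2, hEq⟩

lemma frac_le (hnum : ∀ e ∈ E, num e ≤ d)
    (hab : ∀ e ∈ E, ∀ i < num e, A e i ≤ B e i)
    (heq : ∀ e ∈ E, e = ⋃ i ∈ Finset.range (num e), Icc (A e i) (B e i))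
    (hnon : ∀ e ∈ E, e.Nonempty) :
    ∀ (n : ℕ) (w : Set ℝ → ℕ), (∑ e ∈ E, w e = n) →
    ∀ f, FracM E num A B f → ∑ e ∈ E, (w e : ℝ) * f e ≤ 2 * d * (nuF E w : ℝ) := by
  intro n
  induction n using Nat.strong_induction_on with
  | _ n ih =>
    intro w hw f hf
    set f' : Set ℝ → ℝ := fun e => if 0 < w e then f e else 0 with hf'def
    have hf'M : FracM E num A B f' := by
      refine ⟨fun e => ?_, fun e he => ?_, fun p hp => ?_⟩
      · simp only [hf'def]; split
        · exact hf.1 e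
        · exact le_refl 0
      · simp only [hf'def]; split
        · exact hf.2.1 e he
        · rfl
      · refine le_trans ?_ (hf.2.2 p hp)
        unfold load
        refine Finset.sum_le_sum fun e _ => ?_
        simp only [hf'def]; split
        · exact le_refl _
        · exact hf.1 e
    have hVeq : ∑ e ∈ E, (w e:ℝ) * f e = ∑ e ∈ E, (w e:ℝ) * f' e := by
      refine Finset.sum_congr rfl fun e _ => ?_
      simp only [hf'def]
      split
      · rfl
      · rename_i hcond
        have : w e = 0 := by omega
        simp [this]
    rw [hVeq]
    by_cases hex : ∃ e ∈ E, 0 < w e ∧ 0 < f e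
    · obtain ⟨ew, hewE, hew, hfw⟩ := hex
      set D := E.filter (fun e => 0 < w e) with hDdef
      have hfD : ∀ e ∉ D, f' e = 0 := by
        intro e he
        by_cases heE : e ∈ E
        · have : ¬ 0 < w e := fun h => he (Finset.mem_filter.mpr ⟨heE, h⟩)
          simp [hf'def, this]
        · simp only [hf'def]
          split
          · exact hf.2.1 e heE
          · rfl
      obtain ⟨e₀, he₀D, hfe₀, hSbd⟩ := exists_good_edge d E num A B hnum hab heq f' hf'M
        D (Finset.filter_subset _ _) hfD
        ⟨ew, Finset.mem_filter.mpr ⟨hewE, hew⟩, by simp [hf'def, hew, hfw]⟩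
      have he₀E : e₀ ∈ E := (Finset.mem_filter.mp he₀D).1
      have hw₀ : 0 < w e₀ := (Finset.mem_filter.mp he₀D).2
      have he₀int : (e₀ ∩ e₀).Nonempty := by
        rw [Set.inter_self]; exact hnon e₀ he₀E
      set w' : Set ℝ → ℕ := fun e => if e ∈ D ∧ (e ∩ e₀).Nonempty then w e - 1 else w e
        with hw'def
      have hmono : ∀ e, w' e ≤ w e := by
        intro e; simp only [hw'def]; split <;> omega
      have hwD : ∀ e, e ∈ D ∧ (e ∩ e₀).Nonempty → 0 < w e := fun e h =>
        (Finset.mem_filter.mp h.1).2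
      have hdec : ∑ e ∈ E, w' e < n := by
        rw [← hw]
        refine Finset.sum_lt_sum (fun e _ => hmono e) ⟨e₀, he₀E, ?_⟩
        have h1 : w' e₀ = w e₀ - 1 := by simp only [hw'def]; rw [if_pos ⟨he₀D, he₀int⟩]
        omega
      have hIH := ih _ hdec w' rfl f' hf'M
      have hDfilter : D.filter (fun e' => (e' ∩ e₀).Nonempty)
          = E.filter (fun e => e ∈ D ∧ (e ∩ e₀).Nonempty) := by
        ext e
        simp only [Finset.mem_filter, hDdef]
        tauto
      have hsplit : ∑ e ∈ E, (w e:ℝ) * f' e ≤ ∑ e ∈ E, (w' e:ℝ) * f' e +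
          ∑ e' ∈ D with (e' ∩ e₀).Nonempty, f' e' := by
        rw [hDfilter, Finset.sum_filter, ← Finset.sum_add_distrib]
        refine Finset.sum_le_sum fun e heE => ?_
        by_cases hc : e ∈ D ∧ (e ∩ e₀).Nonempty
        · rw [if_pos hc]
          have h1 : 0 < w e := hwD e hc
          have h2 : (w e : ℝ) = (w' e : ℝ) + 1 := by
            have h3 : w' e = w e - 1 := by simp only [hw'def]; rw [if_pos hc]
            rw [h3, Nat.cast_sub h1]
            push_cast; ring
          rw [h2]
          exact le_of_eq (by ring)
        · rw [if_neg hc, add_zero]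
          have h3 : w' e = w e := by simp only [hw'def]; rw [if_neg hc]
          rw [h3]
      have hnu : nuF E w' + 1 ≤ nuF E w := by
        obtain ⟨M, hME, hMdisj, hMeq⟩ := nuF_exists E w'
        rw [hMeq]
        by_cases hMint : ∃ m ∈ M, m ∈ D ∧ (m ∩ e₀).Nonempty
        · obtain ⟨m, hmM, hmc⟩ := hMint
          have hlt : ∑ e ∈ M, w' e < ∑ e ∈ M, w e := by
            refine Finset.sum_lt_sum (fun e _ => hmono e) ⟨m, hmM, ?_⟩
            have h1 : 0 < w m := hwD m hmc
            have h3 : w' m = w m - 1 := by simp only [hw'def]; rw [if_pos hmc]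
            omega
          have h2 := matching_le_nuF E (w := w) hME hMdisj
          omega
        · push_neg at hMint
          have hMw : ∀ m ∈ M, w' m = w m := by
            intro m hmM
            have hni : ¬(m ∈ D ∧ (m ∩ e₀).Nonempty) := by
              intro hc
              have h0 := hMint m hmM hc.1
              rw [h0] at hc
              exact Set.not_nonempty_empty hc.2
            simp only [hw'def]; rw [if_neg hni]
          set Mp := M.filter (fun e => 0 < w e) with hMpdef
          have he₀Mp : e₀ ∉ Mp := by
            intro h
            have hmM : e₀ ∈ M := (Finset.mem_filter.mp h).1
            have h0 := hMint e₀ hmM he₀D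
            rw [h0] at he₀int
            exact Set.not_nonempty_empty he₀int
          have hMpdisj : ((insert e₀ Mp : Finset (Set ℝ)) : Set (Set ℝ)).PairwiseDisjoint id := by
            rw [Finset.coe_insert]
            refine (hMdisj.subset ?_).insert ?_
            · intro m hm
              have hm' : m ∈ Mp := by exact_mod_cast hm
              have hm2 : m ∈ M := (Finset.mem_filter.mp hm').1
              exact_mod_cast Finset.mem_coe.mpr hm2
            · intro m hm hne
              have hm' : m ∈ Mp := by exact_mod_cast hm
              have hmM : m ∈ M := (Finset.mem_filter.mp hm').1
              have hmw : 0 < w m := (Finset.mem_filter.mp hm').2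
              have hmD : m ∈ D := Finset.mem_filter.mpr ⟨hME hmM, hmw⟩
              have h0 : m ∩ e₀ = ∅ := hMint m hmM hmD
              simp only [id]
              exact Set.disjoint_iff_inter_eq_empty.mpr (by rw [Set.inter_comm]; exact h0)
          have h3 : ∑ e ∈ insert e₀ Mp, w e ≤ nuF E w :=
            matching_le_nuF E (Finset.insert_subset he₀E
              ((Finset.filter_subset _ _).trans hME)) hMpdisj
          rw [Finset.sum_insert he₀Mp] at h3
          have h4 : ∑ e ∈ Mp, w e = ∑ e ∈ M, w e := by
            rw [hMpdef]
            refine Finset.sum_filter_of_ne fun e _ hne => ?_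
            omega
          have h5 : ∑ e ∈ M, w' e = ∑ e ∈ M, w e :=
            Finset.sum_congr rfl hMw
          omega
      calc ∑ e ∈ E, (w e:ℝ) * f' e
          ≤ ∑ e ∈ E, (w' e:ℝ) * f' e + ∑ e' ∈ D with (e' ∩ e₀).Nonempty, f' e' := hsplit
        _ ≤ 2 * d * (nuF E w' : ℝ) + 2 * d := by
            refine add_le_add hIH hSbd
        _ = 2 * d * ((nuF E w' : ℝ) + 1) := by ring
        _ ≤ 2 * d * (nuF E w : ℝ) := by
            have hcast : ((nuF E w' + 1 : ℕ) : ℝ) ≤ ((nuF E w : ℕ) : ℝ) := Nat.cast_le.mpr hnu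
            push_cast at hcast
            have hd0 : (0:ℝ) ≤ 2 * d := by positivity
            exact mul_le_mul_of_nonneg_left hcast hd0
    · push_neg at hex
      have hzero : ∑ e ∈ E, (w e:ℝ) * f' e = 0 := by
        refine Finset.sum_eq_zero fun e heE => ?_
        by_cases hwe : 0 < w e
        · have hfe : f e ≤ 0 := hex e heE hwe
          have : f e = 0 := le_antisymm hfe (hf.1 e)
          simp [hf'def, this]
        · have : w e = 0 := by omega
          simp [this]
      rw [hzero]
      positivity

end HG

section Duality

set_option linter.unusedSectionVars false
set_option maxHeartbeats 1000000

variable (d : ℕ) (E : Finset (Set ℝ)) (num : Set ℝ → ℕ) (A B : Set ℝ → ℕ → ℝ)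

lemma exists_frac_cover (w : Set ℝ → ℕ) (Bv : ℝ) (hBv : 0 ≤ Bv)
    (hub : ∀ f, FracM E num A B f → ∑ e ∈ E, (w e : ℝ) * f e ≤ Bv)
    (hPe : ∀ e ∈ E, ∃ p ∈ epts E num A B, p ∈ e) :
    ∃ c : ℝ → ℝ, (∀ p, 0 ≤ c p) ∧ (∀ p ∉ epts E num A B, c p = 0) ∧
      (∀ e ∈ E, (w e : ℝ) ≤ ∑ p ∈ epts E num A B with p ∈ e, c p) ∧
      ∑ p ∈ epts E num A B, c p ≤ Bv := by
  classical
  set P : Finset ℝ := epts E num A B with hPdef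
  set v : (↥P ⊕ (↥E ⊕ Unit)) → ((↥E → ℝ) × ℝ) := fun i =>
    match i with
    | .inl p => (fun e : ↥E => if (p : ℝ) ∈ (e : Set ℝ) then (1:ℝ) else 0, 1)
    | .inr (.inl e) => (fun e' : ↥E => if e' = e then (-1:ℝ) else 0, 0)
    | .inr (.inr _) => (0, 1) with hvdef
  set b : ((↥E → ℝ) × ℝ) := (fun e : ↥E => (w (e : Set ℝ) : ℝ), Bv) with hbdef
  have hbmem : b ∈ coneOf v := by
    by_contra hbnot
    obtain ⟨φ, hφ, hφb⟩ := farkas v b hbnot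
    set lam : ℝ := φ (0, 1) with hlam_def
    set bas : ↥E → (↥E → ℝ) := fun e => (fun j => if e = j then (1:ℝ) else 0) with hbas
    set F : ↥E → ℝ := fun e => -φ (bas e, 0) with hFdef
    have hexp : ∀ (y : ↥E → ℝ) (t : ℝ),
        φ (y, t) = (∑ e : ↥E, y e * φ (bas e, 0)) + t * lam := by
      intro y t
      have hsplit : ((y, t) : (↥E → ℝ) × ℝ) = (y, 0) + t • (((0 : ↥E → ℝ), (1:ℝ))) := by
        apply Prod.ext <;> simp
      rw [hsplit, map_add, map_smul, smul_eq_mul]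
      have hfirst : φ ((y, (0:ℝ)) : (↥E → ℝ) × ℝ) = ∑ e : ↥E, y e * φ (bas e, 0) := by
        set ψ : (↥E → ℝ) →ₗ[ℝ] ℝ :=
          (φ.toLinearMap).comp (LinearMap.inl ℝ (↥E → ℝ) ℝ) with hψ
        have h1 : φ ((y, (0:ℝ)) : (↥E → ℝ) × ℝ) = ψ y := by simp [hψ]
        rw [h1, LinearMap.pi_apply_eq_sum_univ ψ y]
        refine Finset.sum_congr rfl fun e _ => ?_
        have h2 : ψ (fun j => if e = j then (1:ℝ) else 0) = φ (bas e, 0) := by simp [hψ, hbas]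
        rw [smul_eq_mul, h2]
      rw [hfirst, ← hlam_def]
    have hlam : 0 ≤ lam := by
      have := hφ (.inr (.inr ()))
      simpa [hvdef, hlam_def] using this
    have hF : ∀ e : ↥E, 0 ≤ F e := by
      intro e
      have h2 := hφ (.inr (.inl e))
      have h3 : v (.inr (.inl e)) = -(((bas e : ↥E → ℝ), (0:ℝ))) := by
        simp only [hvdef, hbas]
        apply Prod.ext
        · funext e'
          simp only [Prod.fst, Pi.neg_apply]
          by_cases h : e' = e
          · subst h; simp
          · have h2 : ¬(e = e') := fun hh => h hh.symm
            simp [h, h2]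
        · simp
      rw [h3, map_neg] at h2
      simpa [hFdef] using h2
    have hload : ∀ p : ↥P, (∑ e : ↥E, if (p : ℝ) ∈ (e : Set ℝ) then F e else 0) ≤ lam := by
      intro p
      have h2 := hφ (.inl p)
      rw [show v (.inl p) =
        ((fun e : ↥E => if (p : ℝ) ∈ (e : Set ℝ) then (1:ℝ) else 0, 1) :
          ((↥E → ℝ) × ℝ)) from rfl] at h2
      rw [hexp] at h2
      have h3 : ∑ e : ↥E, (if (p : ℝ) ∈ (e : Set ℝ) then (1:ℝ) else 0) * φ (bas e, 0)
          = -∑ e : ↥E, (if (p : ℝ) ∈ (e : Set ℝ) then F e else 0) := by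
        rw [← Finset.sum_neg_distrib]
        refine Finset.sum_congr rfl fun e _ => ?_
        by_cases hc : (p : ℝ) ∈ (e : Set ℝ)
        · rw [if_pos hc, if_pos hc]
          simp only [hFdef, one_mul, neg_neg]
        · rw [if_neg hc, if_neg hc]
          simp
      rw [h3] at h2
      linarith
    have hbval : Bv * lam < ∑ e : ↥E, (w (e : Set ℝ) : ℝ) * F e := by
      rw [hbdef] at hφb
      rw [hexp] at hφb
      have h3 : ∑ e : ↥E, (w (e : Set ℝ) : ℝ) * φ (bas e, 0)
          = -∑ e : ↥E, (w (e : Set ℝ) : ℝ) * F e := by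
        rw [← Finset.sum_neg_distrib]
        refine Finset.sum_congr rfl fun e _ => ?_
        simp only [hFdef]; ring
      rw [h3] at hφb
      linarith
    set fB : Set ℝ → ℝ := fun s => if h : s ∈ E then F ⟨s, h⟩ else 0 with hfBdef
    have hfB_eq : ∀ e : ↥E, fB (e : Set ℝ) = F e := by
      intro e; simp only [hfBdef]; rw [dif_pos e.2]
    have hload_transfer : ∀ p : ℝ, load E fB p
        = ∑ e : ↥E, if (p : ℝ) ∈ (e : Set ℝ) then F e else 0 := by
      intro p
      unfold load
      rw [Finset.sum_filter]
      rw [← Finset.sum_coe_sort E (fun e => if p ∈ e then fB e else 0)]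
      exact Finset.sum_congr rfl fun e _ => by rw [hfB_eq]
    rcases eq_or_lt_of_le hlam with hlam0 | hlampos
    · have hFzero : ∀ e : ↥E, F e = 0 := by
        intro e
        obtain ⟨p, hpP, hpe⟩ := hPe (e : Set ℝ) e.2
        have h4 : F e ≤ ∑ e' : ↥E, if (p : ℝ) ∈ (e' : Set ℝ) then F e' else 0 := by
          have h5 : (if (p : ℝ) ∈ ((e : Set ℝ)) then F e else 0) = F e := if_pos hpe
          rw [← h5]
          refine Finset.single_le_sum (f := fun e' : ↥E =>
            if (p : ℝ) ∈ (e' : Set ℝ) then F e' else 0) (fun e' _ => ?_) (Finset.mem_univ e)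
          show 0 ≤ if (p:ℝ) ∈ (e' : Set ℝ) then F e' else 0
          by_cases hc : (p:ℝ) ∈ (e' : Set ℝ)
          · rw [if_pos hc]; exact hF e'
          · rw [if_neg hc]
        have h6 := hload ⟨p, hpP⟩
        have h7 := hF e
        have h8 : F e ≤ lam := le_trans h4 h6
        rw [← hlam0] at h8
        linarith
      have h9 : ∑ e : ↥E, (w (e : Set ℝ) : ℝ) * F e = 0 :=
        Finset.sum_eq_zero fun e _ => by rw [hFzero e, mul_zero]
      rw [h9, ← hlam0, mul_zero] at hbval
      exact lt_irrefl 0 hbval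
    · set g : Set ℝ → ℝ := fun s => fB s / lam with hgdef
      have hgM : FracM E num A B g := by
        refine ⟨fun e => ?_, fun e he => ?_, fun p hp => ?_⟩
        · simp only [hgdef, hfBdef]
          by_cases h : e ∈ E
          · rw [dif_pos h]
            exact div_nonneg (hF _) hlam
          · rw [dif_neg h]
            simp
        · simp only [hgdef, hfBdef]
          rw [dif_neg he, zero_div]
        · have h8 : load E g p = load E fB p / lam := by
            unfold load
            rw [Finset.sum_div]
          rw [h8, hload_transfer p, div_le_one hlampos]
          exact hload ⟨p, hp⟩
      have h9 := hub g hgM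
      have h10 : ∑ e ∈ E, (w e : ℝ) * g e
          = (∑ e : ↥E, (w (e : Set ℝ) : ℝ) * F e) / lam := by
        rw [Finset.sum_div, ← Finset.sum_coe_sort E (fun e => (w e : ℝ) * g e)]
        refine Finset.sum_congr rfl fun e _ => ?_
        rw [hgdef]
        simp only
        rw [hfB_eq]
        ring
      rw [h10, div_le_iff₀ hlampos] at h9
      linarith
  -- extract the cover from the cone membership
  obtain ⟨μ, hμ0, hμsum⟩ := hbmem
  have key : ∀ (L : ((↥E → ℝ) × ℝ) →ₗ[ℝ] ℝ),
      L b = (∑ p : ↥P, μ (.inl p) * L (v (.inl p)))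
        + ((∑ e' : ↥E, μ (.inr (.inl e')) * L (v (.inr (.inl e'))))
        + μ (.inr (.inr ())) * L (v (.inr (.inr ())))) := by
    intro L
    rw [← hμsum, map_sum, Fintype.sum_sum_type, Fintype.sum_sum_type]
    simp only [map_smul, smul_eq_mul]
    congr 1
    congr 1
    rw [Finset.sum_eq_single_of_mem () (Finset.mem_univ ())]
    intro x _ hx
    exact absurd rfl hx
  set c : ℝ → ℝ := fun x => if h : x ∈ P then μ (.inl ⟨x, h⟩) else 0 with hcdef
  have hc0 : ∀ p, 0 ≤ c p := by
    intro p
    simp only [hcdef]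
    by_cases h : p ∈ P
    · rw [dif_pos h]; exact hμ0 _
    · rw [dif_neg h]
  have hcsupp : ∀ p ∉ P, c p = 0 := by
    intro p hp; simp [hcdef, hp]
  have hsum_c : ∀ (q : ℝ → Prop) [DecidablePred q],
      ∑ p ∈ P with q p, c p = ∑ p : ↥P, (if q (p : ℝ) then μ (.inl p) else 0) := by
    intro q _
    rw [Finset.sum_filter, ← Finset.sum_coe_sort P (fun p => if q p then c p else 0)]
    refine Finset.sum_congr rfl fun p _ => ?_
    simp only [hcdef]
    rw [dif_pos p.2]
  refine ⟨c, hc0, hcsupp, ?_, ?_⟩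
  · intro e he
    set L : ((↥E → ℝ) × ℝ) →ₗ[ℝ] ℝ :=
      (LinearMap.proj (⟨e, he⟩ : ↥E)).comp (LinearMap.fst ℝ (↥E → ℝ) ℝ) with hLdef
    have h1 := key L
    have hLb : L b = (w e : ℝ) := by simp [hLdef, hbdef]
    have hLp : ∀ p : ↥P, L (v (.inl p)) = (if (p : ℝ) ∈ e then (1:ℝ) else 0) := by
      intro p; simp [hLdef, hvdef]
    have hLe : ∀ e' : ↥E, L (v (.inr (.inl e')))
        = (if (⟨e, he⟩ : ↥E) = e' then (-1:ℝ) else 0) := by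
      intro e'
      simp only [hLdef, hvdef]
      rfl
    have hLu : L (v (.inr (.inr ()))) = 0 := by simp [hLdef, hvdef]
    rw [hLb, hLu, mul_zero, add_zero] at h1
    rw [Finset.sum_congr rfl (fun p _ => by rw [hLp p])] at h1
    have h2 : ∑ e' : ↥E, μ (.inr (.inl e')) * L (v (.inr (.inl e')))
        = -μ (.inr (.inl ⟨e, he⟩)) := by
      rw [Finset.sum_congr rfl (fun e' _ => by rw [hLe e'])]
      rw [Finset.sum_congr rfl (fun e' _ => by
        show μ (.inr (.inl e')) * (if (⟨e, he⟩ : ↥E) = e' then (-1:ℝ) else 0)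
          = (if (⟨e, he⟩ : ↥E) = e' then -μ (.inr (.inl e')) else 0)
        split <;> ring)]
      rw [Finset.sum_ite_eq (Finset.univ : Finset ↥E) (⟨e, he⟩ : ↥E)
        (fun e' => -μ (.inr (.inl e')))]
      simp
    rw [h2] at h1
    rw [hsum_c (fun p => p ∈ e)]
    have h3 : ∑ p : ↥P, (if (p:ℝ) ∈ e then μ (.inl p) else 0)
        = ∑ p : ↥P, μ (.inl p) * (if (p : ℝ) ∈ e then (1:ℝ) else 0) := by
      refine Finset.sum_congr rfl fun p _ => ?_
      split <;> ring
    rw [h3]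
    have h4 := hμ0 (.inr (.inl (⟨e, he⟩ : ↥E)))
    linarith
  · set L : ((↥E → ℝ) × ℝ) →ₗ[ℝ] ℝ := LinearMap.snd ℝ (↥E → ℝ) ℝ with hLdef
    have h1 := key L
    have hLb : L b = Bv := by simp [hLdef, hbdef]
    have hLp : ∀ p : ↥P, L (v (.inl p)) = 1 := by
      intro p; simp [hLdef, hvdef]
    have hLe : ∀ e' : ↥E, L (v (.inr (.inl e'))) = 0 := by
      intro e'; simp [hLdef, hvdef]
    have hLu : L (v (.inr (.inr ()))) = 1 := by simp [hLdef, hvdef]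
    rw [hLb, hLu, mul_one] at h1
    rw [Finset.sum_congr rfl (fun (p : ↥P) _ => by rw [hLp p, mul_one])] at h1
    rw [Finset.sum_congr rfl (fun (e' : ↥E) _ => by rw [hLe e', mul_zero])] at h1
    rw [Finset.sum_const, smul_zero, zero_add] at h1
    have h5 : ∑ p ∈ P, c p = ∑ p : ↥P, μ (.inl p) := by
      have := hsum_c (fun _ => True)
      simp only [if_true] at this
      simpa using this
    rw [h5]
    have h4 := hμ0 (.inr (.inr ()))
    linarith

end Duality

section Koenig

set_option linter.unusedSectionVars false

noncomputable def nuI (K : Finset (ℝ × ℝ)) (u : ℝ × ℝ → ℕ) : ℕ :=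
  (K.powerset.filter (fun M : Finset (ℝ × ℝ) =>
    (M : Set (ℝ × ℝ)).PairwiseDisjoint (fun C => Set.Icc C.1 C.2))).sup
    (fun M => ∑ C ∈ M, u C)

lemma matching_le_nuI {K : Finset (ℝ × ℝ)} {u : ℝ × ℝ → ℕ} {M : Finset (ℝ × ℝ)}
    (hMK : M ⊆ K)
    (hM : (M : Set (ℝ × ℝ)).PairwiseDisjoint (fun C => Set.Icc C.1 C.2)) :
    ∑ C ∈ M, u C ≤ nuI K u := by
  unfold nuI
  exact Finset.le_sup (f := fun M : Finset (ℝ × ℝ) => ∑ C ∈ M, u C)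
    (Finset.mem_filter.mpr ⟨Finset.mem_powerset.mpr hMK, hM⟩)

lemma nuI_exists (K : Finset (ℝ × ℝ)) (u : ℝ × ℝ → ℕ) :
    ∃ M : Finset (ℝ × ℝ), M ⊆ K ∧
      (M : Set (ℝ × ℝ)).PairwiseDisjoint (fun C => Set.Icc C.1 C.2) ∧
      nuI K u = ∑ C ∈ M, u C := by
  have hne : (K.powerset.filter (fun M : Finset (ℝ × ℝ) =>
      (M : Set (ℝ × ℝ)).PairwiseDisjoint (fun C => Set.Icc C.1 C.2))).Nonempty :=
    ⟨∅, Finset.mem_filter.mpr ⟨Finset.mem_powerset.mpr (Finset.empty_subset K), by simp⟩⟩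
  obtain ⟨M, hM, hEq⟩ := Finset.exists_mem_eq_sup _ hne (fun M : Finset (ℝ × ℝ) => ∑ C ∈ M, u C)
  obtain ⟨h1, h2⟩ := Finset.mem_filter.mp hM
  exact ⟨M, Finset.mem_powerset.mp h1, h2, hEq⟩

lemma koenig : ∀ (n : ℕ) (K : Finset (ℝ × ℝ)) (u : ℝ × ℝ → ℕ),
    (∑ C ∈ K, u C = n) → (∀ C ∈ K, C.1 ≤ C.2) →
    ∃ (T : Finset ℝ) (g : ℝ → ℕ), (∀ x ∉ T, g x = 0) ∧
      (∀ C ∈ K, u C ≤ ∑ x ∈ T with x ∈ Set.Icc C.1 C.2, g x) ∧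
      ∑ x ∈ T, g x ≤ nuI K u := by
  intro n
  induction n using Nat.strong_induction_on with
  | _ n ih =>
    intro K u hn hab
    by_cases hzero : ∀ C ∈ K, u C = 0
    · exact ⟨∅, fun _ => 0, fun x _ => rfl, fun C hC => by simp [hzero C hC],
        by simp⟩
    · push_neg at hzero
      obtain ⟨C₁, hC₁K, hC₁u⟩ := hzero
      set Kp := K.filter (fun C => 0 < u C) with hKp
      have hKpne : Kp.Nonempty := ⟨C₁, Finset.mem_filter.mpr ⟨hC₁K, Nat.pos_of_ne_zero hC₁u⟩⟩
      set img := Kp.image Prod.snd with himg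
      have himgne : img.Nonempty := hKpne.image _
      set bstar := img.min' himgne with hbstar
      have hbmem : bstar ∈ img := img.min'_mem himgne
      obtain ⟨Cs, hCsKp, hCs2⟩ := Finset.mem_image.mp hbmem
      have hCsK : Cs ∈ K := (Finset.mem_filter.mp hCsKp).1
      have hCsu : 0 < u Cs := (Finset.mem_filter.mp hCsKp).2
      have hble : ∀ C ∈ Kp, bstar ≤ C.2 := fun C hC =>
        img.min'_le _ (Finset.mem_image_of_mem _ hC)
      set cond : ℝ × ℝ → Prop := fun C => C ∈ Kp ∧ C.1 ≤ bstar ∧ bstar ≤ C.2 with hcond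
      have hcondCs : cond Cs := by
        refine ⟨hCsKp, ?_, by rw [← hCs2]⟩
        rw [← hCs2]
        exact hab Cs hCsK
      set u' : ℝ × ℝ → ℕ := fun C => if cond C then u C - 1 else u C with hu'
      have hu'le : ∀ C, u' C ≤ u C := fun C => by
        simp only [hu']; split <;> omega
      have hu'lt : ∑ C ∈ K, u' C < n := by
        rw [← hn]
        refine Finset.sum_lt_sum (fun C _ => hu'le C) ⟨Cs, hCsK, ?_⟩
        have h1 : u' Cs = u Cs - 1 := by simp only [hu']; rw [if_pos hcondCs]
        omega
      obtain ⟨T', g', hg'0, hg'cov, hg'tot⟩ := ih _ hu'lt K u' rfl hab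
      set T := insert bstar T' with hT
      set g : ℝ → ℕ := fun x => if x = bstar then g' x + 1 else g' x with hg
      have hgg' : ∀ x, g x = g' x + (if x = bstar then 1 else 0) := by
        intro x; simp only [hg]; split <;> omega
      have hg0 : ∀ x ∉ T, g x = 0 := by
        intro x hx
        have h1 : x ≠ bstar := fun h => hx (h ▸ Finset.mem_insert_self _ _)
        have h2 : x ∉ T' := fun h => hx (Finset.mem_insert_of_mem h)
        simp only [hg]
        rw [if_neg h1]
        exact hg'0 x h2
      have hsumT : ∀ (S : Finset ℝ), bstar ∈ S → ∑ x ∈ S, g x = ∑ x ∈ S, g' x + 1 := by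
        intro S hbS
        rw [Finset.sum_congr rfl (fun x _ => hgg' x), Finset.sum_add_distrib]
        congr 1
        rw [Finset.sum_ite_eq' S bstar (fun _ => 1)]
        rw [if_pos hbS]
      have hnu : nuI K u' + 1 ≤ nuI K u := by
        obtain ⟨M, hMK, hMdisj, hMeq⟩ := nuI_exists K u'
        rw [hMeq]
        by_cases hMint : ∃ CC ∈ M, cond CC
        · obtain ⟨CC, hCCM, hCCc⟩ := hMint
          have hlt : ∑ C ∈ M, u' C < ∑ C ∈ M, u C := by
            refine Finset.sum_lt_sum (fun C _ => hu'le C) ⟨CC, hCCM, ?_⟩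
            have h1 : 0 < u CC := (Finset.mem_filter.mp hCCc.1).2
            have h2 : u' CC = u CC - 1 := by simp only [hu']; rw [if_pos hCCc]
            omega
          have h2 := matching_le_nuI (u := u) hMK hMdisj
          omega
        · push_neg at hMint
          have hMw : ∀ C ∈ M, u' C = u C := by
            intro C hCM
            simp only [hu']
            rw [if_neg (hMint C hCM)]
          set Mp := M.filter (fun C => 0 < u C) with hMp
          have hCsMp : Cs ∉ Mp := by
            intro h
            exact (hMint Cs (Finset.mem_filter.mp h).1) hcondCs
          have hdisj : ((insert Cs Mp : Finset (ℝ × ℝ)) : Set (ℝ × ℝ)).PairwiseDisjoint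
              (fun C => Set.Icc C.1 C.2) := by
            rw [Finset.coe_insert]
            refine (hMdisj.subset ?_).insert ?_
            · intro C hC
              have hC' : C ∈ Mp := by exact_mod_cast hC
              exact_mod_cast Finset.mem_coe.mpr ((Finset.mem_filter.mp hC').1)
            · intro C hC hne
              have hC' : C ∈ Mp := by exact_mod_cast hC
              have hCM : C ∈ M := (Finset.mem_filter.mp hC').1
              have hCu : 0 < u C := (Finset.mem_filter.mp hC').2
              have hCKp : C ∈ Kp := Finset.mem_filter.mpr ⟨hMK hCM, hCu⟩
              rw [Set.disjoint_left]
              intro x hx1 hx2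
              refine (hMint C hCM) ⟨hCKp, ?_, hble C hCKp⟩
              have hxb : x ≤ bstar := by
                have := hx1.2
                rw [hCs2] at this
                exact this
              exact le_trans hx2.1 hxb
          have h3 : ∑ C ∈ insert Cs Mp, u C ≤ nuI K u :=
            matching_le_nuI (Finset.insert_subset hCsK
              ((Finset.filter_subset _ _).trans hMK)) hdisj
          rw [Finset.sum_insert hCsMp] at h3
          have h4 : ∑ C ∈ Mp, u C = ∑ C ∈ M, u C := by
            rw [hMp]
            refine Finset.sum_filter_of_ne fun C _ hne => ?_
            omega
          have h5 : ∑ C ∈ M, u' C = ∑ C ∈ M, u C := Finset.sum_congr rfl hMw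
          omega
      refine ⟨T, g, hg0, ?_, ?_⟩
      · intro C hCK
        by_cases hc : cond C
        · have h1 : 0 < u C := (Finset.mem_filter.mp hc.1).2
          have h2 : u' C = u C - 1 := by simp only [hu']; rw [if_pos hc]
          have hbfil : bstar ∈ T.filter (fun x => x ∈ Set.Icc C.1 C.2) :=
            Finset.mem_filter.mpr ⟨Finset.mem_insert_self _ _, Set.mem_Icc.mpr ⟨hc.2.1, hc.2.2⟩⟩
          have h3 : ∑ x ∈ T with x ∈ Set.Icc C.1 C.2, g x
              = ∑ x ∈ T with x ∈ Set.Icc C.1 C.2, g' x + 1 := by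
            refine hsumT _ ?_
            exact hbfil
          rw [h3]
          have h4 : ∑ x ∈ T' with x ∈ Set.Icc C.1 C.2, g' x
              ≤ ∑ x ∈ T with x ∈ Set.Icc C.1 C.2, g' x := by
            refine Finset.sum_le_sum_of_subset ?_
            exact Finset.filter_subset_filter _ (Finset.subset_insert _ _)
          have h5 := hg'cov C hCK
          omega
        · have h2 : u' C = u C := by simp only [hu']; rw [if_neg hc]
          have h5 := hg'cov C hCK
          rw [h2] at h5
          have h6 : ∑ x ∈ T' with x ∈ Set.Icc C.1 C.2, g' x
              ≤ ∑ x ∈ T with x ∈ Set.Icc C.1 C.2, g' x :=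
            Finset.sum_le_sum_of_subset
              (Finset.filter_subset_filter _ (Finset.subset_insert _ _))
          have h7 : ∑ x ∈ T with x ∈ Set.Icc C.1 C.2, g' x
              ≤ ∑ x ∈ T with x ∈ Set.Icc C.1 C.2, g x := by
            refine Finset.sum_le_sum fun x _ => ?_
            rw [hgg' x]
            omega
          omega
      · have h1 : ∑ x ∈ T, g x = ∑ x ∈ T, g' x + 1 := hsumT T (Finset.mem_insert_self _ _)
        have h2 : ∑ x ∈ T, g' x = ∑ x ∈ T', g' x := by
          by_cases hb : bstar ∈ T'
          · rw [hT, Finset.insert_eq_self.mpr hb]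
          · rw [hT, Finset.sum_insert hb, hg'0 bstar hb, zero_add]
        omega

end Koenig




/-- The weighted matching number `ν_w`: the maximum of `∑_{e ∈ M} w e` over
matchings `M` in `H`. -/
noncomputable def nuW {α : Type*} (H : Set (Set α)) (w : Set α → ℕ) : ℕ :=
  sSup {m | ∃ M : Finset (Set α), ↑M ⊆ H ∧
    (M : Set (Set α)).PairwiseDisjoint id ∧ m = ∑ e ∈ M, w e}

/-- For a finite hypergraph of `d`-intervals with a weight system `w` on its
edges, `τ_w(H) ≤ 2d²·ν_w(H)`. -/
theorem tauW_le_two_d_sq_mul_nuW (d : ℕ) (hd : 1 ≤ d)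
    (H : Set (Set ℝ)) (hfin : H.Finite)
    (hH : ∀ e ∈ H, IsDInterval d e ∧ e.Nonempty) (w : Set ℝ → ℕ) :
    tauW H w ≤ 2 * d ^ 2 * nuW H w := by
  classical
  -- Step 0: extract ℕ-indexed component data by choice
  have hHex : ∀ e : Set ℝ, ∃ (nn : ℕ) (a b : ℕ → ℝ), (e ∈ H →
      nn ≤ d ∧ (∀ i < nn, a i ≤ b i) ∧
      (∀ i < nn, ∀ j < nn, i ≠ j → Disjoint (Set.Icc (a i) (b i)) (Set.Icc (a j) (b j))) ∧
      e = ⋃ i ∈ Finset.range nn, Set.Icc (a i) (b i)) := by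
    intro e
    by_cases he : e ∈ H
    · obtain ⟨⟨n, a, b, hnd, hab, hdisj, heq⟩, hne⟩ := hH e he
      refine ⟨n, (fun i => if h : i < n then a ⟨i, h⟩ else 0),
        (fun i => if h : i < n then b ⟨i, h⟩ else 0), fun _ => ⟨hnd, ?_, ?_, ?_⟩⟩
      · intro i hi
        dsimp only
        rw [dif_pos hi, dif_pos hi]
        exact hab ⟨i, hi⟩
      · intro i hi j hj hij
        dsimp only
        rw [dif_pos hi, dif_pos hi, dif_pos hj, dif_pos hj]
        exact hdisj (Set.mem_univ ⟨i, hi⟩) (Set.mem_univ ⟨j, hj⟩)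
          (fun h => hij (congrArg Fin.val h))
      · rw [heq]
        ext x
        constructor
        · rintro ⟨s, ⟨i, rfl⟩, hx⟩
          refine Set.mem_iUnion₂.mpr ⟨(i : ℕ), Finset.mem_range.mpr i.2, ?_⟩
          dsimp only
          rw [dif_pos i.2, dif_pos i.2]
          exact hx
        · intro hx
          obtain ⟨i, hi, hx⟩ := Set.mem_iUnion₂.mp hx
          have hi' : i < n := Finset.mem_range.mp hi
          dsimp only at hx
          rw [dif_pos hi', dif_pos hi'] at hx
          exact Set.mem_iUnion.mpr ⟨⟨i, hi'⟩, hx⟩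
    · exact ⟨0, fun _ => 0, fun _ => 0, fun h => absurd h he⟩
  choose num A B hspec using hHex
  set Efull : Finset (Set ℝ) := hfin.toFinset with hEfull
  have hmemH : ∀ e ∈ Efull, e ∈ H := fun e he => hfin.mem_toFinset.mp he
  have hnum : ∀ e ∈ Efull, num e ≤ d := fun e he => (hspec e (hmemH e he)).1
  have hab : ∀ e ∈ Efull, ∀ i < num e, A e i ≤ B e i :=
    fun e he => (hspec e (hmemH e he)).2.1
  have hdisj : ∀ e ∈ Efull, ∀ i < num e, ∀ j < num e, i ≠ j →
      Disjoint (Set.Icc (A e i) (B e i)) (Set.Icc (A e j) (B e j)) :=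
    fun e he => (hspec e (hmemH e he)).2.2.1
  have heq : ∀ e ∈ Efull, e = ⋃ i ∈ Finset.range (num e), Set.Icc (A e i) (B e i) :=
    fun e he => (hspec e (hmemH e he)).2.2.2
  have hnon : ∀ e ∈ Efull, e.Nonempty := fun e he => (hH e (hmemH e he)).2
  have hnumpos : ∀ e ∈ Efull, 0 < num e := by
    intro e he
    by_contra h
    push_neg at h
    interval_cases hn : num e
    · obtain ⟨x, hx⟩ := hnon e he
      rw [heq e he] at hx
      rw [hn] at hx
      simp at hx
  set P := epts Efull num A B with hP
  -- Step 1: the matching number over Efull is at most nuW H w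
  have hbdd : BddAbove {m | ∃ M : Finset (Set ℝ), ↑M ⊆ H ∧
      (M : Set (Set ℝ)).PairwiseDisjoint id ∧ m = ∑ e ∈ M, w e} := by
    refine ⟨∑ e ∈ Efull, w e, ?_⟩
    rintro m ⟨M, hMH, _, rfl⟩
    exact Finset.sum_le_sum_of_subset (fun e he => hfin.mem_toFinset.mpr (hMH he))
  have hnule : nuF Efull w ≤ nuW H w := by
    obtain ⟨M, hME, hMdisj, hMeq⟩ := nuF_exists Efull w
    rw [hMeq]
    refine le_csSup hbdd ⟨M, fun e he => hmemH e (hME he), hMdisj, rfl⟩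
  -- Step 2: obtain the fractional cover
  set Bv : ℝ := 2 * d * (nuF Efull w : ℝ) with hBv
  have hBv0 : 0 ≤ Bv := by positivity
  have hub : ∀ f, FracM Efull num A B f →
      ∑ e ∈ Efull, (w e : ℝ) * f e ≤ Bv :=
    fun f hf => frac_le d Efull num A B hnum hab heq hnon _ w rfl f hf
  have hPe : ∀ e ∈ Efull, ∃ p ∈ P, p ∈ e := by
    intro e he
    refine ⟨A e 0, ept_A_mem Efull num A B he (hnumpos e he), ?_⟩
    exact comp_subset Efull num A B hab heq he (hnumpos e he)
      (Set.mem_Icc.mpr ⟨le_refl _, hab e he 0 (hnumpos e he)⟩)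
  obtain ⟨c, hc0, hcsupp, hccov, hctot⟩ :=
    exists_frac_cover Efull num A B w Bv hBv0 hub hPe
  -- Step 3: pigeonhole a component for each positive-weight edge
  set Ep := Efull.filter (fun e => 0 < w e) with hEp
  have hdpos : (0:ℝ) < d := by exact_mod_cast hd
  have hpick : ∀ e : Set ℝ, ∃ i : ℕ, (e ∈ Ep →
      (i < num e ∧ (w e : ℝ) ≤ d * ∑ p ∈ P with p ∈ Set.Icc (A e i) (B e i), c p)) := by
    intro e
    by_cases he : e ∈ Ep
    · have heE : e ∈ Efull := (Finset.mem_filter.mp he).1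
      have hwe : 0 < w e := (Finset.mem_filter.mp he).2
      have hcut : P.filter (fun p => p ∈ e)
          = (Finset.range (num e)).biUnion
            (fun i => P.filter (fun p => p ∈ Set.Icc (A e i) (B e i))) := by
        ext p
        simp only [Finset.mem_filter, Finset.mem_biUnion, Finset.mem_range]
        constructor
        · rintro ⟨hpP, hpe⟩
          obtain ⟨i, hi, hpi⟩ := mem_comp Efull num A B hab heq heE hpe
          exact ⟨i, hi, hpP, hpi⟩
        · rintro ⟨i, hi, hpP, hpi⟩
          exact ⟨hpP, comp_subset Efull num A B hab heq heE hi hpi⟩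
      have hdisjf : ∀ i ∈ (Finset.range (num e) : Finset ℕ), ∀ j ∈ Finset.range (num e),
          i ≠ j → Disjoint (P.filter (fun p => p ∈ Set.Icc (A e i) (B e i)))
            (P.filter (fun p => p ∈ Set.Icc (A e j) (B e j))) := by
        intro i hi j hj hij
        rw [Finset.disjoint_left]
        intro p hp1 hp2
        have h1 := hdisj e heE i (Finset.mem_range.mp hi) j (Finset.mem_range.mp hj) hij
        exact (Set.disjoint_left.mp h1) (Finset.mem_filter.mp hp1).2
          (Finset.mem_filter.mp hp2).2
      have hsum : ∑ p ∈ P with p ∈ e, c p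
          = ∑ i ∈ Finset.range (num e),
              ∑ p ∈ P with p ∈ Set.Icc (A e i) (B e i), c p := by
        rw [hcut, Finset.sum_biUnion hdisjf]
      have hex : ∃ i, i < num e ∧
          (w e : ℝ) ≤ d * ∑ p ∈ P with p ∈ Set.Icc (A e i) (B e i), c p := by
        by_contra hno
        push_neg at hno
        have hlt : ∑ p ∈ P with p ∈ e, c p < (w e : ℝ) := by
          rw [hsum]
          have hrne : (Finset.range (num e)).Nonempty :=
            ⟨0, Finset.mem_range.mpr (hnumpos e heE)⟩
          calc ∑ i ∈ Finset.range (num e), ∑ p ∈ P with p ∈ Set.Icc (A e i) (B e i), c p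
              < ∑ _i ∈ Finset.range (num e), ((w e : ℝ)/d) := by
                refine Finset.sum_lt_sum_of_nonempty hrne fun i hi => ?_
                have h2 := hno i (Finset.mem_range.mp hi)
                rw [lt_div_iff₀ hdpos]
                linarith
            _ = (num e : ℝ) * ((w e : ℝ)/d) := by
                rw [Finset.sum_const, Finset.card_range, nsmul_eq_mul]
            _ ≤ (d : ℝ) * ((w e : ℝ)/d) := by
                have h3 : ((num e : ℕ) : ℝ) ≤ (d : ℝ) := Nat.cast_le.mpr (hnum e heE)
                have h4 : (0:ℝ) ≤ (w e : ℝ)/d := by positivity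
                exact mul_le_mul_of_nonneg_right h3 h4
            _ = (w e : ℝ) := by field_simp
        exact absurd (hccov e heE) (not_le.mpr hlt)
      obtain ⟨i, hi1, hi2⟩ := hex
      exact ⟨i, fun _ => ⟨hi1, hi2⟩⟩
    · exact ⟨0, fun h => absurd h he⟩
  choose pick hpickspec using hpick
  set pr : Set ℝ → ℝ × ℝ := fun e => (A e (pick e), B e (pick e)) with hpr
  set K := Ep.image pr with hK
  set u : ℝ × ℝ → ℕ := fun C => (Ep.filter (fun e => pr e = C)).sup w with hu
  have hKab : ∀ C ∈ K, C.1 ≤ C.2 := by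
    intro C hC
    obtain ⟨e, heEp, rfl⟩ := Finset.mem_image.mp hC
    exact hab e ((Finset.mem_filter.mp heEp).1) _ ((hpickspec e heEp).1)
  obtain ⟨T, g, hg0, hgcov, hgtot⟩ := koenig _ K u rfl hKab
  have hupr : ∀ e ∈ Ep, w e ≤ u (pr e) := by
    intro e he
    exact Finset.le_sup (Finset.mem_filter.mpr ⟨he, rfl⟩)
  -- bound nuI K u by d * total fractional cover
  have hnuI : (nuI K u : ℝ) ≤ d * ∑ p ∈ P, c p := by
    obtain ⟨M, hMK, hMdisj, hMeq⟩ := nuI_exists K u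
    rw [hMeq]
    have hperC : ∀ C ∈ M, (u C : ℝ) ≤ d * ∑ p ∈ P with p ∈ Set.Icc C.1 C.2, c p := by
      intro C hCM
      have hCK : C ∈ K := hMK hCM
      obtain ⟨e₁, he₁, hpe₁⟩ := Finset.mem_image.mp hCK
      have hfilne : (Ep.filter (fun e => pr e = C)).Nonempty :=
        ⟨e₁, Finset.mem_filter.mpr ⟨he₁, hpe₁⟩⟩
      obtain ⟨e₂, he₂, hesup⟩ := Finset.exists_mem_eq_sup _ hfilne w
      have he₂Ep : e₂ ∈ Ep := (Finset.mem_filter.mp he₂).1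
      have hprC : pr e₂ = C := (Finset.mem_filter.mp he₂).2
      have huC : u C = w e₂ := hesup
      rw [huC, ← hprC]
      have h5 := (hpickspec e₂ he₂Ep).2
      exact h5
    have hcast : ((∑ C ∈ M, u C : ℕ) : ℝ) = ∑ C ∈ M, (u C : ℝ) := by push_cast; rfl
    rw [hcast]
    have hdf : ∀ C₁ ∈ M, ∀ C₂ ∈ M, C₁ ≠ C₂ →
        Disjoint (P.filter (fun p => p ∈ Set.Icc C₁.1 C₁.2))
          (P.filter (fun p => p ∈ Set.Icc C₂.1 C₂.2)) := by
      intro C₁ h₁ C₂ h₂ hne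
      rw [Finset.disjoint_left]
      intro p hp1 hp2
      have hdd := hMdisj (Finset.mem_coe.mpr h₁) (Finset.mem_coe.mpr h₂) hne
      exact (Set.disjoint_left.mp hdd) (Finset.mem_filter.mp hp1).2
        (Finset.mem_filter.mp hp2).2
    calc ∑ C ∈ M, (u C : ℝ)
        ≤ ∑ C ∈ M, d * ∑ p ∈ P with p ∈ Set.Icc C.1 C.2, c p :=
          Finset.sum_le_sum hperC
      _ = d * ∑ C ∈ M, ∑ p ∈ P with p ∈ Set.Icc C.1 C.2, c p := by
          rw [Finset.mul_sum]
      _ ≤ d * ∑ p ∈ P, c p := by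
          refine mul_le_mul_of_nonneg_left ?_ hdpos.le
          rw [← Finset.sum_biUnion hdf]
          refine Finset.sum_le_sum_of_subset_of_nonneg ?_ (fun p _ _ => hc0 p)
          intro p hp
          obtain ⟨C, _, hpC⟩ := Finset.mem_biUnion.mp hp
          exact (Finset.mem_filter.mp hpC).1
  -- build the integer cover for H
  have hfing : (Function.support g).Finite := by
    refine Set.Finite.subset T.finite_toSet (fun x hx => ?_)
    by_contra hxT
    exact hx (hg0 x (fun h => hxT (Finset.mem_coe.mpr h)))
  have hcovH : ∀ e ∈ H, w e ≤ ∑ᶠ x ∈ e, g x := by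
    intro e heH
    by_cases hwe : 0 < w e
    · have heE : e ∈ Efull := hfin.mem_toFinset.mpr heH
      have heEp : e ∈ Ep := Finset.mem_filter.mpr ⟨heE, hwe⟩
      have h1 : w e ≤ u (pr e) := hupr e heEp
      have h2 : u (pr e) ≤ ∑ x ∈ T with x ∈ Set.Icc (pr e).1 (pr e).2, g x :=
        hgcov (pr e) (Finset.mem_image_of_mem pr heEp)
      set t := T.filter (fun x => x ∈ e) with ht
      have h3 : ∑ᶠ x ∈ e, g x = ∑ x ∈ t, g x := by
        refine finsum_mem_eq_sum_of_inter_support_eq g ?_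
        ext x
        simp only [Set.mem_inter_iff, Function.mem_support, Finset.coe_filter,
          Set.mem_setOf_eq, ht]
        constructor
        · rintro ⟨hxe, hxs⟩
          have hxT : x ∈ T := by
            by_contra h
            exact hxs (hg0 x h)
          exact ⟨⟨hxT, hxe⟩, hxs⟩
        · rintro ⟨⟨_, hxe⟩, hxs⟩
          exact ⟨hxe, hxs⟩
      have h4 : (T.filter (fun x => x ∈ Set.Icc (pr e).1 (pr e).2)) ⊆ t := by
        intro x hx
        obtain ⟨hxT, hxI⟩ := Finset.mem_filter.mp hx
        refine Finset.mem_filter.mpr ⟨hxT, ?_⟩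
        have hIcc : Set.Icc (A e (pick e)) (B e (pick e)) ⊆ e :=
          comp_subset Efull num A B hab heq heE (hpickspec e heEp).1
        exact hIcc hxI
      rw [h3]
      exact le_trans h1 (le_trans h2 (Finset.sum_le_sum_of_subset h4))
    · have h0 : w e = 0 := by omega
      rw [h0]
      exact Nat.zero_le _
  have hgsum : ∑ᶠ x, g x = ∑ x ∈ T, g x := by
    refine finsum_eq_sum_of_support_subset g ?_
    intro x hx
    by_contra hxT
    exact hx (hg0 x (fun h => hxT (Finset.mem_coe.mpr h)))
  have htau : tauW H w ≤ ∑ x ∈ T, g x := by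
    refine Nat.sInf_le ?_
    exact ⟨g, hfing, hcovH, hgsum.symm⟩
  -- final numeric chain
  have hfinal : ((∑ x ∈ T, g x : ℕ) : ℝ) ≤ ((2 * d ^ 2 * nuW H w : ℕ) : ℝ) := by
    have s1 : ((∑ x ∈ T, g x : ℕ) : ℝ) ≤ (nuI K u : ℝ) := Nat.cast_le.mpr hgtot
    have s2 := hnuI
    have s3 : (d : ℝ) * ∑ p ∈ P, c p ≤ d * Bv := by
      refine mul_le_mul_of_nonneg_left hctot hdpos.le
    have s4 : (d:ℝ) * Bv = 2 * d^2 * (nuF Efull w : ℝ) := by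
      rw [hBv]; ring
    have s5 : (2:ℝ) * d^2 * (nuF Efull w : ℝ) ≤ 2 * d^2 * (nuW H w : ℝ) := by
      refine mul_le_mul_of_nonneg_left (Nat.cast_le.mpr hnule) (by positivity)
    calc ((∑ x ∈ T, g x : ℕ) : ℝ) ≤ (nuI K u : ℝ) := s1
      _ ≤ d * ∑ p ∈ P, c p := s2
      _ ≤ d * Bv := s3
      _ = 2 * d^2 * (nuF Efull w : ℝ) := s4
      _ ≤ 2 * d^2 * (nuW H w : ℝ) := s5
      _ = ((2 * d ^ 2 * nuW H w : ℕ) : ℝ) := by push_cast; ring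
  have hfinal' : ∑ x ∈ T, g x ≤ 2 * d ^ 2 * nuW H w := Nat.cast_le.mp hfinal
  exact le_trans htau hfinal'
end

section
/- Let d ≥ 1 and n ≥ 1 be integers, and let H be the family of all separated d-intervals e contained in the union [0,1]^{∪d} of d disjoint copies of the unit interval whose total length |e| (the sum of the lengths of its components) exceeds 1/n. Then every set of points meeting all members of H has at least nd² − d points; that is, τ(H) ≥ nd² − d. -/
open MeasureTheory

/-- A separated `d`-interval inside `d` disjoint copies of the unit interval,
modelled as a subset of `Fin d × ℝ`: on the `j`-th copy it is a (possibly
empty) closed subinterval of `[0,1]`.  `SepUnitDInterval d S e` says that `e`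
is determined by the family of components `S`. -/
def SepUnitDInterval (d : ℕ) (S : Fin d → Set ℝ) (e : Set (Fin d × ℝ)) : Prop :=
  (∀ j, S j ⊆ Set.Icc (0 : ℝ) 1) ∧
  (∀ j, S j = ∅ ∨ ∃ a b : ℝ, a ≤ b ∧ S j = Set.Icc a b) ∧
  e = {p : Fin d × ℝ | p.2 ∈ S p.1}

/-- Gap lemma: given a finite set `F` of `m` reals and small `δ > 0`, some closed
subinterval of `[0,1]` of length `1/(m+1) - 2δ` avoids `F`. -/
lemma exists_gap (F : Finset ℝ) (δ : ℝ) (hδ : 0 < δ)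
    (hδ' : 2 * δ ≤ 1 / (F.card + 1)) :
    ∃ a b : ℝ, a ≤ b ∧ Set.Icc a b ⊆ Set.Icc 0 1 ∧
      (∀ x ∈ F, x ∉ Set.Icc a b) ∧ b - a = 1 / (F.card + 1) - 2 * δ := by
  set m := F.card with hm
  set M : ℝ := (m : ℝ) + 1 with hM
  have hMpos : (0:ℝ) < M := by positivity
  have hMne : M ≠ 0 := hMpos.ne'
  -- pigeonhole on floors
  have hsub : ¬ ((Finset.range (m+1)).image (fun k : ℕ => (k : ℤ)) ⊆
      F.image (fun x => ⌊x * M⌋)) := by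
    intro h
    have h1 := Finset.card_le_card h
    have h2 : ((Finset.range (m+1)).image (fun k : ℕ => (k : ℤ))).card = m + 1 := by
      rw [Finset.card_image_of_injective _ (fun a b h => by exact_mod_cast h)]
      simp
    have h3 : (F.image (fun x => ⌊x * M⌋)).card ≤ m :=
      Finset.card_image_le
    omega
  obtain ⟨i, hi1, hi2⟩ := Finset.not_subset.mp hsub
  obtain ⟨k, hk, rfl⟩ := Finset.mem_image.mp hi1
  have hklt : k < m + 1 := Finset.mem_range.mp hk
  have hkM : (k:ℝ) + 1 ≤ M := by
    rw [hM]
    have : (k:ℝ) ≤ (m:ℝ) := by exact_mod_cast Nat.lt_succ_iff.mp hklt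
    linarith
  have h1M : 1 / (F.card + 1 : ℝ) = 1 / M := by rw [hM, ← hm]
  rw [h1M] at hδ'
  refine ⟨(k : ℝ) / M + δ, ((k : ℝ) + 1) / M - δ, ?_, ?_, ?_, ?_⟩
  · have hsplit : ((k:ℝ)+1)/M - (k:ℝ)/M = 1/M := by field_simp; ring
    linarith
  · intro x hx
    constructor
    · have : (0:ℝ) ≤ (k:ℝ)/M := by positivity
      linarith [hx.1]
    · have : ((k:ℝ)+1)/M ≤ 1 := by rw [div_le_one hMpos]; exact hkM
      linarith [hx.2]
  · intro x hxF hx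
    apply hi2
    refine Finset.mem_image.mpr ⟨x, hxF, ?_⟩
    have hδM : 0 < δ * M := by positivity
    have h1 : (k:ℝ) ≤ x * M := by
      have hax : (k:ℝ)/M + δ ≤ x := hx.1
      have := (div_le_iff₀ hMpos).mp (by linarith : (k:ℝ)/M ≤ x)
      linarith
    have h2 : x * M < (k:ℝ) + 1 := by
      have hxle : x ≤ ((k:ℝ)+1)/M - δ := hx.2
      have hmul := mul_le_mul_of_nonneg_right hxle hMpos.le
      have heq : (((k:ℝ)+1)/M - δ) * M = (k:ℝ) + 1 - δ * M := by field_simp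
      rw [heq] at hmul
      linarith
    refine Int.floor_eq_iff.mpr ⟨?_, ?_⟩
    · push_cast; exact h1
    · push_cast; exact h2
  · rw [h1M]; field_simp; ring

/-- Let `H` be the family of all separated `d`-intervals in `[0,1]^{∪d}` of
total length greater than `1/n`.  Then every finite set of points meeting all
members of `H` has at least `nd² − d` points, i.e. `τ(H) ≥ nd² − d`. -/
theorem card_cover_ge_of_long_sep_dIntervals (d n : ℕ) (hd : 1 ≤ d) (hn : 1 ≤ n)
    (C : Finset (Fin d × ℝ))
    (hcover : ∀ (S : Fin d → Set ℝ) (e : Set (Fin d × ℝ)),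
      SepUnitDInterval d S e →
      (1 / n : ℝ) < ∑ j, (volume (S j)).toReal →
      ∃ p ∈ C, p ∈ e) :
    (n : ℝ) * d ^ 2 - d ≤ C.card := by
  classical
  set F : Fin d → Finset ℝ := fun j => (C.filter (fun p => p.1 = j)).image Prod.snd with hF
  set m : Fin d → ℕ := fun j => (F j).card with hmdef
  -- Step A : sum of (m j + 1) ≤ C.card + d
  have stepA : ∑ j : Fin d, ((m j : ℝ) + 1) ≤ (C.card : ℝ) + d := by
    have h1 : ∀ j, m j ≤ (C.filter (fun p => p.1 = j)).card := fun j =>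
      Finset.card_image_le
    have h2 : ∑ j : Fin d, (C.filter (fun p => p.1 = j)).card = C.card :=
      (Finset.card_eq_sum_card_fiberwise (fun p _ => Finset.mem_univ p.1)).symm
    have h3 : ∑ j : Fin d, (m j : ℝ) ≤ (C.card : ℝ) := by
      calc ∑ j : Fin d, (m j : ℝ) ≤ ∑ j : Fin d, ((C.filter (fun p => p.1 = j)).card : ℝ) := by
            apply Finset.sum_le_sum; intro j _; exact_mod_cast h1 j
        _ = (C.card : ℝ) := by exact_mod_cast congrArg (Nat.cast : ℕ → ℝ) h2
    have : ∑ j : Fin d, ((m j : ℝ) + 1) = (∑ j : Fin d, (m j : ℝ)) + d := by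
      rw [Finset.sum_add_distrib]; simp
    linarith
  -- Step B : for all ε > 0, harmonic sum ≤ 1/n + 2 d ε
  have stepB : ∀ ε : ℝ, 0 < ε →
      ∑ j : Fin d, (1 : ℝ) / (m j + 1) ≤ 1 / n + 2 * d * ε := by
    intro ε hε
    have key : ∀ j : Fin d, ∃ a b : ℝ, a ≤ b ∧ Set.Icc a b ⊆ Set.Icc 0 1 ∧
        (∀ x ∈ F j, x ∉ Set.Icc a b) ∧
        b - a = 1 / (m j + 1) - 2 * min ε (1 / (2 * (m j + 1))) := by
      intro j
      have hpos : (0:ℝ) < 1 / (2 * ((m j : ℝ) + 1)) := by positivity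
      have := exists_gap (F j) (min ε (1 / (2 * (m j + 1)))) (lt_min hε hpos)
        (by
          have : min ε (1 / (2 * ((m j : ℝ) + 1))) ≤ 1 / (2 * ((m j : ℝ) + 1)) :=
            min_le_right _ _
          show 2 * min ε (1 / (2 * ((m j : ℝ) + 1))) ≤ 1 / ((m j : ℝ) + 1)
          have hx : ((m j : ℝ) + 1) ≠ 0 := by positivity
          have h2 : 2 * (1 / (2 * ((m j:ℝ)+1))) = 1/((m j:ℝ)+1) := by field_simp
          linarith)
      exact this
    choose a b hab hsub havoid hlen using key
    set S : Fin d → Set ℝ := fun j => Set.Icc (a j) (b j) with hS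
    have hsep : SepUnitDInterval d S fun | p => p.2 ∈ S p.1 := by
      refine ⟨fun j => hsub j, fun j => Or.inr ⟨a j, b j, hab j, rfl⟩, rfl⟩
    have hnotcover : ¬ ((1 / n : ℝ) < ∑ j, (volume (S j)).toReal) := by
      intro hlt
      obtain ⟨p, hpC, hpe⟩ := hcover S _ hsep hlt
      have hpF : p.2 ∈ F p.1 := Finset.mem_image.mpr
        ⟨p, Finset.mem_filter.mpr ⟨hpC, rfl⟩, rfl⟩
      exact havoid p.1 p.2 hpF hpe
    push_neg at hnotcover
    have hvol : ∀ j, (volume (S j)).toReal = b j - a j := by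
      intro j
      rw [hS]
      simp only [Real.volume_Icc]
      exact ENNReal.toReal_ofReal (by linarith [hab j])
    have hsum : ∑ j : Fin d, (b j - a j) ≤ 1 / n := by
      calc ∑ j : Fin d, (b j - a j) = ∑ j, (volume (S j)).toReal := by
            apply Finset.sum_congr rfl; intro j _; rw [hvol j]
        _ ≤ 1 / n := hnotcover
    have hge : ∀ j : Fin d, (1 : ℝ) / (m j + 1) - 2 * ε ≤ b j - a j := by
      intro j
      rw [hlen j]
      have : min ε (1 / (2 * ((m j : ℝ) + 1))) ≤ ε := min_le_left _ _
      linarith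
    have : ∑ j : Fin d, ((1 : ℝ) / (m j + 1) - 2 * ε) ≤ 1 / n :=
      le_trans (Finset.sum_le_sum fun j _ => hge j) hsum
    rw [Finset.sum_sub_distrib] at this
    simp only [Finset.sum_const, Finset.card_univ, Fintype.card_fin, nsmul_eq_mul] at this
    linarith
  -- Step C : Cauchy–Schwarz (AM–HM)
  have stepC : (d : ℝ) ^ 2 ≤ (∑ j : Fin d, ((m j : ℝ) + 1)) *
      ∑ j : Fin d, (1 : ℝ) / (m j + 1) := by
    have := Finset.sum_sq_le_sum_mul_sum_of_sq_eq_mul (Finset.univ : Finset (Fin d))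
      (r := fun _ => (1 : ℝ)) (f := fun j => (m j : ℝ) + 1)
      (g := fun j => (1 : ℝ) / (m j + 1))
      (fun j _ => by positivity) (fun j _ => by positivity)
      (fun j _ => by
        have : ((m j : ℝ) + 1) ≠ 0 := by positivity
        field_simp)
    simpa using this
  -- Step D : combine and take ε → 0
  have hCd : (0:ℝ) < (C.card : ℝ) + d := by
    have : (1:ℝ) ≤ d := by exact_mod_cast hd
    positivity
  have hharm : (0:ℝ) ≤ ∑ j : Fin d, (1 : ℝ) / (m j + 1) :=
    Finset.sum_nonneg fun j _ => by positivity
  have hdR : (0:ℝ) < d := by exact_mod_cast hd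
  have main : (d : ℝ) ^ 2 ≤ ((C.card : ℝ) + d) * (1 / n) := by
    have key : ∀ ε : ℝ, 0 < ε → (d : ℝ) ^ 2 ≤ ((C.card : ℝ) + d) * (1 / n) + ε := by
      intro ε hε
      set K : ℝ := ((C.card : ℝ) + d) * (2 * d) with hK
      have hKpos : 0 < K := by positivity
      have h1 := stepB (ε / K) (by positivity)
      have h2 : (d : ℝ) ^ 2 ≤ ((C.card : ℝ) + d) * (1 / n + 2 * d * (ε / K)) := by
        calc (d : ℝ) ^ 2 ≤ (∑ j : Fin d, ((m j : ℝ) + 1)) *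
              ∑ j : Fin d, (1 : ℝ) / (m j + 1) := stepC
          _ ≤ ((C.card : ℝ) + d) * (1 / n + 2 * d * (ε / K)) := by
              apply mul_le_mul stepA h1 hharm hCd.le
      have h3 : ((C.card : ℝ) + d) * (2 * d * (ε / K)) = ε := by
        rw [hK]; field_simp
      nlinarith [h2, h3]
    exact le_of_forall_pos_le_add key
  have hnpos : (0:ℝ) < n := by exact_mod_cast hn
  have : (n : ℝ) * d ^ 2 ≤ (C.card : ℝ) + d := by
    have := mul_le_mul_of_nonneg_left main hnpos.le
    calc (n : ℝ) * d ^ 2 ≤ (n:ℝ) * (((C.card : ℝ) + d) * (1 / n)) := this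
      _ = (C.card : ℝ) + d := by field_simp
  linarith
end

section
/- For every integer d ≥ 1 there exists a finite hypergraph H of separated d-intervals such that ν(H) = 1 and τ(H) = τ*(H) = d. (Such an H is obtained from a decomposition of the edge set of the complete graph K_{2d} into d Hamiltonian paths: H has 2d separated d-intervals e_1, …, e_{2d}, where the j-th component of e_i is the unit interval starting at the position of vertex i along the j-th Hamiltonian path.) -/
/-- A separated `d`-interval, modelled on `d` fixed parallel copies of the real
line: for each line `j` it contains a (possibly empty) closed interval. -/
def IsSepDInterval (d : ℕ) (h : Set (Fin d × ℝ)) : Prop :=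
  ∃ S : Fin d → Set ℝ,
    (∀ j, S j = ∅ ∨ ∃ a b : ℝ, a ≤ b ∧ S j = Set.Icc a b) ∧
    h = {p : Fin d × ℝ | p.2 ∈ S p.1}

namespace SepAux

open scoped Classical

noncomputable def pt (d : ℕ) (i : Fin d) : ℝ := ((i : ℕ) + 1) / (d + 1)

lemma pt_pos (d : ℕ) (i : Fin d) : 0 < pt d i := by
  unfold pt; positivity

lemma pt_lt_one (d : ℕ) (i : Fin d) : pt d i < 1 := by
  rw [pt, div_lt_one (by positivity)]
  exact_mod_cast Nat.add_lt_add_right i.2 1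

lemma pt_inj {d : ℕ} {i j : Fin d} (h : pt d i = pt d j) : i = j := by
  unfold pt at h
  have hd : ((d : ℝ) + 1) ≠ 0 := by positivity
  field_simp at h
  exact Fin.ext (by exact_mod_cast (by linarith : ((i : ℕ) : ℝ) = ((j : ℕ) : ℝ)))

/-- Edge `(i, s)`: on line `i` the center interval `[s, s+1]`; on any other
line `j` a single guest point inside one of line `j`'s center intervals. -/
def Edge (d : ℕ) (q : Fin d × Fin 2) : Set (Fin d × ℝ) :=
  {p | if p.1 = q.1 then (q.2.val : ℝ) ≤ p.2 ∧ p.2 ≤ (q.2.val : ℝ) + 1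
       else p.2 = (if q.1 < p.1 then (q.2.val : ℝ) else 1 - (q.2.val : ℝ)) + pt d q.1}

lemma fin2_val (s : Fin 2) : s.val = 0 ∨ s.val = 1 := by omega

lemma self_mem (d : ℕ) (q : Fin d × Fin 2) : (q.1, (1:ℝ)) ∈ Edge d q := by
  simp only [Edge, Set.mem_setOf_eq, if_pos rfl]
  rcases fin2_val q.2 with h | h <;> rw [h] <;> norm_num

lemma edge_inter_lt {d : ℕ} {i j : Fin d} (hij : i < j) (s t : Fin 2) :
    (Edge d (i, s) ∩ Edge d (j, t)).Nonempty := by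
  have hji : ¬ (j = i) := by exact Fin.ne_of_gt hij
  have hij' : ¬ (i = j) := by exact Fin.ne_of_lt hij
  by_cases hst : s = t
  · -- meet on line j : guest of (i,s) sits in center (j,t)
    subst hst
    refine ⟨(j, (s.val : ℝ) + pt d i), ?_, ?_⟩
    · simp only [Edge, Set.mem_setOf_eq, if_neg hji, if_pos hij]
    · simp only [Edge, Set.mem_setOf_eq, if_pos rfl]
      constructor
      · linarith [pt_pos d i]
      · linarith [pt_lt_one d i]
  · -- meet on line i : guest of (j,t) sits in center (i,s)
    have hst' : s.val ≠ t.val := fun h => hst (Fin.ext h)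
    have hv : (s.val : ℝ) = 1 - (t.val : ℝ) := by
      rcases fin2_val s with h | h <;> rcases fin2_val t with h' | h' <;>
        first
          | exact absurd (h.trans h'.symm) hst'
          | (rw [h, h']; norm_num)
    refine ⟨(i, (1 - (t.val : ℝ)) + pt d j), ?_, ?_⟩
    · simp only [Edge, Set.mem_setOf_eq, if_pos rfl, ← hv]
      constructor
      · linarith [pt_pos d j]
      · linarith [pt_lt_one d j]
    · simp only [Edge, Set.mem_setOf_eq, if_neg hij', if_neg (by exact not_lt_of_gt hij)]

lemma edge_inter (d : ℕ) (q q' : Fin d × Fin 2) :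
    (Edge d q ∩ Edge d q').Nonempty := by
  obtain ⟨i, s⟩ := q; obtain ⟨j, t⟩ := q'
  rcases lt_trichotomy i j with h | h | h
  · exact edge_inter_lt h s t
  · subst h
    exact ⟨(i, 1), self_mem d (i, s), self_mem d (i, t)⟩
  · obtain ⟨x, h1, h2⟩ := edge_inter_lt h t s
    exact ⟨x, h2, h1⟩

open scoped Classical in
/-- Every point lies in at most two edges. -/
lemma deg_le_two (d : ℕ) (x : Fin d × ℝ) :
    (Finset.univ.filter fun q : Fin d × Fin 2 => x ∈ Edge d q).card ≤ 2 := by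
  obtain ⟨j, r⟩ := x
  have key : ∀ q ∈ (Finset.univ.filter fun q : Fin d × Fin 2 => (j, r) ∈ Edge d q),
      ∀ q' ∈ (Finset.univ.filter fun q : Fin d × Fin 2 => (j, r) ∈ Edge d q),
      (fun q : Fin d × Fin 2 => if j = q.1 then q.2 else (if r < 1 then 1 else 0)) q =
      (fun q : Fin d × Fin 2 => if j = q.1 then q.2 else (if r < 1 then 1 else 0)) q' →
      q = q' := by
    rintro ⟨i1, s1⟩ hq1 ⟨i2, s2⟩ hq2 hφ
    simp only [Finset.mem_filter, Edge, Set.mem_setOf_eq] at hq1 hq2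
    replace hq1 := hq1.2; replace hq2 := hq2.2
    simp only at hφ
    have guest : ∀ (i : Fin d) (s : Fin 2), ¬ (j = i) →
        r = (if i < j then (s.val : ℝ) else 1 - (s.val : ℝ)) + pt d i →
        (¬ r < 1 → (if i < j then (s.val : ℝ) else 1 - (s.val : ℝ)) = 1) ∧
        (r < 1 → (if i < j then (s.val : ℝ) else 1 - (s.val : ℝ)) = 0) := by
      intro i s hij hr
      have hc : (if i < j then (s.val : ℝ) else 1 - (s.val : ℝ)) = 0 ∨
          (if i < j then (s.val : ℝ) else 1 - (s.val : ℝ)) = 1 := by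
        rcases fin2_val s with h | h <;> split <;> rw [h] <;> norm_num
      have hp0 := pt_pos d i
      have hp1 := pt_lt_one d i
      constructor
      · intro hr1; rcases hc with h | h
        · exfalso; apply hr1; rw [hr, h]; linarith
        · exact h
      · intro hr1; rcases hc with h | h
        · exact h
        · exfalso; rw [hr, h] at hr1; linarith
    by_cases h1 : j = i1 <;> by_cases h2 : j = i2
    · subst h1; subst h2
      rw [if_pos rfl, if_pos rfl] at hφ; rw [hφ]
    · -- i1 = j center, i2 guest
      exfalso
      subst h1
      rw [if_pos rfl, if_neg h2] at hφ
      rw [if_pos rfl] at hq1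
      rw [if_neg h2] at hq2
      obtain ⟨g1, g0⟩ := guest i2 s2 h2 hq2
      by_cases hr : r < 1
      · rw [if_pos hr] at hφ
        have : (s1.val : ℝ) = 1 := by rw [hφ]; norm_num
        linarith [hq1.1]
      · rw [if_neg hr] at hφ
        have : (s1.val : ℝ) = 0 := by rw [hφ]; norm_num
        have hc1 := g1 hr
        have := pt_pos d i2
        have := pt_lt_one d i2
        have hr1 : r ≤ 1 := by linarith [hq1.2]
        rw [hq2, hc1] at hr1
        linarith
    · exfalso
      subst h2
      rw [if_pos rfl, if_neg h1] at hφ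
      rw [if_pos rfl] at hq2
      rw [if_neg h1] at hq1
      obtain ⟨g1, g0⟩ := guest i1 s1 h1 hq1
      by_cases hr : r < 1
      · rw [if_pos hr] at hφ
        have : (s2.val : ℝ) = 1 := by rw [← hφ]; norm_num
        linarith [hq2.1]
      · rw [if_neg hr] at hφ
        have : (s2.val : ℝ) = 0 := by rw [← hφ]; norm_num
        have hc1 := g1 hr
        have := pt_pos d i1
        have := pt_lt_one d i1
        have hr1 : r ≤ 1 := by linarith [hq2.2]
        rw [hq1, hc1] at hr1
        linarith
    · -- both guests
      rw [if_neg h1] at hq1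
      rw [if_neg h2] at hq2
      obtain ⟨g11, g10⟩ := guest i1 s1 h1 hq1
      obtain ⟨g21, g20⟩ := guest i2 s2 h2 hq2
      have hcc : (if i1 < j then (s1.val : ℝ) else 1 - (s1.val : ℝ)) =
          (if i2 < j then (s2.val : ℝ) else 1 - (s2.val : ℝ)) := by
        by_cases hr : r < 1
        · rw [g10 hr, g20 hr]
        · rw [g11 hr, g21 hr]
      have hpt : pt d i1 = pt d i2 := by
        have h := hq1.symm.trans hq2
        rw [hcc] at h
        linarith
      have hi : i1 = i2 := pt_inj hpt
      subst hi
      have hs : s1 = s2 := by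
        split at hcc
        · exact Fin.ext (by exact_mod_cast hcc)
        · have : (s1.val : ℝ) = (s2.val : ℝ) := by linarith
          exact Fin.ext (by exact_mod_cast this)
      rw [hs]
  calc (Finset.univ.filter fun q : Fin d × Fin 2 => (j, r) ∈ Edge d q).card
      ≤ (Finset.univ : Finset (Fin 2)).card :=
        Finset.card_le_card_of_injOn _ (fun _ _ => Finset.mem_univ _) key
    _ = 2 := by simp


lemma edge_sep (d : ℕ) (q : Fin d × Fin 2) : IsSepDInterval d (Edge d q) := by
  refine ⟨fun j => if j = q.1 then Set.Icc (q.2.val : ℝ) ((q.2.val : ℝ) + 1)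
      else Set.Icc ((if q.1 < j then (q.2.val : ℝ) else 1 - (q.2.val : ℝ)) + pt d q.1)
        ((if q.1 < j then (q.2.val : ℝ) else 1 - (q.2.val : ℝ)) + pt d q.1), ?_, ?_⟩
  · intro j
    right
    by_cases h : j = q.1
    · exact ⟨(q.2.val : ℝ), (q.2.val : ℝ) + 1, by linarith, by simp only [h, if_pos]⟩
    · exact ⟨(if q.1 < j then (q.2.val : ℝ) else 1 - (q.2.val : ℝ)) + pt d q.1,
        (if q.1 < j then (q.2.val : ℝ) else 1 - (q.2.val : ℝ)) + pt d q.1, le_refl _,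
        by simp only [h, if_neg, if_false]⟩
  · ext ⟨j, r⟩
    simp only [Edge, Set.mem_setOf_eq]
    by_cases h : j = q.1 <;> simp [h, Set.mem_Icc, le_antisymm_iff, and_comm]

/-- The standard cover: the point `1` on every line. -/
noncomputable def Cov (d : ℕ) : Finset (Fin d × ℝ) :=
  Finset.image (fun j => (j, (1:ℝ))) Finset.univ

lemma cov_card (d : ℕ) : (Cov d).card = d := by
  rw [Cov, Finset.card_image_of_injective _ (fun a b h => (Prod.ext_iff.mp h).1)]
  simp

lemma cov_covers (d : ℕ) : ∀ e ∈ Set.range (Edge d), ∃ x ∈ Cov d, x ∈ e := by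
  rintro e ⟨q, rfl⟩
  exact ⟨(q.1, 1), Finset.mem_image.mpr ⟨q.1, Finset.mem_univ _, rfl⟩, self_mem d q⟩

lemma matching_le_one (d : ℕ) (M : Finset (Set (Fin d × ℝ)))
    (hM : ↑M ⊆ Set.range (Edge d))
    (hdisj : (M : Set (Set (Fin d × ℝ))).PairwiseDisjoint id) : M.card ≤ 1 := by
  by_contra h
  push_neg at h
  obtain ⟨e, he, f, hf, hef⟩ := Finset.one_lt_card.mp h
  obtain ⟨q, rfl⟩ := hM he
  obtain ⟨q', rfl⟩ := hM hf
  exact Set.not_disjoint_iff_nonempty_inter.mpr (edge_inter d q q') (hdisj he hf hef)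

lemma cover_ge (d : ℕ) (C : Finset (Fin d × ℝ))
    (hC : ∀ e ∈ Set.range (Edge d), ∃ x ∈ C, x ∈ e) : d ≤ C.card := by
  have hex : ∀ q : Fin d × Fin 2, ∃ x, x ∈ C ∧ x ∈ Edge d q := by
    intro q
    obtain ⟨x, hx1, hx2⟩ := hC _ ⟨q, rfl⟩
    exact ⟨x, hx1, hx2⟩
  choose F hF1 hF2 using hex
  have h2 : (Finset.univ : Finset (Fin d × Fin 2)).card ≤ 2 * C.card := by
    apply Finset.card_le_mul_card_image_of_maps_to (fun q _ => hF1 q)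
    intro x _
    calc (Finset.univ.filter fun q => F q = x).card
        ≤ (Finset.univ.filter fun q : Fin d × Fin 2 => x ∈ Edge d q).card := by
          apply Finset.card_le_card
          intro q hq
          simp only [Finset.mem_filter, Finset.mem_univ, true_and] at hq ⊢
          rw [← hq]; exact hF2 q
      _ ≤ 2 := deg_le_two d x
  simp only [Finset.card_univ, Fintype.card_prod, Fintype.card_fin] at h2
  omega

lemma finsum_mem_eq_filter {α : Type*} (f : α → ℝ) (hf : (Function.support f).Finite)
    (e : Set α) :
    ∑ᶠ x ∈ e, f x = ∑ x ∈ hf.toFinset.filter (· ∈ e), f x := by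
  apply finsum_mem_eq_sum_of_inter_support_eq
  ext x
  simp only [Set.mem_inter_iff, Function.mem_support, Finset.coe_filter,
    Set.Finite.mem_toFinset, Set.mem_setOf_eq]
  tauto

/-- The lower bound for fractional covers. -/
lemma frac_cover_ge (d : ℕ) (f : (Fin d × ℝ) → ℝ) (hfin : (Function.support f).Finite)
    (hpos : ∀ x, 0 ≤ f x) (hcov : ∀ e ∈ Set.range (Edge d), 1 ≤ ∑ᶠ x ∈ e, f x) :
    (d : ℝ) ≤ ∑ᶠ x, f x := by
  set T := hfin.toFinset with hT
  have hedge : ∀ q : Fin d × Fin 2, 1 ≤ ∑ x ∈ T.filter (· ∈ Edge d q), f x := by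
    intro q
    rw [← finsum_mem_eq_filter f hfin]
    exact hcov _ ⟨q, rfl⟩
  have h1 : ((Finset.univ : Finset (Fin d × Fin 2)).card : ℝ) ≤
      ∑ q ∈ Finset.univ, ∑ x ∈ T.filter (· ∈ Edge d q), f x := by
    calc ((Finset.univ : Finset (Fin d × Fin 2)).card : ℝ)
        = ∑ _q ∈ (Finset.univ : Finset (Fin d × Fin 2)), (1:ℝ) := by
          rw [Finset.sum_const, nsmul_eq_mul, mul_one]
      _ ≤ _ := Finset.sum_le_sum (fun q _ => hedge q)
  have h2 : ∑ q ∈ Finset.univ, ∑ x ∈ T.filter (· ∈ Edge d q), f x =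
      ∑ x ∈ T, ((Finset.univ.filter fun q : Fin d × Fin 2 => x ∈ Edge d q).card : ℝ) * f x := by
    simp_rw [Finset.sum_filter]
    rw [Finset.sum_comm]
    apply Finset.sum_congr rfl
    intro x _
    rw [← Finset.sum_filter, Finset.sum_const, nsmul_eq_mul]
  have h3 : ∑ x ∈ T, ((Finset.univ.filter fun q : Fin d × Fin 2 => x ∈ Edge d q).card : ℝ) * f x
      ≤ ∑ x ∈ T, 2 * f x := by
    apply Finset.sum_le_sum
    intro x _
    apply mul_le_mul_of_nonneg_right _ (hpos x)
    exact_mod_cast deg_le_two d x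
  have h4 : ∑ x ∈ T, 2 * f x = 2 * ∑ᶠ x, f x := by
    rw [← Finset.mul_sum, finsum_eq_sum f hfin]
  have h5 : ((Finset.univ : Finset (Fin d × Fin 2)).card : ℝ) = 2 * d := by
    simp [Finset.card_univ]
    ring
  linarith [h1, h2, h3, h4, h5]

end SepAux

open SepAux in
/-- For every `d ≥ 1` there is a finite hypergraph of separated `d`-intervals
with `ν(H) = 1` and `τ(H) = τ*(H) = d`. -/
theorem exists_sep_dInterval_hypergraph_nu_one_tau_d (d : ℕ) (hd : 1 ≤ d) :
    ∃ H : Set (Set (Fin d × ℝ)), H.Finite ∧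
      (∀ e ∈ H, IsSepDInterval d e ∧ e.Nonempty) ∧
      nu H = 1 ∧ tau H = d ∧ tauStar H = d := by
  classical
  refine ⟨Set.range (Edge d), Set.finite_range _, ?_, ?_, ?_, ?_⟩
  · rintro e ⟨q, rfl⟩
    exact ⟨edge_sep d q, ⟨(q.1, 1), self_mem d q⟩⟩
  · -- nu = 1
    apply le_antisymm
    · apply csSup_le
      · exact ⟨0, ∅, by simp, by simp, by simp⟩
      · rintro n ⟨M, hM, hdisj, rfl⟩
        exact matching_le_one d M hM hdisj
    · apply le_csSup
      · exact ⟨1, by rintro n ⟨M, hM, hdisj, rfl⟩; exact matching_le_one d M hM hdisj⟩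
      · refine ⟨{Edge d (⟨0, hd⟩, 0)}, by simp [Set.subset_def]; exact ⟨⟨0, hd⟩, Or.inl rfl⟩, ?_, Finset.card_singleton _⟩
        simp
  · -- tau = d
    apply le_antisymm
    · exact Nat.sInf_le ⟨Cov d, cov_covers d, cov_card d⟩
    · apply le_csInf
      · exact ⟨d, Cov d, cov_covers d, cov_card d⟩
      · rintro n ⟨C, hC, rfl⟩
        exact cover_ge d C hC
  · -- tauStar = d
    set f0 : (Fin d × ℝ) → ℝ := fun x => if x ∈ Cov d then 1 else 0 with hf0
    have hsupp : Function.support f0 ⊆ ↑(Cov d) := by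
      intro x hx
      simp only [hf0, Function.mem_support] at hx
      by_contra h
      exact hx (if_neg h)
    have hfin : (Function.support f0).Finite := Set.Finite.subset (Cov d).finite_toSet hsupp
    have hpos : ∀ x, 0 ≤ f0 x := by
      intro x; simp only [hf0]; split <;> norm_num
    have hcov : ∀ e ∈ Set.range (Edge d), 1 ≤ ∑ᶠ x ∈ e, f0 x := by
      rintro e ⟨q, rfl⟩
      rw [finsum_mem_eq_filter f0 hfin]
      have hmem : (q.1, (1:ℝ)) ∈ hfin.toFinset.filter (· ∈ Edge d q) := by
        have h1 : (q.1, (1:ℝ)) ∈ Cov d := Finset.mem_image.mpr ⟨q.1, Finset.mem_univ _, rfl⟩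
        refine Finset.mem_filter.mpr ⟨hfin.mem_toFinset.mpr ?_, self_mem d q⟩
        simp only [hf0, Function.mem_support, if_pos h1]
        norm_num
      have h1 : (q.1, (1:ℝ)) ∈ Cov d := Finset.mem_image.mpr ⟨q.1, Finset.mem_univ _, rfl⟩
      calc (1:ℝ) = f0 (q.1, 1) := by simp only [hf0, if_pos h1]
        _ ≤ _ := Finset.single_le_sum (fun x _ => hpos x) hmem
    have htot : ∑ᶠ x, f0 x = d := by
      rw [finsum_eq_sum_of_support_subset f0 hsupp]
      calc ∑ x ∈ Cov d, f0 x = ∑ x ∈ Cov d, (1:ℝ) :=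
            Finset.sum_congr rfl (fun x hx => by simp only [hf0, if_pos hx])
        _ = d := by rw [Finset.sum_const, nsmul_eq_mul, mul_one, cov_card]
    have hmemS : (d : ℝ) ∈ {t | ∃ f : (Fin d × ℝ) → ℝ, (Function.support f).Finite ∧
        (∀ x, 0 ≤ f x) ∧ (∀ e ∈ Set.range (Edge d), 1 ≤ ∑ᶠ x ∈ e, f x) ∧ t = ∑ᶠ x, f x} :=
      ⟨f0, hfin, hpos, hcov, htot.symm⟩
    have hlow : ∀ t ∈ {t | ∃ f : (Fin d × ℝ) → ℝ, (Function.support f).Finite ∧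
        (∀ x, 0 ≤ f x) ∧ (∀ e ∈ Set.range (Edge d), 1 ≤ ∑ᶠ x ∈ e, f x) ∧ t = ∑ᶠ x, f x},
        (d : ℝ) ≤ t := by
      rintro t ⟨f, hfin', hpos', hcov', rfl⟩
      exact frac_cover_ge d f hfin' hpos' hcov'
    exact le_antisymm (csInf_le ⟨(d:ℝ), hlow⟩ hmemS) (le_csInf ⟨_, hmemS⟩ hlow)
end

section
/- (Weighted Turán theorem.) Let G = (V, E) be a finite simple graph and let w : V → ℕ assign a positive integer weight to each vertex. Set W = ∑_{v ∈ V} w(v) and let K be the maximum of ∑_{v ∈ A} w(v) over all independent sets A of G. Then ∑_{uv ∈ E} (w(u) + w(v)) ≥ W²/K − W. -/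
open Finset

/-- Weighted Caro–Wei: there is an independent subset of `s` whose weight is at least
`∑_{u ∈ s} w u / (d_s u + 1)` where `d_s u` is the number of neighbours of `u` inside `s`. -/
theorem weighted_caro_wei {V : Type*} [DecidableEq V] (G : SimpleGraph V)
    [DecidableRel G.Adj] (w : V → ℕ) (s : Finset V) :
    ∃ A ⊆ s, (∀ u ∈ A, ∀ v ∈ A, ¬ G.Adj u v) ∧
      ∑ u ∈ s, (w u : ℝ) / ((s.filter (G.Adj u)).card + 1) ≤ ∑ v ∈ A, (w v : ℝ) := by
  induction s using Finset.strongInduction with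
  | _ s ih =>
    rcases s.eq_empty_or_nonempty with rfl | hs
    · exact ⟨∅, by simp⟩
    -- notation
    set d : Finset V → V → ℕ := fun t u => (t.filter (G.Adj u)).card with hd
    set g : V → ℝ := fun u => (w u : ℝ) / (d s u + 1) with hg
    have hdpos : ∀ u, (0:ℝ) < (d s u : ℝ) + 1 := fun u => by positivity
    -- closed neighbourhood inside s
    set N : V → Finset V := fun v => s.filter (fun u => v = u ∨ G.Adj v u) with hN
    have hNcard : ∀ v ∈ s, (N v).card = d s v + 1 := by
      intro v hv
      have : N v = insert v (s.filter (G.Adj v)) := by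
        ext u
        simp only [hN, mem_filter, mem_insert]
        constructor
        · rintro ⟨hu, rfl | h⟩
          · exact Or.inl rfl
          · exact Or.inr ⟨hu, h⟩
        · rintro (rfl | ⟨hu, h⟩)
          · exact ⟨hv, Or.inl rfl⟩
          · exact ⟨hu, Or.inr h⟩
      rw [this, card_insert_of_notMem (by simp [G.irrefl])]
    -- double counting:  ∑_{v∈s} ∑_{u∈N v} g u = ∑_{v∈s} w v
    have hdc : ∑ v ∈ s, ∑ u ∈ N v, g u = ∑ v ∈ s, (w v : ℝ) := by
      have swap : ∑ v ∈ s, ∑ u ∈ N v, g u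
          = ∑ u ∈ s, ((s.filter fun v => v = u ∨ G.Adj v u).card : ℝ) * g u := by
        simp only [hN, sum_filter]
        rw [Finset.sum_comm]
        refine Finset.sum_congr rfl fun u hu => ?_
        rw [← Finset.sum_filter, Finset.sum_const, nsmul_eq_mul]
      rw [swap]
      refine Finset.sum_congr rfl fun u hu => ?_
      have : (s.filter fun v => v = u ∨ G.Adj v u) = N u := by
        apply Finset.filter_congr
        intro v hv
        constructor
        · rintro (rfl | h); exacts [Or.inl rfl, Or.inr h.symm]
        · rintro (rfl | h); exacts [Or.inl rfl, Or.inr h.symm]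
      rw [this, hNcard u hu, hg]
      push_cast
      field_simp
    -- choose a good vertex v
    obtain ⟨v, hv, hvle⟩ : ∃ v ∈ s, ∑ u ∈ N v, g u ≤ (w v : ℝ) :=
      Finset.exists_le_of_sum_le hs (le_of_eq hdc)
    -- remove the closed neighbourhood
    set t : Finset V := s.filter (fun u => ¬ (v = u ∨ G.Adj v u)) with ht
    have htss : t ⊂ s := by
      refine Finset.filter_ssubset.2 ⟨v, hv, ?_⟩
      simp
    obtain ⟨A, hAt, hAind, hACW⟩ := ih t htss
    refine ⟨insert v A, ?_, ?_, ?_⟩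
    · exact insert_subset hv (hAt.trans (filter_subset _ _))
    · -- independence
      have hvA : ∀ u ∈ A, ¬ G.Adj v u := fun u hu =>
        (Finset.mem_filter.1 (hAt hu)).2 ∘ Or.inr
      intro a ha b hb hab
      rcases mem_insert.1 ha with rfl | ha' <;> rcases mem_insert.1 hb with rfl | hb'
      · exact G.irrefl hab
      · exact hvA b hb' hab
      · exact hvA a ha' hab.symm
      · exact hAind a ha' b hb' hab
    · -- weight bound
      have hvnA : v ∉ A := fun h => by
        have := (Finset.mem_filter.1 (hAt h)).2
        exact this (Or.inl rfl)
      rw [Finset.sum_insert hvnA]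
      have hsplit : ∑ u ∈ s, g u = ∑ u ∈ N v, g u + ∑ u ∈ t, g u := by
        rw [hN, ht]
        exact (Finset.sum_filter_add_sum_filter_not s _ g).symm
      have hmono : ∑ u ∈ t, g u ≤ ∑ u ∈ t, (w u : ℝ) / ((t.filter (G.Adj u)).card + 1) := by
        refine Finset.sum_le_sum fun u hu => ?_
        have hle : (t.filter (G.Adj u)).card ≤ d s u :=
          Finset.card_le_card (Finset.filter_subset_filter _ (filter_subset _ _))
        apply div_le_div_of_nonneg_left (by positivity) (by positivity)
        push_cast
        exact_mod_cast Nat.add_le_add_right hle 1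
      calc ∑ u ∈ s, g u = ∑ u ∈ N v, g u + ∑ u ∈ t, g u := hsplit
        _ ≤ (w v : ℝ) + ∑ v ∈ A, (w v : ℝ) :=
            add_le_add hvle (hmono.trans hACW)

/-- Sum over edges of `f u + f v` equals `∑ v, f v * deg v`. -/
theorem sum_edges_lift {V : Type*} [Fintype V] [DecidableEq V] (G : SimpleGraph V)
    [DecidableRel G.Adj] (f : V → ℝ) :
    ∑ e ∈ G.edgeFinset,
        Sym2.lift ⟨fun u v => f u + f v, fun u v => by ring⟩ e
      = ∑ v, f v * G.degree v := by
  classical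
  have h1 : ∑ d : G.Dart, f d.fst = ∑ v, f v * G.degree v := by
    rw [← Finset.sum_fiberwise_of_maps_to (g := fun d : G.Dart => d.fst)
      (t := Finset.univ) (fun d _ => Finset.mem_univ _)]
    refine Finset.sum_congr rfl fun v _ => ?_
    have : ∀ d ∈ Finset.univ.filter (fun d : G.Dart => d.fst = v), f d.fst = f v := by
      intro d hd; rw [(Finset.mem_filter.1 hd).2]
    rw [Finset.sum_congr rfl this, Finset.sum_const, nsmul_eq_mul,
      G.dart_fst_fiber_card_eq_degree v, mul_comm]
  have h2 : ∑ d : G.Dart, f d.fst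
      = ∑ e ∈ G.edgeFinset, Sym2.lift ⟨fun u v => f u + f v, fun u v => by ring⟩ e := by
    rw [← Finset.sum_fiberwise_of_maps_to (g := fun d : G.Dart => d.edge)
      (t := G.edgeFinset) (fun d _ => by rw [SimpleGraph.mem_edgeFinset]; exact d.edge_mem)]
    refine Finset.sum_congr rfl fun e he => ?_
    rw [SimpleGraph.mem_edgeFinset] at he
    induction e with
    | _ u v =>
      have hadj : G.Adj u v := he
      set d : G.Dart := ⟨(u, v), hadj⟩ with hdd
      have hfiber : Finset.univ.filter (fun d' : G.Dart => d'.edge = s(u, v)) = {d, d.symm} := by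
        have := d.edge_fiber
        rwa [show d.edge = s(u,v) from rfl] at this
      rw [hfiber, Finset.sum_pair (d.symm_ne.symm)]
      simp [SimpleGraph.Dart.symm]
      exact rfl
  rw [← h2, h1]

/-- **Weighted Turán theorem.**  Let `G` be a finite simple graph with positive
integer vertex weights `w`, let `W` be the total weight, and let `K` be the
maximum weight of an independent set.  Then
`∑_{uv ∈ E} (w u + w v) ≥ W²/K − W`. -/
theorem weighted_turan {V : Type*} [Fintype V] (G : SimpleGraph V)
    [DecidableRel G.Adj] (w : V → ℕ) (hw : ∀ v, 0 < w v)
    (W K : ℕ) (hW : W = ∑ v, w v)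
    (hK : IsGreatest {s | ∃ A : Finset V,
      (∀ u ∈ A, ∀ v ∈ A, ¬ G.Adj u v) ∧ s = ∑ v ∈ A, w v} K) :
    (W : ℝ) ^ 2 / K - W ≤
      ∑ e ∈ G.edgeFinset,
        Sym2.lift ⟨fun u v => (w u : ℝ) + (w v : ℝ), fun u v => by ring⟩ e := by
  classical
  rw [sum_edges_lift]
  -- degenerate case: V empty
  cases isEmpty_or_nonempty V with
  | inl h =>
    have hW0 : (W : ℝ) = 0 := by simp [hW]
    simp [hW0]
  | inr h =>
    have hK0 : 0 < K := by
      obtain ⟨v⟩ := h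
      have : (w v : ℕ) ∈ {s | ∃ A : Finset V,
          (∀ u ∈ A, ∀ v ∈ A, ¬ G.Adj u v) ∧ s = ∑ v ∈ A, w v} :=
        ⟨{v}, by simp [G.irrefl], by simp⟩
      exact lt_of_lt_of_le (hw v) (hK.2 this)
    -- Caro–Wei with s = univ
    obtain ⟨A, -, hAind, hACW⟩ := weighted_caro_wei G w Finset.univ
    have hdeg : ∀ u : V, (Finset.univ.filter (G.Adj u)).card = G.degree u := by
      intro u
      rw [SimpleGraph.degree]
      congr 1
      ext x
      simp
    have hCW : ∑ u : V, (w u : ℝ) / (G.degree u + 1) ≤ K := by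
      refine le_trans ?_ (le_trans hACW ?_)
      · refine le_of_eq (Finset.sum_congr rfl fun u _ => ?_)
        rw [hdeg u]
      · have : (∑ v ∈ A, w v : ℕ) ≤ K := hK.2 ⟨A, hAind, rfl⟩
        exact_mod_cast this
    -- Cauchy–Schwarz
    have hCS : (W : ℝ) ^ 2 ≤ (∑ v : V, (w v : ℝ) * (G.degree v + 1))
        * ∑ v : V, (w v : ℝ) / (G.degree v + 1) := by
      rw [hW]
      push_cast
      refine Finset.sum_sq_le_sum_mul_sum_of_sq_eq_mul Finset.univ
        (f := fun v => (w v : ℝ) * (G.degree v + 1))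
        (g := fun v => (w v : ℝ) / (G.degree v + 1))
        (fun v _ => by positivity) (fun v _ => by positivity) (fun v _ => ?_)
      field_simp
    have hS : (W : ℝ) ^ 2 / K ≤ ∑ v : V, (w v : ℝ) * (G.degree v + 1) := by
      rw [div_le_iff₀ (by exact_mod_cast hK0)]
      calc (W:ℝ)^2 ≤ _ * _ := hCS
        _ ≤ (∑ v : V, (w v : ℝ) * (G.degree v + 1)) * K := by
            refine mul_le_mul_of_nonneg_left hCW ?_
            refine Finset.sum_nonneg fun v _ => by positivity
    have hsum : ∑ v : V, (w v : ℝ) * (G.degree v + 1)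
        = (∑ v : V, (w v : ℝ) * G.degree v) + W := by
      rw [hW]
      push_cast
      rw [← Finset.sum_add_distrib]
      refine Finset.sum_congr rfl fun v _ => by ring
    linarith [hS, hsum.symm.le]
end

section
/- (Directed weighted Turán theorem.) Let D be a finite directed multigraph (parallel edges allowed, loops not) in which every pair of adjacent vertices is connected by at least two directed edges, not necessarily in the same direction. Let w : V(D) → ℕ assign a positive integer weight to each vertex, set W = ∑_{v} w(v), and let K be the maximum of ∑_{v ∈ A} w(v) over all independent sets A of D (sets with no edge between any two of their vertices, in either direction). Then ∑_{xy ∈ E(D)} w(x) ≥ W²/K − W, where the sum is over all directed edges xy and w(x) is the weight of the tail. -/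
open Finset

section TuranAux

variable {V E : Type*} [Fintype V] [Fintype E]

/-- Independence predicate for the directed multigraph given by `src`, `tgt`. -/
private def Indep (src tgt : E → V) (A : Finset V) : Prop :=
  ∀ u ∈ A, ∀ v ∈ A, ¬ ∃ e, (src e = u ∧ tgt e = v) ∨ (src e = v ∧ tgt e = u)

private lemma min_sum_le {α : Type*} [DecidableEq α] (s : Finset α) (f : α → ℕ) (x : ℕ) :
    min x (∑ a ∈ s, f a) ≤ ∑ a ∈ s, min x (f a) := by
  induction s using Finset.induction_on with
  | empty => simp
  | @insert a s ha ih =>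
      rw [Finset.sum_insert ha, Finset.sum_insert ha]
      omega

private lemma turan_aux [DecidableEq V] (src tgt : E → V) (hloop : ∀ e, src e ≠ tgt e)
    (htwo : ∀ u v : V,
      (∃ e, (src e = u ∧ tgt e = v) ∨ (src e = v ∧ tgt e = u)) →
      ∃ e₁ e₂ : E, e₁ ≠ e₂ ∧
        ((src e₁ = u ∧ tgt e₁ = v) ∨ (src e₁ = v ∧ tgt e₁ = u)) ∧
        ((src e₂ = u ∧ tgt e₂ = v) ∨ (src e₂ = v ∧ tgt e₂ = u)))
    (w : V → ℕ) (hw : ∀ v, 0 < w v) :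
    ∀ n (B : Finset V), B.card ≤ n → ∃ A : Finset V, A ⊆ B ∧ Indep src tgt A ∧
      (∀ A' : Finset V, A' ⊆ B → Indep src tgt A' → ∑ v ∈ A', w v ≤ ∑ v ∈ A, w v) ∧
      (∑ v ∈ B, w v) ^ 2 ≤ (∑ v ∈ A, w v) *
        ((∑ e ∈ univ.filter fun e => src e ∈ B ∧ tgt e ∈ B, w (src e)) + ∑ v ∈ B, w v) := by
  classical
  intro n
  induction n with
  | zero =>
      intro B hB
      have hBe : B = ∅ := card_eq_zero.mp (Nat.le_zero.mp hB)
      subst hBe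
      refine ⟨∅, Subset.rfl, ?_, ?_, by simp⟩
      · intro u hu; simp at hu
      · intro A' hA' _; simp [Finset.subset_empty.mp hA']
  | succ n ih =>
      intro B hB
      have hne : (B.powerset.filter (Indep src tgt)).Nonempty := by
        refine ⟨∅, ?_⟩
        rw [mem_filter, mem_powerset]
        exact ⟨Finset.empty_subset _, by intro u hu; simp at hu⟩
      obtain ⟨A, hA, hAmax⟩ := Finset.exists_max_image _ (fun A => ∑ v ∈ A, w v) hne
      rw [mem_filter, mem_powerset] at hA
      obtain ⟨hAB, hAind⟩ := hA
      have hAmax' : ∀ A' : Finset V, A' ⊆ B → Indep src tgt A' →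
          ∑ v ∈ A', w v ≤ ∑ v ∈ A, w v := by
        intro A' h1 h2
        exact hAmax A' (by rw [mem_filter, mem_powerset]; exact ⟨h1, h2⟩)
      rcases B.eq_empty_or_nonempty with rfl | hBne
      · have hA0 : A = ∅ := Finset.subset_empty.mp hAB
        exact ⟨A, hAB, hAind, hAmax', by simp [hA0]⟩
      obtain ⟨v₀, hv₀⟩ := hBne
      have hsingle : Indep src tgt {v₀} := by
        intro u hu v hv h
        simp only [Finset.mem_singleton] at hu hv
        subst hu; subst hv
        obtain ⟨e, he⟩ := h
        rcases he with ⟨h1, h2⟩ | ⟨h1, h2⟩ <;> exact hloop e (h1.trans h2.symm)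
      have hApos : 0 < ∑ v ∈ A, w v := by
        have := hAmax' {v₀} (by simpa using hv₀) hsingle
        simp only [Finset.sum_singleton] at this
        exact lt_of_lt_of_le (hw v₀) this
      have hAne : A.Nonempty := by
        rcases A.eq_empty_or_nonempty with rfl | h
        · simp at hApos
        · exact h
      set B' := B \ A with hB'def
      have hB'card : B'.card ≤ n := by
        have : B'.card < B.card := card_lt_card (Finset.sdiff_ssubset hAB hAne)
        omega
      obtain ⟨A', hA'B', hA'ind, -, hIH⟩ := ih B' hB'card
      set K := ∑ v ∈ A, w v with hKdef
      set W' := ∑ v ∈ B', w v with hW'def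
      set K' := ∑ v ∈ A', w v with hK'def
      set S := ∑ e ∈ univ.filter fun e => src e ∈ B ∧ tgt e ∈ B, w (src e) with hSdef
      set S' := ∑ e ∈ univ.filter fun e => src e ∈ B' ∧ tgt e ∈ B', w (src e) with hS'def
      -- swap lemma: every vertex outside A has A-neighbourhood of at least its weight
      have hswap : ∀ u ∈ B', w u ≤ ∑ a ∈ A.filter
          (fun a => ∃ e, (src e = u ∧ tgt e = a) ∨ (src e = a ∧ tgt e = u)), w a := by
        intro u hu
        have huB : u ∈ B := (Finset.mem_sdiff.mp hu).1
        have huA : u ∉ A := (Finset.mem_sdiff.mp hu).2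
        set Au := A.filter
          (fun a => ∃ e, (src e = u ∧ tgt e = a) ∨ (src e = a ∧ tgt e = u)) with hAudef
        have hsub : insert u (A \ Au) ⊆ B := by
          intro x hx
          rcases Finset.mem_insert.mp hx with rfl | hx
          · exact huB
          · exact hAB (Finset.mem_sdiff.mp hx).1
        have hind : Indep src tgt (insert u (A \ Au)) := by
          intro x hx y hy h
          rcases Finset.mem_insert.mp hx with rfl | hx <;>
            rcases Finset.mem_insert.mp hy with rfl | hy
          · obtain ⟨e, he⟩ := h
            rcases he with ⟨h1, h2⟩ | ⟨h1, h2⟩ <;> exact hloop e (h1.trans h2.symm)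
          · exact (Finset.mem_sdiff.mp hy).2
              (Finset.mem_filter.mpr ⟨(Finset.mem_sdiff.mp hy).1, h⟩)
          · refine (Finset.mem_sdiff.mp hx).2
              (Finset.mem_filter.mpr ⟨(Finset.mem_sdiff.mp hx).1, ?_⟩)
            obtain ⟨e, he⟩ := h
            exact ⟨e, he.symm⟩
          · exact hAind x (Finset.mem_sdiff.mp hx).1 y (Finset.mem_sdiff.mp hy).1 h
        have hle := hAmax' _ hsub hind
        have hu' : u ∉ A \ Au := fun hx => huA (Finset.mem_sdiff.mp hx).1
        rw [Finset.sum_insert hu'] at hle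
        have hsd : ∑ a ∈ A \ Au, w a + ∑ a ∈ Au, w a = ∑ a ∈ A, w a :=
          Finset.sum_sdiff (Finset.filter_subset _ _)
        omega
      -- cross-edge weight at each outside vertex
      have hcross : ∀ u ∈ B', 2 * w u ≤ ∑ e ∈ univ.filter
          (fun e => (src e = u ∧ tgt e ∈ A) ∨ (tgt e = u ∧ src e ∈ A)), w (src e) := by
        intro u hu
        have huA : u ∉ A := (Finset.mem_sdiff.mp hu).2
        set Au := A.filter
          (fun a => ∃ e, (src e = u ∧ tgt e = a) ∨ (src e = a ∧ tgt e = u)) with hAudef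
        set Pr := fun a => univ.filter
          (fun e => (src e = u ∧ tgt e = a) ∨ (src e = a ∧ tgt e = u)) with hPrdef
        have hpair : ∀ a ∈ Au, 2 * min (w u) (w a) ≤ ∑ e ∈ Pr a, w (src e) := by
          intro a ha
          obtain ⟨e₁, e₂, hne12, h1, h2⟩ := htwo u a (Finset.mem_filter.mp ha).2
          have hm1 : e₁ ∈ Pr a := by
            rw [hPrdef]; simp only [Finset.mem_filter, Finset.mem_univ, true_and]; exact h1
          have hm2 : e₂ ∈ Pr a := by
            rw [hPrdef]; simp only [Finset.mem_filter, Finset.mem_univ, true_and]; exact h2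
          have hsub2 : ({e₁, e₂} : Finset E) ⊆ Pr a := by
            intro e he
            rcases Finset.mem_insert.mp he with rfl | he
            · exact hm1
            · rw [Finset.mem_singleton.mp he]; exact hm2
          have b1 : min (w u) (w a) ≤ w (src e₁) := by
            rcases h1 with ⟨h, -⟩ | ⟨h, -⟩ <;> rw [h] <;> omega
          have b2 : min (w u) (w a) ≤ w (src e₂) := by
            rcases h2 with ⟨h, -⟩ | ⟨h, -⟩ <;> rw [h] <;> omega
          calc 2 * min (w u) (w a) = min (w u) (w a) + min (w u) (w a) := by ring
            _ ≤ w (src e₁) + w (src e₂) := Nat.add_le_add b1 b2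
            _ = ∑ e ∈ ({e₁, e₂} : Finset E), w (src e) := (Finset.sum_pair (f := fun e => w (src e)) hne12).symm
            _ ≤ ∑ e ∈ Pr a, w (src e) := Finset.sum_le_sum_of_subset hsub2
        have hdisj : (Au : Set V).PairwiseDisjoint Pr := by
          intro a ha b hb hab
          simp only [Finset.mem_coe, hAudef, Finset.mem_filter] at ha hb
          simp only [Function.onFun]
          rw [Finset.disjoint_left]
          intro e he1 he2
          rw [hPrdef] at he1 he2
          simp only [Finset.mem_filter, Finset.mem_univ, true_and] at he1 he2
          rcases he1 with ⟨p1, p2⟩ | ⟨p1, p2⟩ <;> rcases he2 with ⟨q1, q2⟩ | ⟨q1, q2⟩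
          · exact hab (p2.symm.trans q2)
          · exact huA ((q1.symm.trans p1) ▸ hb.1)
          · exact huA ((p1.symm.trans q1) ▸ ha.1)
          · exact hab (p1.symm.trans q1)
        have hU : (Au.biUnion Pr) ⊆ univ.filter
            (fun e => (src e = u ∧ tgt e ∈ A) ∨ (tgt e = u ∧ src e ∈ A)) := by
          intro e he
          obtain ⟨a, ha, hea⟩ := Finset.mem_biUnion.mp he
          have haA : a ∈ A := (Finset.mem_filter.mp ha).1
          rw [hPrdef] at hea
          simp only [Finset.mem_filter, Finset.mem_univ, true_and] at hea ⊢
          rcases hea with ⟨p1, p2⟩ | ⟨p1, p2⟩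
          · exact Or.inl ⟨p1, p2 ▸ haA⟩
          · exact Or.inr ⟨p2, p1 ▸ haA⟩
        have hmin : w u ≤ ∑ a ∈ Au, min (w u) (w a) := by
          have h1 := min_sum_le Au w (w u)
          have h2 := hswap u hu
          rw [← hAudef] at h2
          omega
        calc 2 * w u ≤ 2 * ∑ a ∈ Au, min (w u) (w a) := by omega
          _ = ∑ a ∈ Au, 2 * min (w u) (w a) := Finset.mul_sum _ _ _
          _ ≤ ∑ a ∈ Au, ∑ e ∈ Pr a, w (src e) := Finset.sum_le_sum hpair
          _ = ∑ e ∈ Au.biUnion Pr, w (src e) := (Finset.sum_biUnion hdisj).symm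
          _ ≤ _ := Finset.sum_le_sum_of_subset hU
      -- edge accounting
      have hSS : S' + 2 * W' ≤ S := by
        set Cr := fun u => univ.filter
          (fun e => (src e = u ∧ tgt e ∈ A) ∨ (tgt e = u ∧ src e ∈ A)) with hCrdef
        have hd1 : (B' : Set V).PairwiseDisjoint Cr := by
          intro a ha b hb hab
          simp only [Finset.mem_coe, hB'def, Finset.mem_sdiff] at ha hb
          simp only [Function.onFun]
          rw [Finset.disjoint_left]
          intro e he1 he2
          rw [hCrdef] at he1 he2
          simp only [Finset.mem_filter, Finset.mem_univ, true_and] at he1 he2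
          rcases he1 with ⟨p1, p2⟩ | ⟨p1, p2⟩ <;> rcases he2 with ⟨q1, q2⟩ | ⟨q1, q2⟩
          · exact hab (p1.symm.trans q1)
          · exact ha.2 (p1 ▸ q2)
          · exact ha.2 (p1 ▸ q2)
          · exact hab (p1.symm.trans q1)
        have hd2 : Disjoint (univ.filter fun e => src e ∈ B' ∧ tgt e ∈ B')
            (B'.biUnion Cr) := by
          rw [Finset.disjoint_left]
          intro e he1 he2
          simp only [Finset.mem_filter, Finset.mem_univ, true_and] at he1
          obtain ⟨u, hu, heu⟩ := Finset.mem_biUnion.mp he2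
          rw [hCrdef] at heu
          simp only [Finset.mem_filter, Finset.mem_univ, true_and] at heu
          rcases heu with ⟨-, p2⟩ | ⟨-, p2⟩
          · exact (Finset.mem_sdiff.mp he1.2).2 p2
          · exact (Finset.mem_sdiff.mp he1.1).2 p2
        have hsub : (univ.filter fun e => src e ∈ B' ∧ tgt e ∈ B') ∪ B'.biUnion Cr ⊆
            univ.filter fun e => src e ∈ B ∧ tgt e ∈ B := by
          intro e he
          simp only [Finset.mem_filter, Finset.mem_univ, true_and]
          rcases Finset.mem_union.mp he with he | he
          · simp only [Finset.mem_filter, Finset.mem_univ, true_and] at he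
            exact ⟨(Finset.mem_sdiff.mp he.1).1, (Finset.mem_sdiff.mp he.2).1⟩
          · obtain ⟨u, hu, heu⟩ := Finset.mem_biUnion.mp he
            have huB : u ∈ B := (Finset.mem_sdiff.mp hu).1
            rw [hCrdef] at heu
            simp only [Finset.mem_filter, Finset.mem_univ, true_and] at heu
            rcases heu with ⟨p1, p2⟩ | ⟨p1, p2⟩
            · exact ⟨p1 ▸ huB, hAB p2⟩
            · exact ⟨hAB p2, p1 ▸ huB⟩
        have hone : S' + ∑ u ∈ B', ∑ e ∈ Cr u, w (src e) ≤ S := by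
          rw [hSdef, hS'def, ← Finset.sum_biUnion hd1, ← Finset.sum_union hd2]
          exact Finset.sum_le_sum_of_subset hsub
        have htwo' : 2 * W' ≤ ∑ u ∈ B', ∑ e ∈ Cr u, w (src e) := by
          rw [hW'def, Finset.mul_sum]
          refine Finset.sum_le_sum ?_
          intro u hu
          have := hcross u hu
          rw [hCrdef]
          exact this
        omega
      refine ⟨A, hAB, hAind, hAmax', ?_⟩
      have hsum : ∑ v ∈ B, w v = W' + K := (Finset.sum_sdiff hAB).symm
      have hK'K : K' ≤ K := hAmax' A' (hA'B'.trans Finset.sdiff_subset) hA'ind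
      rw [hsum]
      have e2 : K' * (S' + W') ≤ K * (S' + W') := Nat.mul_le_mul_right _ hK'K
      calc (W' + K) ^ 2 = W' ^ 2 + (2 * W' * K + K ^ 2) := by ring
        _ ≤ K' * (S' + W') + (2 * W' * K + K ^ 2) := Nat.add_le_add_right hIH _
        _ ≤ K * (S' + W') + (2 * W' * K + K ^ 2) := Nat.add_le_add_right e2 _
        _ = K * (S' + 2 * W' + (W' + K)) := by ring
        _ ≤ K * (S + (W' + K)) := Nat.mul_le_mul_left K (by omega)

end TuranAux

/-- **Directed weighted Turán theorem.**  Let `D` be a finite loopless directed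
multigraph, given by a finite edge type `E` with tail map `src` and head map
`tgt`, in which every pair of adjacent vertices is joined by at least two
directed edges (not necessarily in the same direction).  Let `w` be positive
integer vertex weights, `W` the total weight, and `K` the maximum weight of an
independent set.  Then `∑_{xy ∈ E(D)} w x ≥ W²/K − W`, the sum being over all
directed edges, `w x` being the weight of the tail. -/
theorem directed_weighted_turan {V E : Type*} [Fintype V] [Fintype E]
    (src tgt : E → V) (hloop : ∀ e, src e ≠ tgt e)
    (htwo : ∀ u v : V,
      (∃ e, (src e = u ∧ tgt e = v) ∨ (src e = v ∧ tgt e = u)) →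
      ∃ e₁ e₂ : E, e₁ ≠ e₂ ∧
        ((src e₁ = u ∧ tgt e₁ = v) ∨ (src e₁ = v ∧ tgt e₁ = u)) ∧
        ((src e₂ = u ∧ tgt e₂ = v) ∨ (src e₂ = v ∧ tgt e₂ = u)))
    (w : V → ℕ) (hw : ∀ v, 0 < w v)
    (W K : ℕ) (hW : W = ∑ v, w v)
    (hK : IsGreatest {s | ∃ A : Finset V,
      (∀ u ∈ A, ∀ v ∈ A,
        ¬ ∃ e, (src e = u ∧ tgt e = v) ∨ (src e = v ∧ tgt e = u)) ∧
      s = ∑ v ∈ A, w v} K) :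
    (W : ℝ) ^ 2 / K - W ≤ ∑ e : E, (w (src e) : ℝ) := by
  classical
  obtain ⟨A, -, hAind, hAmax, hineq⟩ :=
    turan_aux src tgt hloop htwo w hw (Finset.univ.card) Finset.univ le_rfl
  obtain ⟨⟨A₀, hA₀ind, hKeq⟩, hub⟩ := hK
  have h1 : K ≤ ∑ v ∈ A, w v := by
    rw [hKeq]
    exact hAmax A₀ (Finset.subset_univ _) hA₀ind
  have h2 : ∑ v ∈ A, w v ≤ K := hub ⟨A, hAind, rfl⟩
  have hKA : ∑ v ∈ A, w v = K := le_antisymm h2 h1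
  have hfil : (Finset.univ.filter fun e : E =>
      src e ∈ (Finset.univ : Finset V) ∧ tgt e ∈ (Finset.univ : Finset V)) = Finset.univ := by
    simp
  rw [hKA, hfil, ← hW] at hineq
  -- hineq : W ^ 2 ≤ K * ((∑ e, w (src e)) + W)
  rcases Nat.eq_zero_or_pos K with hK0 | hK0
  · rw [hK0] at hineq
    simp only [Nat.zero_mul, Nat.le_zero, pow_eq_zero_iff, two_ne_zero] at hineq
    have hW0 : W = 0 := by nlinarith
    have hnn : (0 : ℝ) ≤ ∑ e : E, (w (src e) : ℝ) := by positivity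
    rw [hW0, hK0]
    simpa using hnn
  · have hKR : (0 : ℝ) < K := by exact_mod_cast hK0
    rw [sub_le_iff_le_add, div_le_iff₀ hKR]
    have : (W : ℝ) ^ 2 ≤ (K : ℝ) * ((∑ e : E, (w (src e) : ℝ)) + W) := by
      exact_mod_cast hineq
    nlinarith [this]
end
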